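/- arXiv:2006.12916 — 3 statements merged into one kernel-verified Lean document; each statement's English description precedes it below -/
import Mathlib

section
/- Let (X,E) be an expansive, (m,k)-departing rooted graph with Gromov metric θ_a on its hyperbolic boundary ∂X. Then there exists γ > 0 such that for all x, y ∈ X_n (n ≥ 1) with d_h(x,y) > k, the boundary cells satisfy dist_{θ_a}(J_∂(x), J_∂(y)) > γ e^{−an}. -/
open SimpleGraph Metric
open scoped ENNReal ENat

noncomputable section

/-- A locally finite connected graph with a distinguished root. -/
structure RootedGraph (X : Type*) where
  G : SimpleGraph X
  root : X
  conn : G.Connected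
  locFin : ∀ x : X, {y | G.Adj x y}.Finite

namespace RootedGraph

variable {X : Type*} (R : RootedGraph X)

/-- The level `|x| = d(ϑ,x)` of a vertex. -/
def level (x : X) : ℕ := R.G.dist R.root x

/-- The horizontal subgraph: edges joining vertices of equal level. -/
def Gh : SimpleGraph X where
  Adj x y := R.G.Adj x y ∧ R.level x = R.level y
  symm := ⟨fun _ _ h => ⟨h.1.symm, h.2.symm⟩⟩
  loopless := ⟨fun x h => R.G.loopless.irrefl x h.1⟩

/-- The horizontal distance `d_h`, valued in `ℕ∞`. -/
def dh (x y : X) : ℕ∞ := R.Gh.edist x y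

/-- The `m`-th descendant set `J_m(x)`: vertices `y` with `|y| = |x| + m` lying
below `x` (i.e. `x` lies on a geodesic from the root to `y`). -/
def J (m : ℕ) (x : X) : Set X :=
  {y | R.level y = R.level x + m ∧ R.G.dist x y = m}

/-- `(m,k)`-departing property. -/
def Departing (m k : ℕ) : Prop :=
  ∀ x y : X, R.level x = R.level y → (k : ℕ∞) < R.dh x y →
    ∀ u ∈ R.J m x, ∀ v ∈ R.J m y, ((2 * k : ℕ) : ℕ∞) < R.dh u v

/-- Expansive property. -/
def Expansive : Prop :=
  ∀ x y : X, R.level x = R.level y → (1 : ℕ∞) < R.dh x y →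
    ∀ u ∈ R.J 1 x, ∀ v ∈ R.J 1 y, (1 : ℕ∞) < R.dh u v

/-- The Gromov product `(x|y)` with base point the root. -/
def gp (x y : X) : ℝ := ((R.level x : ℝ) + R.level y - R.G.dist x y) / 2

/-- Gromov hyperbolicity with respect to the root base point. -/
def Hyperbolic : Prop :=
  ∃ δ : ℝ, 0 ≤ δ ∧ ∀ x y z : X, min (R.gp x z) (R.gp z y) - δ ≤ R.gp x y

/-- A geodesic ray from the root. -/
def IsRay (f : ℕ → X) : Prop := f 0 = R.root ∧ ∀ i, f (i + 1) ∈ R.J 1 (f i)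

/-- The Gromov product of two rays: the (increasing) limit of `(x_i|y_i)`. -/
def gpRay (f g : ℕ → X) : ℝ≥0∞ := ⨆ i, ENNReal.ofReal (R.gp (f i) (g i))

/-- `|x ∨ y|_k = sup{ i : d_h(x_i,y_i) ≤ k }`. -/
def joinK (k : ℕ) (f g : ℕ → X) : ℝ≥0∞ :=
  ⨆ (i : ℕ) (_ : R.dh (f i) (g i) ≤ (k : ℕ∞)), (i : ℝ≥0∞)

/-- The Gromov product on a model `B` of the hyperbolic boundary, defined as the
supremum over pairs of converging rays. -/
def gpB {B : Type*} (lim : (ℕ → X) → B) (ξ η : B) : ℝ≥0∞ :=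
  ⨆ (f : ℕ → X) (g : ℕ → X)
    (_ : R.IsRay f ∧ R.IsRay g ∧ lim f = ξ ∧ lim g = η), R.gpRay f g

/-- `B` together with `lim` is a model of the hyperbolic boundary: every point is the
limit of a ray, and two rays have the same limit iff they are equivalent. -/
def BoundaryOf {B : Type*} (lim : (ℕ → X) → B) : Prop :=
  (∀ ξ : B, ∃ f, R.IsRay f ∧ lim f = ξ) ∧
    ∀ f g, R.IsRay f → R.IsRay g → (lim f = lim g ↔ R.gpRay f g = ⊤)

/-- The metric on the boundary model is a Gromov metric:
`θ_a(ξ,η) ≍ e^{-a(ξ|η)}`. -/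
def GromovLike {B : Type*} [MetricSpace B] (lim : (ℕ → X) → B) (a c₁ c₂ : ℝ) : Prop :=
  ∀ ξ η : B, ξ ≠ η →
    c₁ * Real.exp (-a * (R.gpB lim ξ η).toReal) ≤ dist ξ η ∧
      dist ξ η ≤ c₂ * Real.exp (-a * (R.gpB lim ξ η).toReal)

/-- The boundary cell `J_∂(x)`: boundary points reachable by rays through `x`. -/
def cell {B : Type*} (lim : (ℕ → X) → B) (x : X) : Set B :=
  {ξ | ∃ f, R.IsRay f ∧ f (R.level x) = x ∧ lim f = ξ}

/-- The `k`-shadow `J^k_∂(x)`. -/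
def shadow {B : Type*} (lim : (ℕ → X) → B) (k : ℕ) (x : X) : Set B :=
  ⋃ y ∈ {y | R.level y = R.level x ∧ R.dh x y ≤ (k : ℕ∞)}, R.cell lim y

/-- Bounded degree. -/
def BddDeg : Prop := ∃ D : ℕ, ∀ x : X, Set.ncard {y | R.G.Adj x y} ≤ D

/-- A vertical rooted graph: all edges join adjacent levels. -/
def Vertical : Prop :=
  ∀ x y : X, R.G.Adj x y → R.level x = R.level y + 1 ∨ R.level y = R.level x + 1

/-- An index map on `(X,E_v)` over `M`. -/
def IsIndexMap {M : Type*} [MetricSpace M] (Φ : X → Set M) : Prop :=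
  (∀ x, IsCompact (Φ x)) ∧ (∀ x, (Φ x).Nonempty) ∧
    (∀ x y, y ∈ R.J 1 x → Φ y ⊆ Φ x) ∧
    (∀ f, R.IsRay f → ∃ p, (⋂ i, Φ (f i)) = {p})

/-- The attractor of an index map. -/
def attractor {M : Type*} [MetricSpace M] (Φ : X → Set M) : Set M :=
  ⋂ n : ℕ, ⋃ x ∈ {x | R.level x = n}, Φ x

/-- Exponential type-(b): `diam Φ(x) ≤ δ₀ e^{-b|x|}`. -/
def ExpType {M : Type*} [MetricSpace M] (Φ : X → Set M) (b δ₀ : ℝ) : Prop :=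
  ∀ x, EMetric.diam (Φ x) ≤ ENNReal.ofReal (δ₀ * Real.exp (-b * R.level x))

/-- Condition `(S_b)`. -/
def CondS {M : Type*} [MetricSpace M] (Φ : X → Set M) (b : ℝ) : Prop :=
  ∀ c : ℝ, 0 < c → ∃ ℓ : ℕ, ∀ (n : ℕ) (F : Set M),
    EMetric.diam F < ENNReal.ofReal (c * Real.exp (-b * n)) →
      Set.ncard {x | R.level x = n ∧ ((Φ x ∩ R.attractor Φ) ∩ F).Nonempty} ≤ ℓ

end RootedGraph

/-- Distance between two subsets of a metric space. -/
def setDist {M : Type*} [MetricSpace M] (s t : Set M) : ℝ :=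
  sInf ((fun p : M × M => dist p.1 p.2) '' s ×ˢ t)

/-- The AI_b-graph on `X` associated to an index map `Φ`:
same root, same vertical edges, and horizontal edges between distinct equal-level
vertices whose index sets are `γe^{-bn}`-close. -/
def RootedGraph.IsAIb {X M : Type*} [MetricSpace M] (R R' : RootedGraph X)
    (Φ : X → Set M) (b γ : ℝ) : Prop :=
  R'.root = R.root ∧ ∀ x y : X, R'.G.Adj x y ↔
    (R.G.Adj x y ∨ (R.level x = R.level y ∧ x ≠ y ∧
      setDist (Φ x) (Φ y) ≤ γ * Real.exp (-b * R.level x)))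

/-- The AI_∞-graph on `X` associated to an index map `Φ`. -/
def RootedGraph.IsAIinf {X M : Type*} [MetricSpace M] (R R' : RootedGraph X)
    (Φ : X → Set M) : Prop :=
  R'.root = R.root ∧ ∀ x y : X, R'.G.Adj x y ↔
    (R.G.Adj x y ∨ (R.level x = R.level y ∧ x ≠ y ∧ (Φ x ∩ Φ y).Nonempty))

end


/-! ### Auxiliary development for `cells_far_apart` -/

namespace CFA

open RootedGraph

variable {X : Type*} (R : RootedGraph X)

lemma level_root : R.level R.root = 0 := by simp [RootedGraph.level]

lemma level_le_add_dist (u v : X) : R.level v ≤ R.level u + R.G.dist u v :=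
  R.conn.dist_triangle

lemma adj_dist_eq_one {u v : X} (h : R.G.Adj u v) : R.G.dist u v = 1 :=
  (SimpleGraph.dist_eq_one_iff_adj).2 h

lemma adj_level_le {u v : X} (h : R.G.Adj u v) : R.level v ≤ R.level u + 1 := by
  have := level_le_add_dist R u v
  rwa [adj_dist_eq_one R h] at this

lemma mem_J1_iff {x y : X} : y ∈ R.J 1 x ↔ R.level y = R.level x + 1 ∧ R.G.Adj x y := by
  constructor
  · rintro ⟨h1, h2⟩
    exact ⟨h1, (SimpleGraph.dist_eq_one_iff_adj).1 h2⟩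
  · rintro ⟨h1, h2⟩
    exact ⟨h1, adj_dist_eq_one R h2⟩

/-- vertices of positive level have a parent -/
lemma exists_parent (v : X) (hv : 0 < R.level v) : ∃ w, v ∈ R.J 1 w := by
  obtain ⟨w, hw⟩ := R.conn.exists_walk_length_eq_dist R.root v
  set n := R.level v with hn
  have hlen : w.length = n := hw
  -- the penultimate vertex
  refine ⟨w.getVert (n - 1), ?_⟩
  have hlt : n - 1 < w.length := by omega
  have hadj : R.G.Adj (w.getVert (n - 1)) (w.getVert (n - 1 + 1)) :=
    w.adj_getVert_succ hlt
  have hnn : n - 1 + 1 = n := by omega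
  have hgv : w.getVert (n - 1 + 1) = v := by
    rw [hnn, ← hlen, SimpleGraph.Walk.getVert_length]
  rw [hgv] at hadj
  -- level of penultimate vertex
  have hup : ∀ t, R.G.dist R.root (w.getVert t) ≤ t := by
    intro t
    induction t with
    | zero => simp [SimpleGraph.Walk.getVert_zero]
    | succ t ih =>
      by_cases ht : t < w.length
      · have hadj' := w.adj_getVert_succ ht
        have := R.conn.dist_triangle (u := R.root) (v := w.getVert t) (w := w.getVert (t+1))
        have h1 := adj_dist_eq_one R hadj'
        omega
      · have h1 : w.getVert (t+1) = v := w.getVert_of_length_le (by omega)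
        have h2 : R.G.dist R.root (w.getVert (t+1)) = n := by rw [h1]; rfl
        omega
  have hle : R.level (w.getVert (n-1)) ≤ n - 1 := hup (n-1)
  have hge : n ≤ R.level (w.getVert (n-1)) + 1 := by
    have := adj_level_le R hadj
    omega
  exact (mem_J1_iff R).2 ⟨by omega, hadj⟩

/-- horizontal adjacency facts -/
lemma Gh_adj_level {u v : X} (h : R.Gh.Adj u v) : R.level u = R.level v := h.2

lemma dh_self (v : X) : R.dh v v = 0 := SimpleGraph.edist_self

lemma dh_comm (u v : X) : R.dh u v = R.dh v u := SimpleGraph.edist_comm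

lemma dh_triangle (u v w : X) : R.dh u w ≤ R.dh u v + R.dh v w :=
  SimpleGraph.edist_triangle

lemma dh_adj_le {u v : X} (h : R.Gh.Adj u v) : R.dh u v ≤ 1 :=
  le_of_eq (SimpleGraph.edist_eq_one_iff_adj.2 h)

/-- equal levels of horizontally-reachable vertices -/
lemma dh_ne_top_level {u v : X} (h : R.dh u v ≠ ⊤) : R.level u = R.level v := by
  obtain ⟨w⟩ := SimpleGraph.reachable_of_edist_ne_top h
  clear h
  induction w with
  | nil => rfl
  | cons hadj _ ih => exact (Gh_adj_level R hadj).trans ih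

/-- chains going up one level at a time -/
def ChainUp (c : ℕ → X) (L : ℕ) : Prop := ∀ t < L, c (t + 1) ∈ R.J 1 (c t)

lemma ChainUp.level {c : ℕ → X} {L : ℕ} (h : ChainUp R c L) :
    ∀ t ≤ L, R.level (c t) = R.level (c 0) + t := by
  intro t ht
  induction t with
  | zero => rfl
  | succ t ih =>
    have h1 := (h t (by omega)).1
    rw [h1, ih (by omega)]
    ring

lemma ChainUp.dist_le {c : ℕ → X} {L : ℕ} (h : ChainUp R c L) :
    ∀ t ≤ L, R.G.dist (c 0) (c t) ≤ t := by
  intro t ht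
  induction t with
  | zero => simp
  | succ t ih =>
    have h1 := (h t (by omega)).2
    have := R.conn.dist_triangle (u := c 0) (v := c t) (w := c (t+1))
    have := ih (by omega)
    omega

lemma ChainUp.mem_J {c : ℕ → X} {L : ℕ} (h : ChainUp R c L) : c L ∈ R.J L (c 0) := by
  refine ⟨h.level R L le_rfl, ?_⟩
  have h1 := h.dist_le R L le_rfl
  have h2 := level_le_add_dist R (c 0) (c L)
  have h3 := h.level R L le_rfl
  omega

/-- existence of a chain from a given lower level up to `v` -/
lemma exists_chainUp (j : ℕ) : ∀ (L : ℕ) (v : X), R.level v = j + L →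
    ∃ c : ℕ → X, ChainUp R c L ∧ c L = v ∧ R.level (c 0) = j := by
  intro L
  induction L with
  | zero =>
    intro v hv
    exact ⟨fun _ => v, fun t ht => absurd ht (by omega), rfl, by simpa using hv⟩
  | succ L ih =>
    intro v hv
    obtain ⟨w, hw⟩ := exists_parent R v (by omega)
    have hlw : R.level w = j + L := by
      have := ((mem_J1_iff R).1 hw).1; omega
    obtain ⟨c, hc, hcL, hc0⟩ := ih w hlw
    refine ⟨fun t => if t = L + 1 then v else c t, ?_, by simp, by simpa using hc0⟩
    intro t ht
    rcases Nat.lt_succ_iff_lt_or_eq.1 ht with h | h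
    · simp only [if_neg (by omega : ¬ t + 1 = L + 1), if_neg (by omega : ¬ t = L + 1)]
      exact hc t h
    · show (if t + 1 = L + 1 then v else c (t+1)) ∈ R.J 1 (if t = L + 1 then v else c t)
      rw [if_pos (by omega : t + 1 = L + 1), if_neg (by omega : ¬ t = L + 1), h, hcL]
      exact hw


/-- summing `dh ≤ 1` steps along a sequence -/
lemma dh_seq_le (q : ℕ → X) {L : ℕ} (h : ∀ t < L, R.dh (q t) (q (t + 1)) ≤ 1) :
    R.dh (q 0) (q L) ≤ L := by
  induction L with
  | zero => simp [dh_self]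
  | succ L ih =>
    calc R.dh (q 0) (q (L+1)) ≤ R.dh (q 0) (q L) + R.dh (q L) (q (L+1)) := dh_triangle R _ _ _
    _ ≤ (L : ℕ∞) + 1 := add_le_add (ih fun t ht => h t (by omega)) (h L (by omega))
    _ = ((L + 1 : ℕ) : ℕ∞) := by push_cast; ring

/-- extract a function along a horizontal walk realizing `dh` -/
lemma dh_def (u v : X) : R.dh u v = R.Gh.edist u v := rfl

lemma exists_dh_seq {u v : X} {c : ℕ} (h : R.dh u v ≤ (c : ℕ∞)) :
    ∃ (q : ℕ → X) (L : ℕ), L ≤ c ∧ q 0 = u ∧ (∀ t, L ≤ t → q t = v) ∧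
      (∀ t < L, R.Gh.Adj (q t) (q (t + 1))) ∧
      (∀ t s, t ≤ s → R.dh (q t) (q s) ≤ (s - t : ℕ)) := by
  have hne : R.dh u v ≠ ⊤ := fun ht => by rw [ht] at h; exact absurd h (by simp)
  rw [dh_def] at hne
  obtain ⟨w, hw⟩ := (SimpleGraph.reachable_of_edist_ne_top hne).exists_walk_length_eq_edist
  refine ⟨fun t => w.getVert t, w.length, ?_, w.getVert_zero, ?_, ?_, ?_⟩
  · have : (w.length : ℕ∞) ≤ c := by rw [hw, ← dh_def]; exact h
    exact_mod_cast this
  · intro t ht; exact w.getVert_of_length_le ht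
  · intro t ht; exact w.adj_getVert_succ ht
  · intro t s hts
    have key : ∀ j r, R.dh (w.getVert j) (w.getVert (j + r)) ≤ (r : ℕ) := by
      intro j r
      induction r with
      | zero => simp [dh_self]
      | succ r ih =>
        calc R.dh (w.getVert j) (w.getVert (j + (r+1)))
            ≤ R.dh (w.getVert j) (w.getVert (j + r)) + R.dh (w.getVert (j+r)) (w.getVert (j+r+1)) := by
              have := dh_triangle R (w.getVert j) (w.getVert (j+r)) (w.getVert (j+r+1))
              simpa [add_assoc] using this
          _ ≤ (r : ℕ∞) + 1 := by
              refine add_le_add ih ?_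
              by_cases hr : j + r < w.length
              · exact dh_adj_le R (w.adj_getVert_succ hr)
              · have h1 : w.getVert (j + r) = v := w.getVert_of_length_le (by omega)
                have h2 : w.getVert (j + r + 1) = v := w.getVert_of_length_le (by omega)
                rw [h1, h2, dh_self]; exact zero_le
          _ = ((r + 1 : ℕ) : ℕ∞) := by push_cast; ring
    have := key t (s - t)
    rwa [Nat.add_sub_cancel' hts] at this

/-- parents of horizontally adjacent (or equal) vertices are horizontally adjacent or equal -/
lemma parents_dh_le_one (hexp : R.Expansive) {x y px py : X}
    (hlev : R.level x = R.level y) (hx : x ∈ R.J 1 px) (hy : y ∈ R.J 1 py)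
    (hxy : R.dh x y ≤ 1) : R.dh px py ≤ 1 := by
  by_contra hcon
  push_neg at hcon
  have hplev : R.level px = R.level py := by
    have h1 := ((mem_J1_iff R).1 hx).1
    have h2 := ((mem_J1_iff R).1 hy).1
    omega
  have := hexp px py hplev hcon x hx y hy
  exact absurd hxy (by exact not_le.2 this)

/-- one-step projection: parents of horizontally `c`-close vertices are `c`-close (`c ≥ 1`) -/
lemma parents_dh_le (hexp : R.Expansive) {x y px py : X} {c : ℕ} (hc : 1 ≤ c)
    (hlev : R.level x = R.level y) (hx : x ∈ R.J 1 px) (hy : y ∈ R.J 1 py)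
    (hxy : R.dh x y ≤ (c : ℕ∞)) : R.dh px py ≤ (c : ℕ∞) := by
  obtain ⟨q, L, hLc, hq0, hqL, hadj, -⟩ := exists_dh_seq R hxy
  by_cases h0 : L = 0
  · have hxy0 : x = y := by rw [← hq0, ← hqL 0 (by omega)]
    subst hxy0
    have h1 : R.dh px py ≤ 1 :=
      parents_dh_le_one R hexp rfl hx hy (by rw [dh_self]; exact zero_le)
    exact h1.trans (by exact_mod_cast Nat.one_le_cast.2 hc)
  have hlevq : ∀ t, R.level (q t) = R.level x := by
    intro t
    induction t with
    | zero => rw [hq0]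
    | succ t ih =>
      by_cases ht : t < L
      · rw [← (Gh_adj_level R (hadj t ht))]; exact ih
      · rw [hqL (t+1) (by omega)]; exact hlev.symm
  have hpar : ∀ t, ∃ pw, q t ∈ R.J 1 pw := by
    intro t
    apply exists_parent
    have := ((mem_J1_iff R).1 hx).1
    have := hlevq t
    omega
  classical
  choose par hparspec using hpar
  set P : ℕ → X := fun t => if t = 0 then px else if L ≤ t then py else par t with hP
  have hPmem : ∀ t ≤ L, q t ∈ R.J 1 (P t) := by
    intro t htL
    by_cases ht0 : t = 0
    · subst ht0; simp only [hP, if_pos rfl]; rw [hq0]; exact hx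
    · by_cases hL : L ≤ t
      · simp only [hP, if_neg ht0, if_pos hL]
        rw [hqL t hL]; exact hy
      · simp only [hP, if_neg ht0, if_neg hL]; exact hparspec t
  have hstep : ∀ t < L, R.dh (P t) (P (t + 1)) ≤ 1 := by
    intro t ht
    exact parents_dh_le_one R hexp (Gh_adj_level R (hadj t ht)) (hPmem t (by omega))
      (hPmem (t+1) (by omega)) (dh_adj_le R (hadj t ht))
  have hend := dh_seq_le R P hstep
  have hP0 : P 0 = px := by simp [hP]
  have hPL : P L = py := by simp [hP, h0]
  rw [hP0, hPL] at hend
  calc R.dh px py ≤ (L : ℕ∞) := hend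
    _ ≤ (c : ℕ∞) := by exact_mod_cast hLc

/-- chain-bottom comparison: bottoms of chains over `c`-close tops are `c`-close -/
lemma chains_dh_le (hexp : R.Expansive) {c : ℕ} (hc : 1 ≤ c) :
    ∀ (L : ℕ) (c₁ c₂ : ℕ → X), ChainUp R c₁ L → ChainUp R c₂ L →
    R.level (c₁ 0) = R.level (c₂ 0) →
    R.dh (c₁ L) (c₂ L) ≤ (c : ℕ∞) → R.dh (c₁ 0) (c₂ 0) ≤ (c : ℕ∞) := by
  intro L
  induction L with
  | zero => intro c₁ c₂ _ _ _ h; exact h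
  | succ L ih =>
    intro c₁ c₂ h₁ h₂ hlev htop
    have hlevL : R.level (c₁ L) = R.level (c₂ L) := by
      rw [h₁.level R L (by omega), h₂.level R L (by omega), hlev]
    have hlevL1 : R.level (c₁ (L+1)) = R.level (c₂ (L+1)) := by
      rw [h₁.level R (L+1) le_rfl, h₂.level R (L+1) le_rfl, hlev]
    have hstep := parents_dh_le R hexp hc hlevL1 (h₁ L (by omega)) (h₂ L (by omega)) htop
    exact ih c₁ c₂ (fun t ht => h₁ t (by omega)) (fun t ht => h₂ t (by omega)) hlev hstep

/-- two chains to the same vertex have `dh ≤ 1` bottoms -/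
lemma chains_same_top (hexp : R.Expansive) {L : ℕ} {c₁ c₂ : ℕ → X}
    (h₁ : ChainUp R c₁ L) (h₂ : ChainUp R c₂ L) (hlev : R.level (c₁ 0) = R.level (c₂ 0))
    (htop : c₁ L = c₂ L) : R.dh (c₁ 0) (c₂ 0) ≤ 1 := by
  have : R.dh (c₁ L) (c₂ L) ≤ (1 : ℕ) := by rw [htop, dh_self]; exact zero_le
  have := chains_dh_le R hexp le_rfl L c₁ c₂ h₁ h₂ hlev this
  exact_mod_cast this


/-! ### Ray facts -/

lemma ray_level {f : ℕ → X} (hf : R.IsRay f) (i : ℕ) : R.level (f i) = i := by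
  induction i with
  | zero => rw [hf.1]; exact level_root R
  | succ i ih => have := ((mem_J1_iff R).1 (hf.2 i)).1; omega

lemma ray_chain {f : ℕ → X} (hf : R.IsRay f) (j L : ℕ) :
    ChainUp R (fun t => f (j + t)) L := by
  intro t ht
  show f (j + (t + 1)) ∈ R.J 1 (f (j + t))
  have e : j + (t + 1) = (j + t) + 1 := by omega
  rw [e]
  exact hf.2 (j + t)

lemma ray_mem_J {f : ℕ → X} (hf : R.IsRay f) (j L : ℕ) : f (j + L) ∈ R.J L (f j) := by
  have := (ray_chain R hf j L).mem_J R
  simpa using this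

/-- downward monotonicity of horizontal distance along rays -/
lemma dh_ray_anti (hexp : R.Expansive) {f g : ℕ → X} (hf : R.IsRay f) (hg : R.IsRay g)
    {j j' c : ℕ} (hj : j ≤ j') (hc : 1 ≤ c)
    (h : R.dh (f j') (g j') ≤ (c : ℕ∞)) : R.dh (f j) (g j) ≤ (c : ℕ∞) := by
  have := chains_dh_le R hexp hc (j' - j) (fun t => f (j + t)) (fun t => g (j + t))
    (ray_chain R hf j _) (ray_chain R hg j _)
    (by simp [ray_level R hf, ray_level R hg])
    (by simpa [Nat.add_sub_cancel' hj] using h)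
  simpa using this

/-! ### The departing splitting lemma and the cascade -/

lemma split_lemma {m k : ℕ} (hexp : R.Expansive) (hdep : R.Departing m k) (hk : 0 < k)
    {x y u v : X} {cx cy : ℕ → X}
    (hcx : ChainUp R cx m) (hcy : ChainUp R cy m)
    (hx0 : cx 0 = x) (hxm : cx m = u) (hy0 : cy 0 = y) (hym : cy m = v)
    (hlev : R.level x = R.level y) (hxy : (k : ℕ∞) < R.dh x y) :
    2 * R.dh x y ≤ R.dh u v + ((2 * k : ℕ) : ℕ∞) := by
  classical
  by_cases htop : R.dh u v = ⊤
  · rw [htop]; simp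
  set h := (R.dh u v).toNat with hh
  have hcoe : ((h : ℕ∞)) = R.dh u v := ENat.coe_toNat htop
  obtain ⟨q, L, hLh, hq0, hqL, hadj, hqdist⟩ := exists_dh_seq R (le_of_eq hcoe.symm)
  -- levels along the walk
  have hlevu : R.level u = R.level x + m := by
    have := hcx.level R m le_rfl; rw [hx0, hxm] at this; exact this
  have hlevq : ∀ t, R.level (q t) = R.level x + m := by
    intro t
    induction t with
    | zero => rw [hq0]; exact hlevu
    | succ t ih =>
      by_cases ht : t < L
      · rw [← (Gh_adj_level R (hadj t ht))]; exact ih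
      · rw [hqL (t+1) (by omega)]
        have hlevv : R.level v = R.level y + m := by
          have := hcy.level R m le_rfl; rw [hy0, hym] at this; exact this
        omega
  -- the degenerate case L = 0 is impossible
  by_cases hL0 : L = 0
  · exfalso
    have huv : u = v := by rw [← hq0, ← hqL 0 (by omega)]
    have := hdep x y hlev hxy u (by rw [← hx0, ← hxm]; exact hcx.mem_J R)
      v (by rw [← hy0, ← hym]; exact hcy.mem_J R)
    rw [huv, dh_self] at this
    simp at this
  -- ancestors of walk vertices
  have hanc : ∀ t, ∃ c : ℕ → X, ChainUp R c m ∧ c m = q t ∧ R.level (c 0) = R.level x := by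
    intro t
    obtain ⟨c, hc1, hc2, hc3⟩ := exists_chainUp R (R.level x) m (q t) (hlevq t)
    exact ⟨c, hc1, hc2, hc3⟩
  choose ch hch1 hch2 hch3 using hanc
  set CH : ℕ → (ℕ → X) := fun t => if t = 0 then cx else if L ≤ t then cy else ch t with hCH
  have hCHchain : ∀ t, ChainUp R (CH t) m := by
    intro t
    by_cases h0 : t = 0
    · simpa [hCH, h0] using hcx
    · by_cases hL : L ≤ t
      · simpa [hCH, h0, hL] using hcy
      · simpa [hCH, h0, hL] using hch1 t
  have hCHtop : ∀ t, CH t m = q t := by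
    intro t
    by_cases h0 : t = 0
    · simp only [hCH, h0, if_pos rfl]; rw [hxm, hq0]
    · by_cases hL : L ≤ t
      · simp only [hCH, if_neg h0, if_pos hL]; rw [hym, hqL t hL]
      · simp only [hCH, if_neg h0, if_neg hL]; exact hch2 t
  have hCHlev : ∀ t, R.level (CH t 0) = R.level x := by
    intro t
    by_cases h0 : t = 0
    · simp only [hCH, h0, if_pos rfl]; rw [hx0]
    · by_cases hL : L ≤ t
      · simp only [hCH, if_neg h0, if_pos hL]; rw [hy0, ← hlev]
      · simp only [hCH, if_neg h0, if_neg hL]; exact hch3 t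
  set A : ℕ → X := fun t => CH t 0 with hA
  -- the hop estimate
  have hop : ∀ t s, t ≤ s → s - t ≤ 2 * k → R.dh (A t) (A s) ≤ (k : ℕ∞) := by
    intro t s hts hsk
    by_contra hcon
    push_neg at hcon
    have hlevA : R.level (A t) = R.level (A s) := by rw [hA]; simp only; rw [hCHlev, hCHlev]
    have := hdep (A t) (A s) hlevA hcon (q t) ?_ (q s) ?_
    · have h2 := hqdist t s hts
      have : ((2*k : ℕ) : ℕ∞) < ((s - t : ℕ) : ℕ∞) := lt_of_lt_of_le this h2
      have : (2*k : ℕ) < s - t := by exact_mod_cast this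
      omega
    · have := (hCHchain t).mem_J R
      rwa [hCHtop t] at this
    · have := (hCHchain s).mem_J R
      rwa [hCHtop s] at this
  -- chain of hops
  have hops : ∀ r : ℕ, R.dh (A 0) (A (min (2 * k * r) L)) ≤ ((k * r : ℕ) : ℕ∞) := by
    intro r
    induction r with
    | zero => simp [dh_self]
    | succ r ih =>
      have e : 2*k*(r+1) = 2*k*r + 2*k := by ring
      have hts : min (2*k*r) L ≤ min (2*k*(r+1)) L := by
        apply min_le_min_right
        omega
      have hdiff : min (2*k*(r+1)) L - min (2*k*r) L ≤ 2*k := by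
        rcases le_or_gt (2*k*r) L with h1 | h1
        · rcases le_or_gt (2*k*(r+1)) L with h2 | h2
          · rw [min_eq_left h1, min_eq_left h2]; omega
          · rw [min_eq_left h1, min_eq_right (le_of_lt h2)]; omega
        · rw [min_eq_right (le_of_lt h1), min_eq_right (by omega : L ≤ 2*k*(r+1))]; omega
      calc R.dh (A 0) (A (min (2*k*(r+1)) L))
          ≤ R.dh (A 0) (A (min (2*k*r) L)) + R.dh (A (min (2*k*r) L)) (A (min (2*k*(r+1)) L)) :=
            dh_triangle R _ _ _
        _ ≤ ((k*r : ℕ) : ℕ∞) + (k : ℕ∞) := add_le_add ih (hop _ _ hts hdiff)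
        _ = ((k*(r+1) : ℕ) : ℕ∞) := by push_cast; ring
  -- choose the number of hops
  set r : ℕ := L / (2*k) + 1 with hr
  have hdm := Nat.div_add_mod L (2*k)
  have hmlt : L % (2*k) < 2*k := Nat.mod_lt _ (by omega)
  have e1 : 2*k*(L/(2*k) + 1) = 2*k*(L/(2*k)) + 2*k := by ring
  have e2 : 2*(k*(L/(2*k) + 1)) = 2*k*(L/(2*k)) + 2*k := by ring
  have h2kr : L ≤ 2*k*r := by rw [hr]; omega
  have hkr2 : 2*(k*r) ≤ L + 2*k := by rw [hr]; omega
  have hminL : min (2*k*r) L = L := min_eq_right h2kr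
  have hA0 : A 0 = x := by simp only [hA, hCH]; simp [hx0]
  have hAL : A L = y := by
    simp only [hA, hCH]
    rw [if_neg hL0, if_pos le_rfl, hy0]
  have hfinal : R.dh x y ≤ ((k * r : ℕ) : ℕ∞) := by
    have := hops r
    rwa [hminL, hA0, hAL] at this
  calc 2 * R.dh x y ≤ 2 * ((k*r : ℕ) : ℕ∞) := by
        exact mul_le_mul_right hfinal 2
    _ = ((2*(k*r) : ℕ) : ℕ∞) := by push_cast; ring
    _ ≤ ((L + 2*k : ℕ) : ℕ∞) := by exact_mod_cast hkr2
    _ = (L : ℕ∞) + ((2*k : ℕ) : ℕ∞) := by push_cast; ring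
    _ ≤ R.dh u v + ((2*k : ℕ) : ℕ∞) := by
        apply add_le_add_left
        rw [← hcoe]
        exact_mod_cast hLh

/-- the separation of rays grows exponentially above a separated level -/
lemma cascade {m k : ℕ} (hexp : R.Expansive) (hdep : R.Departing m k) (hk : 0 < k)
    {f g : ℕ → X} (hf : R.IsRay f) (hg : R.IsRay g) {n : ℕ}
    (hsep : (k : ℕ∞) < R.dh (f n) (g n)) :
    ∀ t, 1 ≤ t → ((2*k + 2^(t-1) : ℕ) : ℕ∞) ≤ R.dh (f (n + t*m)) (g (n + t*m)) := by
  have base : ∀ j, (k : ℕ∞) < R.dh (f j) (g j) →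
      ((2*k + 1 : ℕ) : ℕ∞) ≤ R.dh (f (j + m)) (g (j + m)) := by
    intro j hj
    have := hdep (f j) (g j) (by rw [ray_level R hf, ray_level R hg]) hj
      (f (j+m)) (ray_mem_J R hf j m) (g (j+m)) (ray_mem_J R hg j m)
    -- (2k : ℕ∞) < dh → 2k+1 ≤ dh
    have h1 : ((2*k : ℕ) : ℕ∞) + 1 ≤ R.dh (f (j+m)) (g (j+m)) := Order.add_one_le_of_lt this
    refine le_trans (le_of_eq ?_) h1
    push_cast
    ring
  intro t ht
  induction t with
  | zero => omega
  | succ t ih =>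
    by_cases ht1 : t = 0
    · subst ht1
      simpa [one_mul] using base n hsep
    · have ihh := ih (by omega)
      have hklt : (k : ℕ∞) < R.dh (f (n + t*m)) (g (n + t*m)) := by
        refine lt_of_lt_of_le ?_ ihh
        exact_mod_cast (by have := Nat.one_le_two_pow (n := t - 1); omega : k < 2*k + 2^(t-1))
      have hsplit := split_lemma R hexp hdep hk
        (ray_chain R hf (n + t*m) m) (ray_chain R hg (n + t*m) m)
        rfl rfl rfl rfl
        (by rw [ray_level R hf, ray_level R hg]) hklt
      have harith : n + (t+1)*m = (n + t*m) + m := by ring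
      rw [harith]
      have h2 : ((2*(2*k + 2^(t-1)) : ℕ) : ℕ∞) ≤ 2 * R.dh (f (n + t*m)) (g (n + t*m)) := by
        push_cast
        calc ((2:ℕ∞) * (2*(k:ℕ∞) + 2^(t-1))) = 2 * ((2*k + 2^(t-1) : ℕ) : ℕ∞) := by push_cast; ring
          _ ≤ 2 * R.dh (f (n + t*m)) (g (n + t*m)) := mul_le_mul_right ihh 2
      have h3 : ((2*(2*k + 2^(t-1)) : ℕ) : ℕ∞) ≤ R.dh (f (n + t*m + m)) (g (n + t*m + m)) + ((2*k:ℕ) : ℕ∞) :=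
        le_trans h2 hsplit
      have h4 : (2*(2*k + 2^(t-1)) : ℕ) = (2*k + 2^t) + 2*k := by
        have : 2^t = 2 * 2^(t-1) := by
          rw [← pow_succ']
          congr 1
          omega
        omega
      rw [h4] at h3
      have h5 : ((2*k + 2^t : ℕ) : ℕ∞) + ((2*k : ℕ) : ℕ∞) ≤
          R.dh (f (n + t*m + m)) (g (n + t*m + m)) + ((2*k:ℕ) : ℕ∞) := by
        refine le_trans (le_of_eq ?_) h3
        push_cast; ring
      have h6 : ((2*k : ℕ) : ℕ∞) ≠ ⊤ := by
        exact_mod_cast WithTop.coe_ne_top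
      exact (WithTop.add_le_add_iff_right h6).1 h5


/-! ### Chains through descending runs -/

/-- Given a descending run `p s, p (s+1), ..., p (s+r)` (each step going one level down),
any chain to the bottom `p (s+r)` extends to a chain to `p s` with the same base vertex. -/
lemma run_chain (μ : ℕ) {p : ℕ → X} {d s r : ℕ}
    (hadj : ∀ t < d, R.G.Adj (p t) (p (t + 1)))
    (hrun : ∀ t < r, s + t < d ∧ R.level (p (s + t + 1)) + 1 = R.level (p (s + t)))
    (hμ : μ ≤ R.level (p (s + r))) :
    ∃ c c'' : ℕ → X,
      ChainUp R c (R.level (p s) - μ) ∧ c (R.level (p s) - μ) = p s ∧ R.level (c 0) = μ ∧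
      ChainUp R c'' (R.level (p (s + r)) - μ) ∧ c'' (R.level (p (s + r)) - μ) = p (s + r) ∧
      c'' 0 = c 0 := by
  -- level formula along the run
  have hlvrun : ∀ t ≤ r, R.level (p (s + t)) + t = R.level (p s) := by
    intro t ht
    induction t with
    | zero => simp
    | succ t ih =>
      have h1 := (hrun t (by omega)).2
      have h2 := ih (by omega)
      have h3 : R.level (p (s + (t + 1))) = R.level (p (s + t + 1)) := rfl
      omega
  have hlvr := hlvrun r le_rfl
  obtain ⟨c'', hc''1, hc''2, hc''3⟩ :=
    exists_chainUp R μ (R.level (p (s + r)) - μ) (p (s + r)) (by omega)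
  set L'' := R.level (p (s + r)) - μ with hL''
  have hLs : R.level (p s) - μ = L'' + r := by omega
  set c : ℕ → X := fun t => if t ≤ L'' then c'' t else p (s + r - (t - L'')) with hc
  have hcval : ∀ j ≤ r, c (L'' + j) = p (s + r - j) := by
    intro j hj
    by_cases hj0 : j = 0
    · subst hj0; simp only [hc, if_pos le_rfl]; simpa using hc''2
    · simp only [hc, if_neg (by omega : ¬ L'' + j ≤ L'')]
      congr 1
      omega
  refine ⟨c, c'', ?_, ?_, ?_, hc''1, hc''2, by simp [hc]⟩
  · -- chain property
    rw [hLs]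
    intro t ht
    by_cases htL : t + 1 ≤ L''
    · simp only [hc, if_pos htL, if_pos (by omega : t ≤ L'')]
      exact hc''1 t (by omega)
    · -- we are in the run part
      set j := t - L'' with hj
      have hjr : j < r := by omega
      have e1 : t = L'' + j := by omega
      have e2 : t + 1 = L'' + (j + 1) := by omega
      have g1 : c (L'' + j + 1) = p (s + r - (j + 1)) := by
        have := hcval (j + 1) (by omega)
        rwa [show L'' + (j + 1) = L'' + j + 1 from rfl] at this
      rw [e1]
      rw [show L'' + j + 1 = (L'' + j) + 1 from rfl] at g1
      rw [g1, hcval j (by omega)]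
      set t' := r - j - 1 with ht'
      have e3 : s + r - (j + 1) = s + t' := by omega
      have e4 : s + r - j = s + t' + 1 := by omega
      rw [e3, e4]
      refine (mem_J1_iff R).2 ⟨?_, ((hadj (s + t') (hrun t' (by omega)).1).symm)⟩
      exact ((hrun t' (by omega)).2).symm
  · rw [hLs, hcval r le_rfl]
    simp
  · simp only [hc, if_pos (by omega : 0 ≤ L'')]
    exact hc''3


/-! ### The walk projection estimate -/

/-- **Key estimate**: if a walk of length `d` joins `f i` to `g i`, and `μ` is the minimum
level along the walk, then `d ≥ dh (f μ) (g μ) + 2(i-μ) - 3`. -/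
lemma walk_project (hexp : R.Expansive) {f g : ℕ → X} (hf : R.IsRay f) (hg : R.IsRay g)
    (i d : ℕ) (p : ℕ → X) (hp0 : p 0 = f i) (hpd : p d = g i)
    (hadj : ∀ t < d, R.G.Adj (p t) (p (t + 1))) :
    ∃ μ ≤ i, ∃ D : ℕ, R.dh (f μ) (g μ) ≤ (D : ℕ∞) ∧
      (D : ℤ) + 2 * ((i : ℤ) - μ) ≤ (d : ℤ) + 3 := by
  classical
  set lv : ℕ → ℕ := fun s => R.level (p s) with hlvdef
  set mn : ℕ → ℕ := fun s => Nat.rec (lv 0) (fun t acc => min acc (lv (t + 1))) s with hmndef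
  have hmn0 : mn 0 = lv 0 := rfl
  have hmnsucc : ∀ s, mn (s + 1) = min (mn s) (lv (s + 1)) := fun s => rfl
  have hmn_le_lv : ∀ t s, t ≤ s → mn s ≤ lv t := by
    intro t s hts
    induction s with
    | zero =>
      have ht0 : t = 0 := Nat.le_zero.1 hts
      subst ht0
      exact le_of_eq hmn0
    | succ s ih =>
      rw [hmnsucc s]
      rcases Nat.lt_succ_iff_lt_or_eq.1 (Nat.lt_succ_of_le hts) with h | h
      · have := ih (by omega); omega
      · subst h; omega
  have hmn_self : ∀ s, mn s ≤ lv s := fun s => hmn_le_lv s s le_rfl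
  set μ := mn d with hμdef
  have hμlv : ∀ t ≤ d, μ ≤ lv t := fun t ht => hmn_le_lv t d ht
  have hlv0 : lv 0 = i := by simp only [hlvdef]; rw [hp0, ray_level R hf]
  have hlvd : lv d = i := by simp only [hlvdef]; rw [hpd, ray_level R hg]
  have hμi : μ ≤ i := by rw [← hlv0]; exact hμlv 0 (by omega)
  -- edge level steps
  have hstep : ∀ s < d, lv (s + 1) ≤ lv s + 1 ∧ lv s ≤ lv (s + 1) + 1 := by
    intro s hs
    exact ⟨adj_level_le R (hadj s hs), adj_level_le R (hadj s hs).symm⟩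
  -- a canonical chain to `p s` exists for every `s ≤ d`
  have exchain : ∀ s ≤ d, ∃ c : ℕ → X, ChainUp R c (lv s - μ) ∧ c (lv s - μ) = p s ∧
      R.level (c 0) = μ := by
    intro s hsd
    refine exists_chainUp R μ (lv s - μ) (p s) ?_
    have e : lv s = R.level (p s) := rfl
    have := hμlv s hsd
    omega
  -- run analysis at a descending edge
  have runfacts : ∀ s₀, s₀ < d → lv (s₀ + 1) + 1 = lv s₀ →
      ∃ r, 1 ≤ r ∧ r ≤ d - s₀ ∧
        (∀ t < r, s₀ + t < d ∧ lv (s₀ + t + 1) + 1 = lv (s₀ + t)) ∧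
        (s₀ + r < d → ¬ (lv (s₀ + r + 1) + 1 = lv (s₀ + r))) ∧
        (∀ t ≤ r, lv (s₀ + t) + t = lv s₀) ∧
        (∀ t ≤ r, mn (s₀ + t) = min (mn s₀) (lv (s₀ + t))) := by
    intro s₀ hs₀ hdn
    set DT : ℕ → Prop := fun r => ∀ t < r, s₀ + t < d ∧ lv (s₀ + t + 1) + 1 = lv (s₀ + t) with hDT
    set r := Nat.findGreatest DT (d - s₀) with hr
    have hspec : DT r := Nat.findGreatest_spec (P := DT) (m := 0) (by omega)
      (fun t ht => absurd ht (by omega))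
    have hr1 : 1 ≤ r := by
      apply Nat.le_findGreatest (by omega)
      intro t ht
      have : t = 0 := by omega
      subst this
      exact ⟨hs₀, hdn⟩
    have hrle : r ≤ d - s₀ := Nat.findGreatest_le _
    have hmax : s₀ + r < d → ¬ (lv (s₀ + r + 1) + 1 = lv (s₀ + r)) := by
      intro h hcon
      have hP : DT (r + 1) := by
        intro t ht
        rcases Nat.lt_succ_iff_lt_or_eq.1 ht with h' | h'
        · exact hspec t h'
        · subst h'; exact ⟨h, hcon⟩
      have hng : ¬ DT (r + 1) := Nat.findGreatest_is_greatest (by rw [← hr]; omega) (by omega)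
      exact hng hP
    have hlvrun : ∀ t ≤ r, lv (s₀ + t) + t = lv s₀ := by
      intro t ht
      induction t with
      | zero => simp
      | succ t ih =>
        have h1 := (hspec t (by omega)).2
        have h2 := ih (by omega)
        have h3 : lv (s₀ + (t + 1)) = lv (s₀ + t + 1) := rfl
        omega
    have hmnrun : ∀ t ≤ r, mn (s₀ + t) = min (mn s₀) (lv (s₀ + t)) := by
      intro t ht
      induction t with
      | zero => have := hmn_self s₀; simp; omega
      | succ t ih =>
        have h1 : mn (s₀ + (t + 1)) = min (mn (s₀ + t)) (lv (s₀ + t + 1)) := hmnsucc (s₀ + t)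
        have h2 := ih (by omega)
        have h3 : lv (s₀ + (t + 1)) = lv (s₀ + t + 1) := rfl
        have h4 := hlvrun t (by omega)
        have h5 := hlvrun (t + 1) ht
        omega
    exact ⟨r, hr1, hrle, hspec, hmax, hlvrun, hmnrun⟩
  -- the invariant
  set Good : ℕ → Prop := fun s => ∃ (c : ℕ → X) (D : ℕ),
    ChainUp R c (lv s - μ) ∧ c (lv s - μ) = p s ∧ R.level (c 0) = μ ∧
    R.dh (f μ) (c 0) ≤ (D : ℕ∞) ∧
    (D : ℤ) + ((i : ℤ) - lv s) + 2 * ((lv s : ℤ) - mn s) ≤ (s : ℤ) + 2 with hGood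
  -- processing a descending run starting at s₀, given a bound valid for all chains to p s₀
  have process_run : ∀ s₀, s₀ < d → lv (s₀ + 1) + 1 = lv s₀ →
      ∀ D₀ : ℕ, (∀ cc : ℕ → X, ChainUp R cc (lv s₀ - μ) → cc (lv s₀ - μ) = p s₀ →
        R.level (cc 0) = μ → R.dh (f μ) (cc 0) ≤ (D₀ : ℕ∞)) →
      ∃ r, 1 ≤ r ∧ s₀ + r ≤ d ∧ (s₀ + r < d → ¬ (lv (s₀ + r + 1) + 1 = lv (s₀ + r))) ∧
        (∀ t ≤ r, lv (s₀ + t) + t = lv s₀) ∧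
        (∀ t ≤ r, mn (s₀ + t) = min (mn s₀) (lv (s₀ + t))) ∧
        ∃ c' : ℕ → X, ChainUp R c' (lv (s₀ + r) - μ) ∧ c' (lv (s₀ + r) - μ) = p (s₀ + r) ∧
          R.level (c' 0) = μ ∧ R.dh (f μ) (c' 0) ≤ (D₀ : ℕ∞) := by
    intro s₀ hs₀ hdn D₀ hcomp
    obtain ⟨r, hr1, hrle, hspec, hmax, hlvrun, hmnrun⟩ := runfacts s₀ hs₀ hdn
    obtain ⟨cc, c'', hcc1, hcc2, hcc3, hc''1, hc''2, hc''0⟩ :=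
      run_chain R μ hadj hspec (hμlv (s₀ + r) (by omega))
    refine ⟨r, hr1, by omega, hmax, hlvrun, hmnrun, c'', hc''1, hc''2, by rw [hc''0, hcc3], ?_⟩
    rw [hc''0]
    exact hcomp cc hcc1 hcc2 hcc3
  -- main induction
  have main : ∀ rem s, s ≤ d → d - s ≤ rem → Good s →
      ((s < d ∧ lv (s + 1) + 1 = lv s) → mn s < lv s) → Good d := by
    intro rem
    induction rem with
    | zero =>
      intro s hsd hrem hgood _
      have : s = d := by omega
      subst this
      exact hgood
    | succ rem ih =>
      intro s hsd hrem hgood haux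
      by_cases hsd' : s = d
      · subst hsd'; exact hgood
      have hs : s < d := by omega
      obtain ⟨c, D, hc1, hc2, hc3, hc4, hc5⟩ := hgood
      have h1 := (hstep s hs).1
      have h2 := (hstep s hs).2
      rcases (show lv (s + 1) = lv s + 1 ∨ lv (s + 1) = lv s ∨ lv (s + 1) + 1 = lv s by omega)
        with hup | hhor | hdn
      · -- ascending edge: extend the chain, cost 0
        have hlen : lv (s + 1) - μ = (lv s - μ) + 1 := by
          have := hμlv s (by omega); omega
        set c' : ℕ → X := fun t => if t = lv (s + 1) - μ then p (s + 1) else c t with hc'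
        have hgood' : Good (s + 1) := by
          refine ⟨c', D, ?_, ?_, ?_, ?_, ?_⟩
          · rw [hlen]
            intro t ht
            rcases Nat.lt_succ_iff_lt_or_eq.1 ht with h' | h'
            · simp only [hc', hlen, if_neg (by omega : ¬ t + 1 = (lv s - μ) + 1),
                if_neg (by omega : ¬ t = (lv s - μ) + 1)]
              exact hc1 t h'
            · subst h'
              simp only [hc', hlen, if_pos rfl, if_neg (by omega : ¬ lv s - μ = (lv s - μ) + 1)]
              rw [hc2]
              refine (mem_J1_iff R).2 ⟨?_, hadj s hs⟩
              show R.level (p (s+1)) = R.level (p s) + 1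
              exact hup
          · simp [hc']
          · simp only [hc', if_neg (by omega : ¬ (0:ℕ) = lv (s+1) - μ)]
            exact hc3
          · simp only [hc', if_neg (by omega : ¬ (0:ℕ) = lv (s+1) - μ)]
            exact hc4
          · have hmn' : mn (s + 1) = mn s := by
              have := hmnsucc s
              have := hmn_self s
              omega
            rw [hmn', hup]
            push_cast
            push_cast at hc5
            omega
        refine ih (s + 1) (by omega) (by omega) hgood' ?_
        intro _
        have := hmnsucc s
        have := hmn_self s
        omega
      · -- horizontal edge
        -- comparison bound valid for every chain to p (s+1)
        have hcompnext : ∀ cc : ℕ → X, ChainUp R cc (lv (s+1) - μ) → cc (lv (s+1) - μ) = p (s+1) →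
            R.level (cc 0) = μ → R.dh (f μ) (cc 0) ≤ ((D + 1 : ℕ) : ℕ∞) := by
          intro cc hcc1 hcc2 hcc3
          have e : lv (s + 1) - μ = lv s - μ := by rw [hhor]
          have hcomp : R.dh (c 0) (cc 0) ≤ ((1:ℕ) : ℕ∞) := by
            refine chains_dh_le R hexp le_rfl (lv s - μ) c cc hc1 (by rw [← e]; exact hcc1)
              (by rw [hc3, hcc3]) ?_
            rw [hc2, show cc (lv s - μ) = cc (lv (s+1) - μ) by rw [e], hcc2]
            exact dh_adj_le R ⟨hadj s hs, hhor.symm⟩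
          calc R.dh (f μ) (cc 0) ≤ R.dh (f μ) (c 0) + R.dh (c 0) (cc 0) := dh_triangle R _ _ _
            _ ≤ (D : ℕ∞) + ((1:ℕ) : ℕ∞) := add_le_add hc4 hcomp
            _ = ((D + 1 : ℕ) : ℕ∞) := by push_cast; ring
        by_cases hnext : s + 1 < d ∧ lv (s + 1 + 1) + 1 = lv (s + 1)
        · -- horizontal edge followed by a descending run: process them together
          obtain ⟨r, hr1, hrd, hmax, hlvrun, hmnrun, c', hc'1, hc'2, hc'3, hc'4⟩ :=
            process_run (s + 1) hnext.1 hnext.2 (D + 1) hcompnext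
          have hgood' : Good (s + 1 + r) := by
            refine ⟨c', D + 1, hc'1, hc'2, hc'3, hc'4, ?_⟩
            have e1 := hlvrun r le_rfl
            have e2 := hmnrun r le_rfl
            have e3 : mn (s + 1) = min (mn s) (lv (s + 1)) := hmnsucc s
            have e4 := hmn_self s
            rw [hhor] at e1 e3
            push_cast
            push_cast at hc5
            omega
          refine ih (s + 1 + r) (by omega) (by omega) hgood' ?_
          rintro ⟨hlt, hcon⟩
          exact absurd hcon (hmax hlt)
        · -- isolated horizontal edge: switch chains, cost 1
          obtain ⟨cnew, hn1, hn2, hn3⟩ := exchain (s + 1) (by omega)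
          have hgood' : Good (s + 1) := by
            refine ⟨cnew, D + 1, hn1, hn2, hn3, hcompnext cnew hn1 hn2 hn3, ?_⟩
            have e3 : mn (s + 1) = min (mn s) (lv (s + 1)) := hmnsucc s
            have e4 := hmn_self s
            rw [hhor] at e3 ⊢
            push_cast
            push_cast at hc5
            omega
          refine ih (s + 1) (by omega) (by omega) hgood' ?_
          intro hcon
          exact absurd hcon hnext
      · -- descending edge at s: by the auxiliary hypothesis, mn s < lv s
        have hmnlt : mn s < lv s := haux ⟨hs, hdn⟩
        have hcompcur : ∀ cc : ℕ → X, ChainUp R cc (lv s - μ) → cc (lv s - μ) = p s →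
            R.level (cc 0) = μ → R.dh (f μ) (cc 0) ≤ ((D + 1 : ℕ) : ℕ∞) := by
          intro cc hcc1 hcc2 hcc3
          have hcomp : R.dh (c 0) (cc 0) ≤ 1 :=
            chains_same_top R hexp hc1 hcc1 (by rw [hc3, hcc3]) (by rw [hc2, hcc2])
          calc R.dh (f μ) (cc 0) ≤ R.dh (f μ) (c 0) + R.dh (c 0) (cc 0) := dh_triangle R _ _ _
            _ ≤ (D : ℕ∞) + 1 := add_le_add hc4 hcomp
            _ = ((D + 1 : ℕ) : ℕ∞) := by push_cast; ring
        obtain ⟨r, hr1, hrd, hmax, hlvrun, hmnrun, c', hc'1, hc'2, hc'3, hc'4⟩ :=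
          process_run s hs hdn (D + 1) hcompcur
        have hgood' : Good (s + r) := by
          refine ⟨c', D + 1, hc'1, hc'2, hc'3, hc'4, ?_⟩
          have e1 := hlvrun r le_rfl
          have e2 := hmnrun r le_rfl
          push_cast
          push_cast at hc5
          omega
        refine ih (s + r) (by omega) (by omega) hgood' ?_
        rintro ⟨hlt, hcon⟩
        exact absurd hcon (hmax hlt)
  -- the ray chain to p 0 = f i
  have raychain0 : ChainUp R (fun t => f (μ + t)) (lv 0 - μ) ∧
      (fun t => f (μ + t)) (lv 0 - μ) = p 0 ∧ R.level ((fun t => f (μ + t)) 0) = μ := by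
    refine ⟨ray_chain R hf μ _, ?_, ?_⟩
    · show f (μ + (lv 0 - μ)) = p 0
      rw [hp0, hlv0]
      congr 1
      omega
    · show R.level (f (μ + 0)) = μ
      rw [ray_level R hf]
      omega
  -- initial comparison: every chain to p 0 has base at dh ≤ 1 from f μ
  have hcomp0 : ∀ cc : ℕ → X, ChainUp R cc (lv 0 - μ) → cc (lv 0 - μ) = p 0 →
      R.level (cc 0) = μ → R.dh (f μ) (cc 0) ≤ ((1:ℕ) : ℕ∞) := by
    intro cc hcc1 hcc2 hcc3
    have := chains_same_top R hexp raychain0.1 hcc1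
      (by
        show R.level (f (μ + 0)) = R.level (cc 0)
        rw [ray_level R hf, hcc3]
        omega)
      (by
        show f (μ + (lv 0 - μ)) = cc (lv 0 - μ)
        rw [hcc2, hp0]
        have e : lv 0 = i := hlv0
        congr 1
        omega)
    simp only [Nat.add_zero] at this
    exact_mod_cast this
  -- starting point
  have start : Good d := by
    by_cases hdn0 : 0 < d ∧ lv (0 + 1) + 1 = lv 0
    · -- initial descending run
      obtain ⟨r, hr1, hrd, hmax, hlvrun, hmnrun, c', hc'1, hc'2, hc'3, hc'4⟩ :=
        process_run 0 hdn0.1 hdn0.2 1 hcomp0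
      refine main (d - r) r (by omega) (by omega) ?_ ?_
      · refine ⟨c', 1, by simpa using hc'1, by simpa using hc'2, by simpa using hc'3,
          by exact_mod_cast (by simpa using hc'4), ?_⟩
        have e1 := hlvrun r le_rfl
        have e2 := hmnrun r le_rfl
        rw [hmn0] at e2
        simp only [Nat.zero_add] at e1 e2
        push_cast
        omega
      · rintro ⟨hlt, hcon⟩
        have := hmax (by simpa using hlt)
        simp only [Nat.zero_add] at this
        exact absurd hcon this
    · -- no initial descending edge
      refine main (d - 0) 0 (by omega) (by omega) ?_ ?_
      · refine ⟨fun t => f (μ + t), 0, raychain0.1, raychain0.2.1, raychain0.2.2, ?_, ?_⟩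
        · show R.dh (f μ) (f (μ + 0)) ≤ ((0:ℕ) : ℕ∞)
          simp [dh_self]
        · rw [hmn0]
          push_cast
          omega
      · rintro ⟨hlt, hcon⟩
        exact absurd (⟨hlt, hcon⟩ : 0 < d ∧ lv (0+1) + 1 = lv 0) hdn0
  -- conclusion
  obtain ⟨c, D, hc1, hc2, hc3, hc4, hc5⟩ := start
  refine ⟨μ, hμi, D + 1, ?_, ?_⟩
  · have hcg : R.dh (c 0) (g μ) ≤ 1 := by
      have h₂ : ChainUp R (fun t => g (μ + t)) (lv d - μ) := ray_chain R hg μ _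
      have := chains_same_top R hexp hc1 h₂
        (by
          show R.level (c 0) = R.level (g (μ + 0))
          rw [hc3, ray_level R hg]
          omega)
        (by
          show c (lv d - μ) = g (μ + (lv d - μ))
          rw [hc2, hpd]
          have e : lv d = i := hlvd
          congr 1
          omega)
      simp only [Nat.add_zero] at this
      exact this
    calc R.dh (f μ) (g μ) ≤ R.dh (f μ) (c 0) + R.dh (c 0) (g μ) := dh_triangle R _ _ _
      _ ≤ (D : ℕ∞) + 1 := add_le_add hc4 hcg
      _ = ((D + 1 : ℕ) : ℕ∞) := by push_cast; ring
  · push_cast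
    push_cast at hc5
    rw [hlvd] at hc5
    have := hμlv d le_rfl
    rw [hlvd] at this
    omega


/-! ### Numeric growth -/

lemma two_pow_growth (m : ℕ) (hm : 0 < m) : ∀ t, 8*m + 8 ≤ t → 2*m*(t+1) ≤ 2^(t-1) := by
  intro t
  induction t with
  | zero => omega
  | succ t ih =>
    intro ht
    by_cases hbase : t + 1 = 8*m + 8
    · rw [hbase]
      have h1 : m ≤ 2^m := le_of_lt (Nat.lt_two_pow_self (n := m))
      have h2 : m*m ≤ 2^(2*m) := by
        rw [two_mul, pow_add]
        exact Nat.mul_le_mul h1 h1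
      have h3 : 2*m*(8*m+8+1) ≤ 34*(m*m) := by nlinarith
      have h4 : 34*(m*m) ≤ 34 * 2^(2*m) := Nat.mul_le_mul_left _ h2
      have h5 : 34 * 2^(2*m) ≤ 2^6 * 2^(2*m) := Nat.mul_le_mul_right _ (by norm_num)
      have h6 : (2:ℕ)^6 * 2^(2*m) = 2^(2*m+6) := by rw [pow_add]; ring
      have h7 : (2:ℕ)^(2*m+6) ≤ 2^(8*m+8-1) := Nat.pow_le_pow_right (by norm_num) (by omega)
      calc 2*m*(8*m+8+1) ≤ 2^(2*m+6) :=
            le_trans h3 (le_trans h4 (le_of_le_of_eq h5 h6))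
        _ ≤ 2^(8*m+8-1) := h7
    · have htt : 8*m + 8 ≤ t := by omega
      have ihh := ih htt
      have h2m : 2*m ≤ 2^(t-1) := by
        calc 2*m ≤ 2*m*(t+1) := by nlinarith
          _ ≤ 2^(t-1) := ihh
      have hstep : 2*m*(t+1+1) ≤ 2^(t-1) + 2^(t-1) := by
        have : 2*m*(t+1+1) = 2*m*(t+1) + 2*m := by ring
        omega
      have hpow : (2:ℕ)^(t-1) + 2^(t-1) = 2^(t+1-1) := by
        have e : t+1-1 = (t-1)+1 := by omega
        rw [e, pow_succ]
        ring
      omega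

/-! ### The core Gromov-product bound -/

/-- If two rays are horizontally `> k`-separated at level `N`, then all Gromov products
`(f i | g i)` are bounded by `N` plus a constant depending only on `m` and `k`. -/
lemma gp_le_of_sep {m k : ℕ} (hexp : R.Expansive) (hdep : R.Departing m k)
    (hk : 0 < k) (hm : 0 < m) {f g : ℕ → X} (hf : R.IsRay f) (hg : R.IsRay g) {N : ℕ}
    (hsep : (k : ℕ∞) < R.dh (f N) (g N)) (i : ℕ) :
    R.gp (f i) (g i) ≤ (N : ℝ) + (2*m*(8*m+10) + 3 : ℕ) := by
  classical
  set C₀ : ℕ := 2*m*(8*m+10) with hC₀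
  obtain ⟨w, hw⟩ := R.conn.exists_walk_length_eq_dist (f i) (g i)
  set d := w.length with hd
  obtain ⟨μ, hμi, D, hD, hineq⟩ := walk_project R hexp hf hg i d (fun t => w.getVert t)
    w.getVert_zero (by show w.getVert d = g i; rw [hd]; exact w.getVert_length)
    (fun t ht => w.adj_getVert_succ ht)
  -- separation bound at level μ
  have hbound : 2*((μ:ℤ) - N) ≤ (D:ℤ) + C₀ := by
    rcases le_or_gt μ N with hcase | hcase
    · have : (0:ℤ) ≤ (D:ℤ) + C₀ := by positivity
      omega
    · obtain ⟨t, ht⟩ : ∃ t, t = (μ - N) / m := ⟨_, rfl⟩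
      obtain ⟨rem, hrem⟩ : ∃ r', r' = (μ - N) % m := ⟨_, rfl⟩
      have hdm : m * t + rem = μ - N := by rw [ht, hrem]; exact Nat.div_add_mod _ _
      have hmod : rem < m := by rw [hrem]; exact Nat.mod_lt _ hm
      have hcomm : m * t = t * m := Nat.mul_comm m t
      by_cases ht0 : t = 0
      · -- μ - N < m
        have hmt : m * t = 0 := by rw [ht0, mul_zero]
        have h9 : μ - N < m := by omega
        have h10 : 2*((μ:ℤ) - N) ≤ 2*m := by omega
        have hC : (2*(m:ℤ)) ≤ ((C₀ : ℕ) : ℤ) := by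
          rw [hC₀]
          push_cast
          nlinarith [mul_nonneg (by positivity : (0:ℤ) ≤ 2*(m:ℤ))
            (by positivity : (0:ℤ) ≤ 8*(m:ℤ)+9)]
        omega
      · have ht1 : 1 ≤ t := by omega
        have hNt : N + t*m ≤ μ := by omega
        have hcas := cascade R hexp hdep hk hf hg hsep t ht1
        -- transfer the lower bound from level N + t*m to level μ
        have hup : ((2*k + 2^(t-1) : ℕ) : ℕ∞) ≤ R.dh (f μ) (g μ) := by
          by_contra hcon
          push_neg at hcon
          have hne : R.dh (f μ) (g μ) ≠ ⊤ := ne_top_of_lt hcon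
          obtain ⟨b, hb⟩ := WithTop.ne_top_iff_exists.1 hne
          rw [← hb] at hcon
          have hblt : b < 2*k + 2^(t-1) := ENat.coe_lt_coe.1 hcon
          have hble : R.dh (f μ) (g μ) ≤ ((2*k + 2^(t-1) - 1 : ℕ) : ℕ∞) := by
            rw [← hb]
            exact ENat.coe_le_coe.2 (by omega)
          have h1le : 1 ≤ 2*k + 2^(t-1) - 1 := by
            have := Nat.one_le_two_pow (n := t-1)
            omega
          have hcontr := dh_ray_anti R hexp hf hg hNt h1le hble
          have hcc := ENat.coe_le_coe.1 (le_trans hcas hcontr)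
          have := Nat.one_le_two_pow (n := t-1)
          omega
        have hSD : 2*k + 2^(t-1) ≤ D := ENat.coe_le_coe.1 (le_trans hup hD)
        -- numeric comparison
        have hmul : (t+1)*m = t*m + m := by ring
        have hμt : μ - N ≤ (t+1)*m := by omega
        have hmul2 : 2*((t+1)*m) = 2*m*(t+1) := by ring
        rcases le_or_gt (8*m+8) t with hbig | hsmall
        · have hgrow := two_pow_growth m hm t hbig
          have h11 : 2*(μ - N) ≤ 2^(t-1) := by omega
          omega
        · have h12 : 2*(μ - N) ≤ C₀ := by
            have h2 : 2*m*(t+1) ≤ 2*m*(8*m+8) := Nat.mul_le_mul_left _ (by omega)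
            have h3 : 2*m*(8*m+8) ≤ C₀ := by
              rw [hC₀]
              exact Nat.mul_le_mul_left _ (by omega)
            omega
          omega
  -- assemble
  have hfinal : 2*(i:ℤ) ≤ (d:ℤ) + 2*N + C₀ + 3 := by omega
  have hgp : R.gp (f i) (g i) = ((i:ℝ) + i - R.G.dist (f i) (g i)) / 2 := by
    rw [RootedGraph.gp, ray_level R hf, ray_level R hg]
  rw [hgp]
  have hdist : (R.G.dist (f i) (g i) : ℝ) = (d : ℝ) := by
    norm_cast
    omega
  rw [hdist]
  have hfinalR : 2*(i:ℝ) ≤ (d:ℝ) + 2*N + C₀ + 3 := by exact_mod_cast hfinal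
  push_cast
  linarith


/-- the Gromov product of separated rays is uniformly bounded -/
lemma gpRay_le_of_sep {m k : ℕ} (hexp : R.Expansive) (hdep : R.Departing m k)
    (hk : 0 < k) (hm : 0 < m) {f g : ℕ → X} (hf : R.IsRay f) (hg : R.IsRay g) {N : ℕ}
    (hsep : (k : ℕ∞) < R.dh (f N) (g N)) :
    R.gpRay f g ≤ ENNReal.ofReal ((N : ℝ) + (2*m*(8*m+10) + 3 : ℕ)) := by
  rw [RootedGraph.gpRay]
  exact iSup_le fun i => ENNReal.ofReal_le_ofReal
    (gp_le_of_sep R hexp hdep hk hm hf hg hsep i)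

/-- rays with the same limit stay horizontally `k`-close -/
lemma dh_le_k_of_same_limit {B : Type*} (lim : (ℕ → X) → B) (hB : R.BoundaryOf lim)
    {m k : ℕ} (hexp : R.Expansive) (hdep : R.Departing m k) (hk : 0 < k) (hm : 0 < m)
    {f f' : ℕ → X} (hf : R.IsRay f) (hf' : R.IsRay f') (hlim : lim f = lim f') (j : ℕ) :
    R.dh (f j) (f' j) ≤ (k : ℕ∞) := by
  by_contra hcon
  push_neg at hcon
  have h1 := gpRay_le_of_sep R hexp hdep hk hm hf hf' hcon
  have h2 := (hB.2 f f' hf hf').1 hlim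
  rw [h2] at h1
  exact ENNReal.ofReal_ne_top (top_le_iff.1 h1)

end CFA

/-- Proposition 3.2: for an expansive `(m,k)`-departing rooted graph with a
Gromov metric `θ_a` on the hyperbolic boundary, there is `γ > 0` so that cells of vertices
`x,y ∈ X_n` with `d_h(x,y) > k` are at `θ_a`-distance `> γ e^{-an}`. -/
theorem cells_far_apart {X B : Type*} [MetricSpace B] (R : RootedGraph X) (m k : ℕ)
    (hm : 0 < m) (hk : 0 < k) (hexp : R.Expansive) (hdep : R.Departing m k)
    (hne : ∀ x : X, (R.J 1 x).Nonempty)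
    (lim : (ℕ → X) → B) (hB : R.BoundaryOf lim)
    (a c₁ c₂ : ℝ) (ha : 0 < a) (hc₁ : 0 < c₁) (hc₂ : 0 < c₂)
    (hθ : R.GromovLike lim a c₁ c₂) :
    ∃ γ : ℝ, 0 < γ ∧ ∀ n : ℕ, 1 ≤ n → ∀ x y : X, R.level x = n → R.level y = n →
      (k : ℕ∞) < R.dh x y → ∀ ξ ∈ R.cell lim x, ∀ η ∈ R.cell lim y,
        γ * Real.exp (-a * n) < dist ξ η := by
  classical
  set C₁ : ℕ := 2*m*(8*m+10) + 3 with hC₁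
  set C₂ : ℕ := (k+1)*m + C₁ with hC₂
  refine ⟨c₁ * Real.exp (-a * (C₂ : ℝ)) / 2, by positivity, ?_⟩
  intro n hn x y hx hy hxy ξ hξ η hη
  obtain ⟨f₀, hf₀, hf₀x, hf₀lim⟩ := hξ
  obtain ⟨g₀, hg₀, hg₀y, hg₀lim⟩ := hη
  rw [hx] at hf₀x
  rw [hy] at hg₀y
  have hsep0 : (k : ℕ∞) < R.dh (f₀ n) (g₀ n) := by rw [hf₀x, hg₀y]; exact hxy
  set N' : ℕ := n + (k+1)*m with hN'
  -- separation at level N' for arbitrary rays converging to ξ and η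
  have hseps : ∀ f g : ℕ → X, R.IsRay f → R.IsRay g → lim f = ξ → lim g = η →
      (k : ℕ∞) < R.dh (f N') (g N') := by
    intro f g hfr hgr hfl hgl
    have hcas := CFA.cascade R hexp hdep hk hf₀ hg₀ hsep0 (k+1) (by omega)
    have hffk : R.dh (f₀ N') (f N') ≤ (k : ℕ∞) := by
      rw [CFA.dh_comm]
      exact CFA.dh_le_k_of_same_limit R lim hB hexp hdep hk hm hfr hf₀
        (hfl.trans hf₀lim.symm) N'
    have hggk : R.dh (g N') (g₀ N') ≤ (k : ℕ∞) :=
      CFA.dh_le_k_of_same_limit R lim hB hexp hdep hk hm hgr hg₀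
        (hgl.trans hg₀lim.symm) N'
    by_contra hcon
    push_neg at hcon
    have htri : R.dh (f₀ N') (g₀ N') ≤ ((3*k : ℕ) : ℕ∞) := by
      calc R.dh (f₀ N') (g₀ N')
          ≤ R.dh (f₀ N') (f N') + R.dh (f N') (g₀ N') := CFA.dh_triangle R _ _ _
        _ ≤ R.dh (f₀ N') (f N') + (R.dh (f N') (g N') + R.dh (g N') (g₀ N')) := by
            exact add_le_add_right (CFA.dh_triangle R _ _ _) _
        _ ≤ (k : ℕ∞) + ((k : ℕ∞) + (k : ℕ∞)) :=
            add_le_add hffk (add_le_add hcon hggk)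
        _ = ((3*k : ℕ) : ℕ∞) := by push_cast; ring
    have hnat := ENat.coe_le_coe.1 (le_trans hcas htri)
    have h2k := Nat.lt_two_pow_self (n := k)
    have hee : k + 1 - 1 = k := rfl
    rw [hee] at hnat
    omega
  -- bound on the boundary Gromov product
  have hgpB : R.gpB lim ξ η ≤ ENNReal.ofReal ((N' : ℝ) + (C₁ : ℕ)) := by
    rw [RootedGraph.gpB]
    refine iSup_le fun f => iSup_le fun g => iSup_le fun hcond => ?_
    exact CFA.gpRay_le_of_sep R hexp hdep hk hm hcond.1 hcond.2.1
      (hseps f g hcond.1 hcond.2.1 hcond.2.2.1 hcond.2.2.2)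
  -- the two boundary points are distinct
  have hneq : ξ ≠ η := by
    intro he
    have h2 := (hB.2 f₀ g₀ hf₀ hg₀).1 (hf₀lim.trans (he.trans hg₀lim.symm))
    have h1 := CFA.gpRay_le_of_sep R hexp hdep hk hm hf₀ hg₀ hsep0
    rw [h2] at h1
    exact ENNReal.ofReal_ne_top (top_le_iff.1 h1)
  have hlow := (hθ ξ η hneq).1
  -- bound the exponent
  have htR : (R.gpB lim ξ η).toReal ≤ (N' : ℝ) + (C₁ : ℕ) := by
    have h1 := ENNReal.toReal_mono ENNReal.ofReal_ne_top hgpB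
    rwa [ENNReal.toReal_ofReal (by positivity)] at h1
  have hmono : Real.exp (-a * ((N' : ℝ) + (C₁ : ℕ))) ≤
      Real.exp (-a * (R.gpB lim ξ η).toReal) := by
    apply Real.exp_le_exp.2
    nlinarith
  have key : c₁ * Real.exp (-a * ((N' : ℝ) + (C₁ : ℕ))) ≤ dist ξ η :=
    le_trans (mul_le_mul_of_nonneg_left hmono hc₁.le) hlow
  have heq : (N' : ℝ) + (C₁ : ℕ) = (C₂ : ℝ) + (n : ℝ) := by
    rw [hN', hC₂]
    push_cast
    ring
  rw [heq, neg_mul, mul_add, neg_add, Real.exp_add, ← neg_mul, ← neg_mul] at key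
  have hpos : 0 < Real.exp (-a * (n : ℝ)) := Real.exp_pos _
  have hpos2 : 0 < c₁ * Real.exp (-a * (C₂ : ℝ)) := by positivity
  calc c₁ * Real.exp (-a * (C₂:ℝ)) / 2 * Real.exp (-a * (n:ℝ))
      < c₁ * Real.exp (-a * (C₂:ℝ)) * Real.exp (-a * (n:ℝ)) := by nlinarith
    _ = c₁ * (Real.exp (-a * (C₂:ℝ)) * Real.exp (-a * (n:ℝ))) := by ring
    _ ≤ dist ξ η := key
end

section
/- Let (X,E) be an expansive, (m,k)-departing rooted graph. Then there is C ≥ 1 such that for every x ∈ X and ξ ∈ J_∂(x): B_{θ_a}(ξ, C^{-1}e^{−a|x|}) ⊆ J^k_∂(x) ⊆ B_{θ_a}(ξ, Ce^{−a|x|}), where J^k_∂(x) := ⋃{ J_∂(y) : d_h(x,y) ≤ k }. -/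
open SimpleGraph Metric
open scoped ENNReal ENat

namespace SBIAux

open SimpleGraph

variable {X : Type*} (R : RootedGraph X)

lemma lv_root : R.level R.root = 0 := by
  simp [RootedGraph.level]

lemma lv_le_add_dist (u v : X) : R.level v ≤ R.level u + R.G.dist u v := by
  simpa [RootedGraph.level] using R.conn.dist_triangle (u := R.root) (v := u) (w := v)

lemma dist_lv_le (u v : X) : R.level v - R.level u ≤ R.G.dist u v := by
  have := lv_le_add_dist R u v; omega

lemma mem_J_iff {x y : X} {t : ℕ} :
    y ∈ R.J t x ↔ R.level y = R.level x + t ∧ R.G.dist x y = t := Iff.rfl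

lemma mem_J_self (x : X) : x ∈ R.J 0 x := by
  rw [mem_J_iff]
  exact ⟨by omega, SimpleGraph.dist_self⟩

lemma J_comp {x y z : X} {s t : ℕ} (hy : y ∈ R.J s x) (hz : z ∈ R.J t y) :
    z ∈ R.J (s + t) x := by
  rw [mem_J_iff] at *
  obtain ⟨hy1, hy2⟩ := hy
  obtain ⟨hz1, hz2⟩ := hz
  have htr : R.G.dist x z ≤ s + t := by
    calc R.G.dist x z ≤ R.G.dist x y + R.G.dist y z := R.conn.dist_triangle
    _ = s + t := by rw [hy2, hz2]
  have hlow : R.level z - R.level x ≤ R.G.dist x z := dist_lv_le R x z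
  exact ⟨by omega, by omega⟩

/-- splits a walk: a vertex at prescribed distances. -/
lemma exists_mid {G : SimpleGraph X} {u v : X} (p : G.Walk u v) (a b : ℕ)
    (hab : p.length ≤ a + b) :
    ∃ c : X, G.edist u c ≤ a ∧ G.edist c v ≤ b := by
  induction p generalizing a with
  | nil =>
    rename_i w
    exact ⟨w, by rw [SimpleGraph.edist_self]; exact zero_le,
      by rw [SimpleGraph.edist_self]; exact zero_le⟩
  | @cons u u' w h q ih =>
    rcases Nat.eq_zero_or_pos a with ha | ha
    · refine ⟨u, by simp, ?_⟩
      have h1 : G.edist u w ≤ ((Walk.cons h q).length : ℕ∞) := SimpleGraph.edist_le _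
      refine h1.trans ?_
      exact_mod_cast by omega
    · obtain ⟨c, hc1, hc2⟩ := ih (a - 1) (by simp at hab; omega)
      refine ⟨c, ?_, hc2⟩
      calc G.edist u c ≤ G.edist u u' + G.edist u' c := SimpleGraph.edist_triangle
      _ ≤ 1 + (a - 1 : ℕ) := add_le_add (by simpa using SimpleGraph.edist_le (Walk.cons h Walk.nil)) hc1
      _ ≤ (a : ℕ∞) := by
        rw [← Nat.cast_one, ← Nat.cast_add]
        exact_mod_cast by omega

lemma J_decomp {x z : X} {s t : ℕ} (hz : z ∈ R.J (s + t) x) :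
    ∃ y, y ∈ R.J s x ∧ z ∈ R.J t y := by
  rw [mem_J_iff] at hz
  obtain ⟨hz1, hz2⟩ := hz
  obtain ⟨p, hp⟩ := R.conn.exists_walk_length_eq_dist x z
  obtain ⟨c, hc1, hc2⟩ := exists_mid p s t (by omega)
  -- convert edist bounds to dist bounds
  have hd1 : R.G.dist x c ≤ s := by
    have := SimpleGraph.Reachable.exists_walk_length_eq_edist (reachable_of_edist_ne_top
      (by intro hh; rw [hh] at hc1; exact (by simp : ¬ (⊤ : ℕ∞) ≤ (s:ℕ∞)) hc1))
    obtain ⟨w, hw⟩ := this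
    have : R.G.dist x c ≤ w.length := SimpleGraph.dist_le w
    have h2 : (w.length : ℕ∞) ≤ (s : ℕ∞) := by rw [hw]; exact hc1
    exact this.trans (by exact_mod_cast h2)
  have hd2 : R.G.dist c z ≤ t := by
    have hne : R.G.edist c z ≠ ⊤ := by intro hh; rw [hh] at hc2; exact (by simp : ¬ (⊤ : ℕ∞) ≤ (t:ℕ∞)) hc2
    obtain ⟨w, hw⟩ := SimpleGraph.Reachable.exists_walk_length_eq_edist (reachable_of_edist_ne_top hne)
    have : R.G.dist c z ≤ w.length := SimpleGraph.dist_le w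
    have h2 : (w.length : ℕ∞) ≤ (t : ℕ∞) := by rw [hw]; exact hc2
    exact this.trans (by exact_mod_cast h2)
  -- levels force equality
  have l1 : R.level c ≤ R.level x + s := by
    have := lv_le_add_dist R x c; omega
  have l2 : R.level z ≤ R.level c + t := by
    have := lv_le_add_dist R c z; omega
  have lc : R.level c = R.level x + s := by omega
  have hxc : R.G.dist x c = s := by
    have := dist_lv_le R x c; omega
  have hcz : R.G.dist c z = t := by
    have := dist_lv_le R c z; omega
  exact ⟨c, ⟨lc, hxc⟩, ⟨by omega, hcz⟩⟩

end SBIAux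
namespace SBIAux

variable {X : Type*} (R : RootedGraph X)

lemma lv_J {x y : X} {t : ℕ} (h : y ∈ R.J t x) : R.level y = R.level x + t := h.1

lemma ray_lv {f : ℕ → X} (hf : R.IsRay f) (i : ℕ) : R.level (f i) = i := by
  induction i with
  | zero => rw [hf.1]; exact lv_root R
  | succ n ih =>
    have := lv_J R (hf.2 n); omega

lemma ray_J {f : ℕ → X} (hf : R.IsRay f) (i d : ℕ) : f (i + d) ∈ R.J d (f i) := by
  induction d with
  | zero => exact mem_J_self R (f i)
  | succ n ih =>
    have h2 := hf.2 (i + n)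
    have := J_comp R ih h2
    simpa [← add_assoc] using this

/-- `z` is an ancestor of `u` at level `ℓ`. -/
def Anc (ℓ : ℕ) (u z : X) : Prop := R.level z = ℓ ∧ u ∈ R.J (R.level u - ℓ) z

lemma mem_J_root (u : X) : u ∈ R.J (R.level u) R.root := by
  rw [mem_J_iff]
  exact ⟨by rw [lv_root]; omega, rfl⟩

lemma anc_exists {u : X} {ℓ : ℕ} (hℓ : ℓ ≤ R.level u) : ∃ z, Anc R ℓ u z := by
  have h0 : u ∈ R.J (ℓ + (R.level u - ℓ)) R.root := by
    have := mem_J_root R u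
    rwa [show ℓ + (R.level u - ℓ) = R.level u by omega]
  obtain ⟨y, hy1, hy2⟩ := J_decomp R h0
  exact ⟨y, by rw [lv_J R hy1, lv_root]; omega, hy2⟩

lemma anc_comp {u z w : X} {ℓ s : ℕ} (hz : Anc R (ℓ + s) u z) (hw : Anc R ℓ z w)
    (hls : ℓ + s ≤ R.level u) : Anc R ℓ u w := by
  obtain ⟨hz1, hz2⟩ := hz
  obtain ⟨hw1, hw2⟩ := hw
  refine ⟨hw1, ?_⟩
  have := J_comp R hw2 hz2
  rwa [show R.level z - ℓ + (R.level u - (ℓ + s)) = R.level u - ℓ by omega] at this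

lemma anc_J {u z : X} {ℓ : ℕ} (h : Anc R ℓ u z) : u ∈ R.J (R.level u - ℓ) z := h.2

lemma anc_lv {u z : X} {ℓ : ℕ} (h : Anc R ℓ u z) : R.level z = ℓ := h.1

/-- dh facts -/
lemma dh_self (x : X) : R.dh x x = 0 := SimpleGraph.edist_self

lemma dh_comm (x y : X) : R.dh x y = R.dh y x := SimpleGraph.edist_comm

lemma dh_triangle (x y z : X) : R.dh x z ≤ R.dh x y + R.dh y z := SimpleGraph.edist_triangle

lemma dist_le_dh {x y : X} {D : ℕ} (h : R.dh x y ≤ D) : R.G.dist x y ≤ D := by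
  have hne : R.Gh.edist x y ≠ ⊤ := by
    intro hh; rw [RootedGraph.dh, hh] at h; exact (by simp : ¬ (⊤:ℕ∞) ≤ (D:ℕ∞)) h
  obtain ⟨w, hw⟩ := (SimpleGraph.reachable_of_edist_ne_top hne).exists_walk_length_eq_edist
  have hle : R.Gh ≤ R.G := fun a b hab => hab.1
  have h1 : R.G.dist x y ≤ (w.mapLe hle).length := SimpleGraph.dist_le _
  rw [SimpleGraph.Walk.length_map] at h1
  have h2 : (w.length : ℕ∞) ≤ (D : ℕ∞) := by rw [hw]; exact h
  exact h1.trans (by exact_mod_cast h2)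

lemma lv_eq_of_walk {x y : X} (w : R.Gh.Walk x y) : R.level x = R.level y := by
  induction w with
  | nil => rfl
  | cons h q ih => exact h.2.trans ih

lemma lv_eq_of_dh_le {x y : X} {D : ℕ} (h : R.dh x y ≤ D) : R.level x = R.level y := by
  have hne : R.Gh.edist x y ≠ ⊤ := by
    intro hh; rw [RootedGraph.dh, hh] at h; exact (by simp : ¬ (⊤:ℕ∞) ≤ (D:ℕ∞)) h
  obtain ⟨w⟩ := SimpleGraph.reachable_of_edist_ne_top hne
  exact lv_eq_of_walk R w

end SBIAux
namespace SBIAux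

variable {X : Type*} (R : RootedGraph X)

lemma J_zero_eq {u z : X} (h : u ∈ R.J 0 z) : z = u :=
  (R.conn.dist_eq_zero_iff.mp h.2)

lemma lemE (hexp : R.Expansive) :
    ∀ (t : ℕ) {u v z z' : X}, R.level u = R.level v → R.dh u v ≤ 1 →
      u ∈ R.J t z → v ∈ R.J t z' → R.dh z z' ≤ 1 := by
  intro t
  induction t with
  | zero =>
    intro u v z z' hl hd hu hv
    rw [J_zero_eq R hu, J_zero_eq R hv]
    exact hd
  | succ t ih =>
    intro u v z z' hl hd hu hv
    obtain ⟨w, hw1, hw2⟩ := J_decomp R (show u ∈ R.J (t + 1) z from hu)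
    obtain ⟨w', hw1', hw2'⟩ := J_decomp R (show v ∈ R.J (t + 1) z' from hv)
    have hlw : R.level w = R.level w' := by
      have h1 := lv_J R hw2; have h2 := lv_J R hw2'; omega
    have hdw : R.dh w w' ≤ 1 := by
      by_contra hcon
      have h1 : (1:ℕ∞) < R.dh w w' := lt_of_not_ge hcon
      exact absurd hd (not_le_of_gt (hexp w w' hlw h1 u hw2 v hw2'))
    exact ih hlw hdw hw1 hw1'

/-- two ancestors of the same vertex at the same level are `dh`-close. -/
lemma anc_close (hexp : R.Expansive) {u z z' : X} {ℓ : ℕ}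
    (hz : Anc R ℓ u z) (hz' : Anc R ℓ u z') : R.dh z z' ≤ 1 := by
  exact lemE R hexp _ rfl (by rw [dh_self]; exact zero_le) hz.2 hz'.2

variable (m k : ℕ)

lemma dep_desc (hdep : R.Departing m k) {u v z z' : X}
    (hl : R.level u = R.level v) (hd : R.dh u v ≤ ((2*k : ℕ) : ℕ∞))
    (hu : u ∈ R.J m z) (hv : v ∈ R.J m z') : R.dh z z' ≤ (k : ℕ∞) := by
  by_contra hcon
  have h1 : (k:ℕ∞) < R.dh z z' := lt_of_not_ge hcon
  have hlz : R.level z = R.level z' := by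
    have h1 := lv_J R hu; have h2 := lv_J R hv; omega
  exact absurd hd (not_le_of_gt (hdep z z' hlz h1 u hu v hv))

lemma lemW (hdep : R.Departing m k) (hk : 0 < k) (hm : 0 < m) :
    ∀ (D : ℕ) {u v z z' : X}, R.level u = R.level v → R.dh u v ≤ (D : ℕ∞) →
      u ∈ R.J m z → v ∈ R.J m z' →
      R.dh z z' ≤ ((k * max 1 ((D + (2*k-1))/(2*k)) : ℕ) : ℕ∞) := by
  intro D
  induction D using Nat.strong_induction_on with
  | _ D ih =>
    intro u v z z' hl hd hu hv
    rcases le_or_gt D (2*k) with hD | hD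
    · have h1 : R.dh u v ≤ ((2*k:ℕ):ℕ∞) := hd.trans (by exact_mod_cast hD)
      have h2 := dep_desc R m k hdep hl h1 hu hv
      refine h2.trans ?_
      have : k ≤ k * max 1 ((D + (2*k-1))/(2*k)) := Nat.le_mul_of_pos_right k (by positivity)
      exact_mod_cast this
    · -- find midpoint at horizontal distance 2k
      have hne : R.Gh.edist u v ≠ ⊤ := by
        intro hh; rw [RootedGraph.dh, hh] at hd; exact (by simp : ¬ (⊤:ℕ∞) ≤ (D:ℕ∞)) hd
      obtain ⟨w, hw⟩ := (SimpleGraph.reachable_of_edist_ne_top hne).exists_walk_length_eq_edist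
      have hwlen : w.length ≤ 2*k + (D - 2*k) := by
        have : (w.length : ℕ∞) ≤ (D:ℕ∞) := by rw [hw]; exact hd
        have := by exact_mod_cast this
        omega
      obtain ⟨c, hc1, hc2⟩ := exists_mid w (2*k) (D - 2*k) hwlen
      have hlc : R.level u = R.level c := lv_eq_of_dh_le R (show R.dh u c ≤ ((2*k:ℕ):ℕ∞) from hc1)
      have hmlec : m ≤ R.level c := by
        have := lv_J R hu; omega
      obtain ⟨ζ, hζ⟩ := anc_exists R (show R.level c - m ≤ R.level c by omega)
      have hcζ : c ∈ R.J m ζ := by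
        have := hζ.2
        rwa [show R.level c - (R.level c - m) = m by omega] at this
      have hstep1 : R.dh z ζ ≤ (k:ℕ∞) := dep_desc R m k hdep hlc hc1 hu hcζ
      have hstep2 := ih (D - 2*k) (by omega) (show R.level c = R.level v by omega)
        hc2 hcζ hv
      refine (dh_triangle R z ζ z').trans ?_
      refine (add_le_add hstep1 hstep2).trans ?_
      rw [← Nat.cast_add]
      have harith : k + k * max 1 ((D - 2*k + (2*k-1))/(2*k)) ≤ k * max 1 ((D + (2*k-1))/(2*k)) := by
        set q := (D + (2*k-1))/(2*k) with hqdef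
        have hq : (D - 2*k + (2*k-1))/(2*k) = q - 1 := by
          have h0 : D + (2*k-1) = (D - 2*k + (2*k-1)) + 1*(2*k) := by omega
          rw [hqdef, h0, Nat.add_mul_div_right _ _ (by omega : 0 < 2*k)]
          exact (Nat.add_sub_cancel _ _).symm
        have hge1 : 1 ≤ (D - 2*k + (2*k-1))/(2*k) := by
          rw [Nat.one_le_div_iff (by omega : 0 < 2*k)]; omega
        have hge2 : 2 ≤ q := by omega
        rw [hq, max_eq_right (by omega : 1 ≤ q - 1), max_eq_right (by omega : 1 ≤ q)]
        have hqq : k * (q - 1) + k = k * q := by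
          rw [← Nat.mul_succ]; congr 1; omega
        omega
      exact_mod_cast harith

end SBIAux
namespace SBIAux

variable {X : Type*} (R : RootedGraph X) (m k : ℕ)

lemma growth (hdep : R.Departing m k) (hk : 0 < k) (hm : 0 < m)
    {f g : ℕ → X} (hf : R.IsRay f) (hg : R.IsRay g) {n : ℕ}
    (hsep : ((2*k+1 : ℕ) : ℕ∞) ≤ R.dh (f n) (g n)) :
    ∀ r : ℕ, ((2*k + 2^r : ℕ) : ℕ∞) ≤ R.dh (f (n + r*m)) (g (n + r*m)) := by
  intro r
  induction r with
  | zero => simpa using hsep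
  | succ r ih =>
    by_contra hcon
    have hlt : R.dh (f (n + (r+1)*m)) (g (n + (r+1)*m)) < ((2*k + 2^(r+1) : ℕ) : ℕ∞) :=
      lt_of_not_ge hcon
    have hne : R.dh (f (n + (r+1)*m)) (g (n + (r+1)*m)) ≠ ⊤ := by
      intro hh; rw [hh] at hlt; exact (by simp : ¬ (⊤:ℕ∞) < ((2*k + 2^(r+1) : ℕ) : ℕ∞)) hlt
    have hpow : (2:ℕ)^(r+1) = 2*2^r := by ring
    set D : ℕ := 2*k + 2^(r+1) - 1 with hDdef
    have hd : R.dh (f (n + (r+1)*m)) (g (n + (r+1)*m)) ≤ (D : ℕ∞) := by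
      lift R.dh (f (n + (r+1)*m)) (g (n + (r+1)*m)) to ℕ using hne with d hd
      have hlt2 : d < 2*k + 2^(r+1) := by exact_mod_cast hlt
      exact_mod_cast (by omega : d ≤ 2*k + 2^(r+1) - 1)
    have hmemf : f (n + (r+1)*m) ∈ R.J m (f (n + r*m)) := by
      have := ray_J R hf (n + r*m) m
      rwa [show n + r*m + m = n + (r+1)*m by ring] at this
    have hmemg : g (n + (r+1)*m) ∈ R.J m (g (n + r*m)) := by
      have := ray_J R hg (n + r*m) m
      rwa [show n + r*m + m = n + (r+1)*m by ring] at this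
    have hlv : R.level (f (n + (r+1)*m)) = R.level (g (n + (r+1)*m)) := by
      rw [ray_lv R hf, ray_lv R hg]
    have hW := lemW R m k hdep hk hm D hlv hd hmemf hmemg
    have hub : k * max 1 ((D + (2*k-1))/(2*k)) ≤ 2*k + 2^r - 1 := by
      have hq : (D + (2*k-1))/(2*k) ≤ (4*k + 2^(r+1) - 2)/(2*k) := by
        apply Nat.div_le_div_right; omega
      have h2 : k * ((4*k + 2^(r+1) - 2)/(2*k)) ≤ (4*k + 2^(r+1) - 2)/2 := by
        have h3 : 2 * (k * ((4*k + 2^(r+1) - 2)/(2*k))) ≤ 4*k + 2^(r+1) - 2 := by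
          rw [← mul_assoc]
          exact Nat.mul_div_le _ _
        omega
      have h4 : (4*k + 2^(r+1) - 2)/2 = 2*k + 2^r - 1 := by
        have h5 : 4*k + 2^(r+1) - 2 = 2*(2*k + 2^r - 1) := by omega
        rw [h5, Nat.mul_div_cancel_left _ (by omega : 0 < 2)]
      have hmax : max 1 ((D + (2*k-1))/(2*k)) ≤ (4*k + 2^(r+1) - 2)/(2*k) ∨
          max 1 ((D + (2*k-1))/(2*k)) = 1 := by
        rcases max_cases 1 ((D + (2*k-1))/(2*k)) with ⟨h,_⟩|⟨h,_⟩
        · right; exact h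
        · left; rw [h]; exact hq
      rcases hmax with h | h
      · calc k * max 1 ((D + (2*k-1))/(2*k)) ≤ k * ((4*k + 2^(r+1) - 2)/(2*k)) :=
            Nat.mul_le_mul_left _ h
        _ ≤ (4*k + 2^(r+1) - 2)/2 := h2
        _ = 2*k + 2^r - 1 := h4
      · rw [h]
        have : 1 ≤ 2^r := Nat.one_le_two_pow
        omega
    have : R.dh (f (n + r*m)) (g (n + r*m)) ≤ ((2*k + 2^r - 1 : ℕ) : ℕ∞) :=
      hW.trans (by exact_mod_cast hub)
    have hcontra := le_trans ih this
    have : (2*k + 2^r : ℕ) ≤ (2*k + 2^r - 1 : ℕ) := by exact_mod_cast hcontra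
    have h1 : 1 ≤ 2^r := Nat.one_le_two_pow
    omega

end SBIAux
namespace SBIAux

open SimpleGraph Finset

variable {X : Type*} (R : RootedGraph X)

/-- the weight of level `t` relative to base level `ℓ` (graded by `m`). -/
noncomputable def wt (m ℓ t : ℕ) : ℝ := (2⁻¹ : ℝ)^((t - (ℓ + 2*m))/m)

lemma wt_pos (m ℓ t : ℕ) : 0 < wt m ℓ t := by rw [wt]; positivity

lemma wt_le_one (m ℓ t : ℕ) : wt m ℓ t ≤ 1 := by
  rw [wt]; exact pow_le_one₀ (by norm_num) (by norm_num)

lemma wt_band {m ℓ t : ℕ} (hm : 0 < m) (h : t < ℓ + 3*m) : wt m ℓ t = 1 := by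
  rw [wt, Nat.div_eq_of_lt (by omega), pow_zero]

lemma wt_shift {m ℓ t : ℕ} (hm : 0 < m) (h : ℓ + 3*m ≤ t) :
    wt m (ℓ + m) t = 2 * wt m ℓ t := by
  rw [wt, wt]
  have h1 : t - (ℓ + 2*m) = (t - (ℓ + m + 2*m)) + m := by omega
  rw [h1, Nat.add_div_right _ hm, pow_succ]
  ring

/-- budget function. -/
noncomputable def Bf (m ℓ μ : ℕ) : ℝ :=
  ((4*m + 2*(m - 1 - (μ - (ℓ + 2*m)) % m) : ℕ) : ℝ) * (2⁻¹ : ℝ)^((μ - (ℓ + 2*m))/m)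

lemma Bf_nonneg (m ℓ μ : ℕ) : 0 ≤ Bf m ℓ μ := by
  rw [Bf]; positivity

lemma Bf_le (m ℓ μ : ℕ) : Bf m ℓ μ ≤ 6*m := by
  rw [Bf]
  calc ((4*m + 2*(m - 1 - (μ - (ℓ + 2*m)) % m) : ℕ) : ℝ) * (2⁻¹ : ℝ)^((μ - (ℓ + 2*m))/m)
      ≤ ((6*m : ℕ) : ℝ) * 1 := by
        apply mul_le_mul
        · exact_mod_cast (by omega : (4*m + 2*(m - 1 - (μ - (ℓ + 2*m)) % m) : ℕ) ≤ 6*m)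
        · exact pow_le_one₀ (by norm_num) (by norm_num)
        · positivity
        · positivity
  _ = 6*(m:ℝ) := by push_cast; ring

lemma Bf_step {m ℓ t : ℕ} (hm : 0 < m) (ht : ℓ + 2*m ≤ t) :
    2 * wt m ℓ t + Bf m ℓ (t+1) ≤ Bf m ℓ t := by
  have he : t - (ℓ + 2*m) = t - (ℓ + 2*m) := rfl
  set e := t - (ℓ + 2*m) with he
  have he1 : t + 1 - (ℓ + 2*m) = e + 1 := by omega
  have h0 := Nat.div_add_mod e m
  have hmlt := Nat.mod_lt e hm
  rcases Nat.lt_or_ge (e % m) (m - 1) with hs | hs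
  · -- no boundary : same quotient, mod increments
    have hsplit : e + 1 = m*(e/m) + (e % m + 1) := by omega
    have hd : (e+1)/m = e/m := by
      rw [hsplit, Nat.mul_add_div hm, Nat.div_eq_of_lt (by omega : e % m + 1 < m)]
      simp
    have hmod : (e+1) % m = e % m + 1 := by
      rw [hsplit, Nat.mul_add_mod, Nat.mod_eq_of_lt (by omega : e % m + 1 < m)]
    rw [Bf, Bf, wt, ← he, he1, hd, hmod]
    set P := (2⁻¹:ℝ)^(e/m) with hP
    have hPpos : 0 < P := by rw [hP]; positivity
    have hcoef : (4*m + 2*(m - 1 - (e % m + 1)) : ℕ) + 2 ≤ (4*m + 2*(m - 1 - e % m) : ℕ) := by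
      omega
    have hcast : ((4*m + 2*(m - 1 - (e % m + 1)) : ℕ) : ℝ) + 2 ≤ ((4*m + 2*(m - 1 - e % m) : ℕ) : ℝ) := by
      exact_mod_cast hcoef
    nlinarith
  · -- boundary : e % m = m - 1
    have hsm : e % m = m - 1 := by omega
    have hsplit : e + 1 = m*(e/m + 1) := by
      have hmm1 : m*(e/m + 1) = m*(e/m) + m := by ring
      omega
    have hd : (e+1)/m = e/m + 1 := by
      rw [hsplit, Nat.mul_div_cancel_left _ hm]
    have hmod : (e+1) % m = 0 := by
      rw [hsplit, Nat.mul_mod_right]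
    rw [Bf, Bf, wt, ← he, he1, hd, hmod, hsm]
    rw [pow_succ]
    set P := (2⁻¹:ℝ)^(e/m) with hP
    have hPpos : 0 < P := by rw [hP]; positivity
    have hn1 : (4*m + 2*(m - 1 - 0) : ℕ) = 6*m - 2 := by omega
    have hc1 : ((4*m + 2*(m - 1 - 0) : ℕ) : ℝ) = 6*(m:ℝ) - 2 := by
      rw [hn1, Nat.cast_sub (by omega : 2 ≤ 6*m)]
      push_cast; ring
    have hn2 : (4*m + 2*(m - 1 - (m-1)) : ℕ) = 4*m := by omega
    have hc2 : ((4*m + 2*(m - 1 - (m-1)) : ℕ) : ℝ) = 4*(m:ℝ) := by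
      rw [hn2]; push_cast; ring
    rw [hc1, hc2]
    have hm1 : (1:ℝ) ≤ (m:ℝ) := by exact_mod_cast hm
    nlinarith

lemma sum_wt_le {m ℓ μ : ℕ} (hm : 0 < m) (hμ : ℓ + 2*m ≤ μ) (x : ℕ) :
    2 * ∑ t ∈ Finset.Ico μ x, wt m ℓ t ≤ Bf m ℓ μ := by
  rcases le_or_gt x μ with h | h
  · rw [Finset.Ico_eq_empty (by omega)]
    simpa using Bf_nonneg m ℓ μ
  · have key : ∀ y : ℕ, μ ≤ y → 2 * ∑ t ∈ Finset.Ico μ y, wt m ℓ t + Bf m ℓ y ≤ Bf m ℓ μ := by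
      intro y hy
      induction y, hy using Nat.le_induction with
      | base => simp
      | succ y hy ih =>
        rw [Finset.sum_Ico_succ_top hy]
        have := Bf_step (m := m) (ℓ := ℓ) (t := y) hm (by omega : ℓ + 2*m ≤ y)
        nlinarith
    have h1 := key x (by omega)
    have h2 := Bf_nonneg m ℓ x
    linarith

/-- level-based sum `G_μ(x)`. -/
noncomputable def Gs (m ℓ μ x : ℕ) : ℝ := ∑ t ∈ Finset.Ico μ x, (1 - wt m ℓ t)

lemma Gs_nonneg (m ℓ μ x : ℕ) : 0 ≤ Gs m ℓ μ x :=
  Finset.sum_nonneg (fun t _ => by nlinarith [wt_le_one m ℓ t])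

lemma Gs_split_bot {m ℓ μ x : ℕ} (h : μ < x) :
    Gs m ℓ μ x = (1 - wt m ℓ μ) + Gs m ℓ (μ+1) x := by
  rw [Gs, Gs]
  exact Finset.sum_eq_sum_Ico_succ_bot h _

lemma Gs_split_top {m ℓ μ x : ℕ} (h : μ ≤ x) :
    Gs m ℓ μ (x+1) = Gs m ℓ μ x + (1 - wt m ℓ x) := by
  rw [Gs, Gs, Finset.sum_Ico_succ_top h]

lemma Gs_ge {m ℓ μ x : ℕ} (hm : 0 < m) (hμ : ℓ + 2*m ≤ μ) (h : μ ≤ x) :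
    ((x:ℝ) - μ) - Bf m ℓ μ / 2 ≤ Gs m ℓ μ x := by
  have hsum := sum_wt_le (μ := μ) hm hμ x
  have hcard : Gs m ℓ μ x = ((x:ℝ) - μ) - ∑ t ∈ Finset.Ico μ x, wt m ℓ t := by
    rw [Gs, Finset.sum_sub_distrib]
    congr 1
    rw [Finset.sum_const, Nat.card_Ico, nsmul_eq_mul, mul_one, Nat.cast_sub h]
  rw [hcard]
  linarith

end SBIAux
namespace SBIAux

open SimpleGraph Finset

variable {X : Type*} (R : RootedGraph X)

lemma lv_adj {a b : X} (h : R.G.Adj a b) :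
    R.level b ≤ R.level a + 1 ∧ R.level a ≤ R.level b + 1 := by
  have hd : R.G.dist a b = 1 := by
    rw [SimpleGraph.dist_eq_one_iff_adj]; exact h
  have hd' : R.G.dist b a = 1 := by rw [SimpleGraph.dist_comm]; exact hd
  constructor
  · have := lv_le_add_dist R a b; omega
  · have := lv_le_add_dist R b a; omega

/-- total weight of a walk. -/
noncomputable def Wt (m ℓ : ℕ) {u v : X} (w : R.G.Walk u v) : ℝ :=
  (w.darts.map (fun d => wt m ℓ (min (R.level d.fst) (R.level d.snd)))).sum

lemma Wt_nil (m ℓ : ℕ) {u : X} : Wt R m ℓ (Walk.nil : R.G.Walk u u) = 0 := by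
  rw [Wt]; simp

lemma Wt_cons (m ℓ : ℕ) {u b v : X} (h : R.G.Adj u b) (q : R.G.Walk b v) :
    Wt R m ℓ (Walk.cons h q) = wt m ℓ (min (R.level u) (R.level b)) + Wt R m ℓ q := by
  rw [Wt, Wt, SimpleGraph.Walk.darts_cons, List.map_cons, List.sum_cons]

lemma Wt_append (m ℓ : ℕ) {u b v : X} (p : R.G.Walk u b) (q : R.G.Walk b v) :
    Wt R m ℓ (p.append q) = Wt R m ℓ p + Wt R m ℓ q := by
  rw [Wt, Wt, Wt, SimpleGraph.Walk.darts_append, List.map_append, List.sum_append]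

lemma Wt_nonneg (m ℓ : ℕ) {u v : X} (w : R.G.Walk u v) : 0 ≤ Wt R m ℓ w := by
  rw [Wt]
  apply List.sum_nonneg
  intro x hx
  simp only [List.mem_map] at hx
  obtain ⟨d, _, rfl⟩ := hx
  exact (wt_pos _ _ _).le

lemma Wt_shift (m ℓ : ℕ) (hm : 0 < m) {u v : X} (w : R.G.Walk u v)
    (hh : ∀ x ∈ w.support, ℓ + 3*m ≤ R.level x) :
    Wt R m (ℓ + m) w = 2 * Wt R m ℓ w := by
  induction w with
  | nil => rw [Wt_nil, Wt_nil]; ring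
  | cons h q ih =>
    rename_i a b c
    rw [Wt_cons, Wt_cons, ih (fun x hx => hh x (by rw [SimpleGraph.Walk.support_cons]; exact List.mem_cons_of_mem _ hx))]
    have ha : ℓ + 3*m ≤ R.level a := hh a (SimpleGraph.Walk.start_mem_support _)
    have hb : ℓ + 3*m ≤ R.level b := hh b (by rw [SimpleGraph.Walk.support_cons]; exact List.mem_cons_of_mem _ (SimpleGraph.Walk.start_mem_support _))
    rw [wt_shift hm (by omega : ℓ + 3*m ≤ min (R.level a) (R.level b))]
    ring

lemma claimT (m ℓ : ℕ) (hm : 0 < m) :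
    ∀ {a v : X} (w : R.G.Walk a v) (μ : ℕ), ℓ + 2*m ≤ μ →
      (∀ x ∈ w.support, μ ≤ R.level x) → (∃ x ∈ w.support, R.level x = μ) →
      Wt R m ℓ w + Gs m ℓ μ (R.level a) + Gs m ℓ μ (R.level v)
        ≤ (w.length : ℝ) + Bf m ℓ μ := by
  intro a v w
  induction w with
  | nil =>
    intro μ hμ hbound hatt
    obtain ⟨x, hx, hlx⟩ := hatt
    rw [SimpleGraph.Walk.support_nil, List.mem_singleton] at hx
    subst hx
    rw [Wt_nil, hlx, Gs, Finset.Ico_self, Finset.sum_empty]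
    simpa using Bf_nonneg m ℓ μ
  | cons h q ih =>
    rename_i a b c
    intro μ hμ hbound hatt
    have hsub : ∀ x ∈ q.support, μ ≤ R.level x := fun x hx =>
      hbound x (by rw [SimpleGraph.Walk.support_cons]; exact List.mem_cons_of_mem _ hx)
    have hbq : b ∈ q.support := SimpleGraph.Walk.start_mem_support _
    have hlvb : μ ≤ R.level b := hsub b hbq
    have hlva : μ ≤ R.level a := hbound a (SimpleGraph.Walk.start_mem_support _)
    have hlvv : μ ≤ R.level c := hsub c (SimpleGraph.Walk.end_mem_support _)
    have hadj := lv_adj R h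
    rw [Wt_cons, SimpleGraph.Walk.length_cons]
    push_cast
    by_cases hattq : ∃ x ∈ q.support, R.level x = μ
    · have IH := ih μ hμ hsub hattq
      rcases Nat.lt_trichotomy (R.level a) (R.level b) with hc | hc | hc
      · -- up step
        have hba : R.level b = R.level a + 1 := by omega
        have hmin : min (R.level a) (R.level b) = R.level a := by omega
        have hGs : Gs m ℓ μ (R.level b) = Gs m ℓ μ (R.level a) + (1 - wt m ℓ (R.level a)) := by
          rw [hba]; exact Gs_split_top hlva
        rw [hmin]
        rw [hGs] at IH
        have := wt_le_one m ℓ (R.level a)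
        linarith
      · -- horizontal step
        have hmin : min (R.level a) (R.level b) = R.level a := by omega
        rw [hmin]
        rw [← hc] at IH
        have := wt_le_one m ℓ (R.level a)
        linarith
      · -- down step
        have hab : R.level a = R.level b + 1 := by omega
        have hmin : min (R.level a) (R.level b) = R.level b := by omega
        have hGs : Gs m ℓ μ (R.level a) = Gs m ℓ μ (R.level b) + (1 - wt m ℓ (R.level b)) := by
          rw [hab]; exact Gs_split_top hlvb
        rw [hmin, hGs]
        linarith
    · -- the minimum is attained only at `a`
      push_neg at hattq
      have hq1 : ∀ x ∈ q.support, μ + 1 ≤ R.level x := by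
        intro x hx
        have h1 := hsub x hx
        have h2 := hattq x hx
        omega
      have hlaμ : R.level a = μ := by
        obtain ⟨x, hx, hlx⟩ := hatt
        rw [SimpleGraph.Walk.support_cons, List.mem_cons] at hx
        rcases hx with rfl | hx
        · exact hlx
        · exact absurd hlx (hattq x hx)
      have hlbμ : R.level b = μ + 1 := by
        have := hq1 b hbq; omega
      have IH := ih (μ+1) (by omega) hq1 ⟨b, hbq, hlbμ⟩
      have hmin : min (R.level a) (R.level b) = μ := by omega
      rw [hmin, hlaμ]
      rw [hlbμ] at IH
      rw [Gs, Finset.Ico_self, Finset.sum_empty] at IH ⊢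
      have hGv : Gs m ℓ μ (R.level c) = (1 - wt m ℓ μ) + Gs m ℓ (μ+1) (R.level c) :=
        Gs_split_bot (by have := hq1 c (SimpleGraph.Walk.end_mem_support _); omega)
      rw [hGv]
      have hBstep := Bf_step (m := m) (ℓ := ℓ) (t := μ) hm hμ
      have := wt_pos m ℓ μ
      linarith
end SBIAux
namespace SBIAux

open SimpleGraph Finset

variable {X : Type*} (R : RootedGraph X)

lemma walk_split (P : X → Prop) :
    ∀ {u v : X} (w : R.G.Walk u v), P u → (∃ x ∈ w.support, ¬ P x) →
      ∃ (q' qv : X) (w₁ : R.G.Walk u q') (e : R.G.Adj q' qv) (w₂ : R.G.Walk qv v),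
        w = w₁.append (Walk.cons e w₂) ∧ (∀ x ∈ w₁.support, P x) ∧ ¬ P qv := by
  intro u v w
  induction w with
  | nil =>
    intro hPu hex
    obtain ⟨x, hx, hnx⟩ := hex
    rw [SimpleGraph.Walk.support_nil, List.mem_singleton] at hx
    subst hx
    exact absurd hPu hnx
  | cons h q ih =>
    rename_i a b c
    intro hPu hex
    by_cases hPb : P b
    · have hex' : ∃ x ∈ q.support, ¬ P x := by
        obtain ⟨x, hx, hnx⟩ := hex
        rw [SimpleGraph.Walk.support_cons, List.mem_cons] at hx
        rcases hx with rfl | hx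
        · exact absurd hPu hnx
        · exact ⟨x, hx, hnx⟩
      obtain ⟨q', qv, w₁, e, w₂, heq, hall, hnq⟩ := ih hPb hex'
      refine ⟨q', qv, Walk.cons h w₁, e, w₂, ?_, ?_, hnq⟩
      · rw [SimpleGraph.Walk.cons_append, heq]
      · intro x hx
        rw [SimpleGraph.Walk.support_cons, List.mem_cons] at hx
        rcases hx with rfl | hx
        · exact hPu
        · exact hall x hx
    · refine ⟨a, b, Walk.nil, h, q, ?_, ?_, hPb⟩
      · rw [SimpleGraph.Walk.nil_append]
      · intro x hx
        rw [SimpleGraph.Walk.support_nil, List.mem_singleton] at hx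
        subst hx; exact hPu

variable (m k : ℕ)

/-- upper bound on the contraction constant of `lemW`, in `ℝ`. -/
lemma lemW_bound_real (hk : 0 < k) (D : ℕ) :
    ((k * max 1 ((D + (2*k-1))/(2*k)) : ℕ) : ℝ) ≤ (D:ℝ)/2 + k := by
  rcases max_cases 1 ((D + (2*k-1))/(2*k)) with ⟨hmx, _⟩ | ⟨hmx, _⟩
  · rw [hmx]
    have : (0:ℝ) ≤ (D:ℝ) := by positivity
    push_cast
    linarith
  · rw [hmx]
    have h1 : 2*k * ((D + (2*k-1))/(2*k)) ≤ D + (2*k-1) := Nat.mul_div_le _ _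
    have h2 : ((2*k * ((D + (2*k-1))/(2*k)) : ℕ) : ℝ) ≤ ((D + (2*k-1) : ℕ) : ℝ) := by
      exact_mod_cast h1
    have h3 : ((2*k-1 : ℕ):ℝ) ≤ 2*(k:ℝ) := by
      exact_mod_cast (by omega : (2*k-1:ℕ) ≤ 2*k)
    push_cast at h2 ⊢
    have hk1 : (1:ℝ) ≤ (k:ℝ) := by exact_mod_cast hk
    linarith

lemma claimR (hexp : R.Expansive) (hdep : R.Departing m k) (hk : 0 < k) (hm : 0 < m) :
    ∀ (L : ℕ), ∀ (Bd ℓ : ℕ), ∀ {u v : X} (w : R.G.Walk u v), w.length ≤ L →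
      R.level u ≤ ℓ + 2*m + Bd →
      (∀ x ∈ w.support, ℓ + 2*m ≤ R.level x) →
      ∀ {z z' : X}, Anc R ℓ u z → Anc R ℓ v z' →
      ∃ D : ℕ, R.dh z z' ≤ (D:ℕ∞) ∧
        (D:ℝ) ≤ (2*(k:ℝ)+4) + (2*(k:ℝ)+5) * Wt R m ℓ w := by
  intro L
  induction L using Nat.strong_induction_on with
  | _ L IHL =>
  intro Bd
  induction Bd using Nat.strong_induction_on with
  | _ Bd IHB =>
  intro ℓ u v w hlen hBd hlow z z' hz hz'
  cases w with
  | nil =>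
    refine ⟨1, anc_close R hexp hz hz', ?_⟩
    rw [Wt_nil]
    have hkr : (0:ℝ) ≤ (k:ℝ) := by positivity
    push_cast
    linarith
  | cons h q =>
    rename_i b
    -- u -- b , q : walk from b to v
    have hlowq : ∀ x ∈ q.support, ℓ + 2*m ≤ R.level x := fun x hx =>
      hlow x (by rw [SimpleGraph.Walk.support_cons]; exact List.mem_cons_of_mem _ hx)
    have hlvu : ℓ + 2*m ≤ R.level u := hlow u (SimpleGraph.Walk.start_mem_support _)
    have hlvb : ℓ + 2*m ≤ R.level b := hlowq b (SimpleGraph.Walk.start_mem_support _)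
    have hadj := lv_adj R h
    by_cases hub : R.level u < ℓ + 3*m
    · -- band peel
      have hζ : ∃ ζ, Anc R ℓ b ζ ∧ R.dh z ζ ≤ 1 := by
        rcases Nat.lt_trichotomy (R.level u) (R.level b) with hc | hc | hc
        · -- up step : b ∈ J 1 u
          have hJ : b ∈ R.J 1 u := by
            rw [mem_J_iff]
            exact ⟨by omega, by rw [SimpleGraph.dist_eq_one_iff_adj]; exact h⟩
          refine ⟨z, ⟨hz.1, ?_⟩, by rw [dh_self]; exact zero_le⟩
          have := J_comp R hz.2 hJ
          rwa [show R.level u - ℓ + 1 = R.level b - ℓ by omega] at this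
        · -- horizontal step
          obtain ⟨ζ, hζ⟩ := anc_exists R (show ℓ ≤ R.level b by omega)
          refine ⟨ζ, hζ, ?_⟩
          have hdub : R.dh u b ≤ 1 := by
            have : R.Gh.Adj u b := ⟨h, hc⟩
            have h1 : R.Gh.edist u b ≤ (Walk.cons this Walk.nil).length := SimpleGraph.edist_le _
            simpa [RootedGraph.dh] using h1
          refine lemE R hexp (R.level u - ℓ) hc hdub hz.2 ?_
          have := hζ.2
          rwa [show R.level b - ℓ = R.level u - ℓ by omega] at this
        · -- down step : u ∈ J 1 b
          have hJ : u ∈ R.J 1 b := by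
            rw [mem_J_iff]
            refine ⟨by omega, ?_⟩
            rw [SimpleGraph.dist_comm, SimpleGraph.dist_eq_one_iff_adj]
            exact h
          obtain ⟨ζ, hζ⟩ := anc_exists R (show ℓ ≤ R.level b by omega)
          have hζu : Anc R ℓ u ζ := by
            refine ⟨hζ.1, ?_⟩
            have := J_comp R hζ.2 hJ
            rwa [show R.level b - ℓ + 1 = R.level u - ℓ by omega] at this
          exact ⟨ζ, hζ, anc_close R hexp hz hζu⟩
      obtain ⟨ζ, hζb, hdzζ⟩ := hζ
      obtain ⟨D₂, hD₂, hD₂b⟩ := IHL q.length (by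
          have := SimpleGraph.Walk.length_cons h q; omega) (R.level b) ℓ q le_rfl
        (by omega) hlowq hζb hz'
      refine ⟨1 + D₂, ?_, ?_⟩
      · calc R.dh z z' ≤ R.dh z ζ + R.dh ζ z' := dh_triangle R z ζ z'
        _ ≤ 1 + (D₂ : ℕ∞) := add_le_add hdzζ hD₂
        _ = ((1 + D₂ : ℕ) : ℕ∞) := by push_cast; rfl
      · rw [Wt_cons]
        have hω : wt m ℓ (min (R.level u) (R.level b)) = 1 :=
          wt_band hm (by omega)
        rw [hω]
        have hkr : (0:ℝ) ≤ (k:ℝ) := by positivity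
        push_cast
        linarith
    · -- u is high
      set w' : R.G.Walk u v := Walk.cons h q with hw'
      by_cases hall : ∀ x ∈ w'.support, ℓ + 3*m ≤ R.level x
      · -- case A : contract through level ℓ + m
        have hBdm : m ≤ Bd := by omega
        have hlvv : ℓ + 3*m ≤ R.level v := hall v (SimpleGraph.Walk.end_mem_support _)
        obtain ⟨α', hα'⟩ := anc_exists R (show ℓ + m ≤ R.level u by omega)
        obtain ⟨β', hβ'⟩ := anc_exists R (show ℓ + m ≤ R.level v by omega)
        obtain ⟨D', hD', hD'b⟩ := IHB (Bd - m) (by omega) (ℓ + m) w' hlen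
          (by omega) (fun x hx => by have := hall x hx; omega) hα' hβ'
        rw [Wt_shift R m ℓ hm w' hall] at hD'b
        obtain ⟨ζ, hζ⟩ := anc_exists R (show ℓ ≤ R.level α' by rw [hα'.1]; omega)
        obtain ⟨ζ', hζ'⟩ := anc_exists R (show ℓ ≤ R.level β' by rw [hβ'.1]; omega)
        have hαζ : α' ∈ R.J m ζ := by
          have := hζ.2
          rwa [show R.level α' - ℓ = m by rw [hα'.1]; omega] at this
        have hβζ' : β' ∈ R.J m ζ' := by
          have := hζ'.2
          rwa [show R.level β' - ℓ = m by rw [hβ'.1]; omega] at this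
        have hlvαβ : R.level α' = R.level β' := by rw [hα'.1, hβ'.1]
        have hW := lemW R m k hdep hk hm D' hlvαβ hD' hαζ hβζ'
        -- z and ζ are both ancestors of u at level ℓ
        have hζα : Anc R ℓ α' ζ := hζ
        have hζu : Anc R ℓ u ζ := by
          have h2 : Anc R (ℓ + m) u α' := hα'
          exact anc_comp R h2 hζα (by omega)
        have hζ'v : Anc R ℓ v ζ' := anc_comp R hβ' hζ' (by omega)
        have h1 : R.dh z ζ ≤ 1 := anc_close R hexp hz hζu
        have h2 : R.dh ζ' z' ≤ 1 := anc_close R hexp hζ'v hz'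
        refine ⟨1 + (k * max 1 ((D' + (2*k-1))/(2*k))) + 1, ?_, ?_⟩
        · calc R.dh z z' ≤ R.dh z ζ + R.dh ζ z' := dh_triangle R z ζ z'
          _ ≤ R.dh z ζ + (R.dh ζ ζ' + R.dh ζ' z') := by
              exact add_le_add le_rfl (dh_triangle R ζ ζ' z')
          _ ≤ 1 + (((k * max 1 ((D' + (2*k-1))/(2*k)) : ℕ) : ℕ∞) + 1) :=
              add_le_add h1 (add_le_add hW h2)
          _ = ((1 + (k * max 1 ((D' + (2*k-1))/(2*k))) + 1 : ℕ) : ℕ∞) := by push_cast; ring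
        · have hWb := lemW_bound_real k hk D'
          have hWtnn := Wt_nonneg R m ℓ w'
          push_cast
          push_cast at hWb hD'b
          nlinarith
      · -- split at the first vertex below ℓ + 3m
        push_neg at hall
        obtain ⟨q', qv, w₁, e, w₂, heq, hPall, hnq⟩ :=
          walk_split R (fun x => ℓ + 3*m ≤ R.level x) w' (by omega) (by
            obtain ⟨x, hx, hnx⟩ := hall
            exact ⟨x, hx, by omega⟩)
        have hlowsub : ∀ x ∈ w₁.support, ℓ + 2*m ≤ R.level x := by
          intro x hx
          refine hlow x ?_
          rw [show ((Walk.cons h q).support) = w'.support from rfl, heq]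
          exact SimpleGraph.Walk.subset_support_append_left _ _ hx
        have hlow₂ : ∀ x ∈ w₂.support, ℓ + 2*m ≤ R.level x := by
          intro x hx
          refine hlow x ?_
          rw [show ((Walk.cons h q).support) = w'.support from rfl, heq]
          refine SimpleGraph.Walk.subset_support_append_right _ _ ?_
          rw [SimpleGraph.Walk.support_cons]
          exact List.mem_cons_of_mem _ hx
        have hlq' : ℓ + 3*m ≤ R.level q' := hPall q' (SimpleGraph.Walk.end_mem_support _)
        have hlqv1 : R.level qv < ℓ + 3*m := by omega
        have hlqv2 : ℓ + 2*m ≤ R.level qv := by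
          refine hlow₂ qv (SimpleGraph.Walk.start_mem_support _)
        have hadje := lv_adj R e
        have hdown : R.level q' = R.level qv + 1 := by omega
        -- ancestors
        obtain ⟨ζ₁, hζ₁⟩ := anc_exists R (show ℓ ≤ R.level q' by omega)
        obtain ⟨ζ₂, hζ₂⟩ := anc_exists R (show ℓ ≤ R.level qv by omega)
        -- ζ₂ is an ancestor of q' as well
        have hJe : q' ∈ R.J 1 qv := by
          rw [mem_J_iff]
          refine ⟨by omega, ?_⟩
          rw [SimpleGraph.dist_comm, SimpleGraph.dist_eq_one_iff_adj]
          exact e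
        have hζ₂q' : Anc R ℓ q' ζ₂ := by
          refine ⟨hζ₂.1, ?_⟩
          have := J_comp R hζ₂.2 hJe
          rwa [show R.level qv - ℓ + 1 = R.level q' - ℓ by omega] at this
        have hstep : R.dh ζ₁ ζ₂ ≤ 1 := anc_close R hexp hζ₁ hζ₂q'
        -- lengths
        have hlens : w₁.length + 1 + w₂.length = w'.length := by
          rw [heq, SimpleGraph.Walk.length_append, SimpleGraph.Walk.length_cons]
          ring
        have hlw' : w'.length ≤ L := hlen
        obtain ⟨D₁, hD₁, hD₁b⟩ := IHL w₁.length (by omega) (R.level u) ℓ w₁ le_rfl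
          (by omega) hlowsub hz hζ₁
        obtain ⟨D₂, hD₂, hD₂b⟩ := IHL w₂.length (by omega) (R.level qv) ℓ w₂ le_rfl
          (by omega) hlow₂ hζ₂ hz'
        refine ⟨D₁ + 1 + D₂, ?_, ?_⟩
        · calc R.dh z z' ≤ R.dh z ζ₁ + R.dh ζ₁ z' := dh_triangle R z ζ₁ z'
          _ ≤ R.dh z ζ₁ + (R.dh ζ₁ ζ₂ + R.dh ζ₂ z') := by
              exact add_le_add le_rfl (dh_triangle R ζ₁ ζ₂ z')
          _ ≤ (D₁ : ℕ∞) + (1 + (D₂ : ℕ∞)) := add_le_add hD₁ (add_le_add hstep hD₂)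
          _ = ((D₁ + 1 + D₂ : ℕ) : ℕ∞) := by push_cast; ring
        · have hWteq : Wt R m ℓ w' = Wt R m ℓ w₁ + (wt m ℓ (min (R.level q') (R.level qv)) + Wt R m ℓ w₂) := by
            rw [heq, Wt_append, Wt_cons]
          have hω : wt m ℓ (min (R.level q') (R.level qv)) = 1 :=
            wt_band hm (by omega)
          rw [show Wt R m ℓ (Walk.cons h q) = Wt R m ℓ w' from rfl, hWteq, hω]
          have hkr : (0:ℝ) ≤ (k:ℝ) := by positivity
          push_cast
          linarith

end SBIAux
namespace SBIAux

open SimpleGraph Finset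

lemma sq_le_two_pow : ∀ p : ℕ, 4 ≤ p → p^2 ≤ 2^p := by
  intro p hp
  induction p, hp using Nat.le_induction with
  | base => norm_num
  | succ p hp ih =>
    have h1 : (p+1)^2 ≤ 2*p^2 := by nlinarith
    calc (p+1)^2 ≤ 2*p^2 := h1
    _ ≤ 2*2^p := by omega
    _ = 2^(p+1) := by ring

lemma lin_le_two_pow (A p : ℕ) : A*(p+4) ≤ 2^p + A*(max 4 (2*A) + 4) := by
  rcases le_or_gt p (max 4 (2*A)) with h | h
  · have h1 : A*(p+4) ≤ A*(max 4 (2*A)+4) := Nat.mul_le_mul_left _ (by omega)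
    exact le_trans h1 (Nat.le_add_left _ _)
  · have h4 : 4 ≤ p := by have := le_max_left 4 (2*A); omega
    have hsq := sq_le_two_pow p h4
    have h2A : 2*A ≤ p := by have := le_max_right 4 (2*A); omega
    have c1 : A*(p+4) ≤ A*(2*p) := Nat.mul_le_mul_left _ (by omega)
    have c2 : A*(2*p) = (2*A)*p := by ring
    have c3 : (2*A)*p ≤ p*p := Nat.mul_le_mul_right _ h2A
    have c4 : p*p = p^2 := by ring
    omega

/-- the constant of the main distance lower bound. -/
def Knat (m k : ℕ) : ℕ :=
  (2*k+4) + (2*m*(2*k+5))*(max 4 (2*(2*m*(2*k+5))) + 4) + 18*m + 2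

variable {X : Type*} (R : RootedGraph X) (m k : ℕ)

/-- Main lemma : if the rays are horizontally ≥ 2k+1-separated at level n, then the
graph distance between the ray points at level i grows like 2(i-n). -/
lemma main_dist (hexp : R.Expansive) (hdep : R.Departing m k) (hk : 0 < k) (hm : 0 < m)
    {f g : ℕ → X} (hf : R.IsRay f) (hg : R.IsRay g) {n : ℕ}
    (hsep : ((2*k+1 : ℕ) : ℕ∞) ≤ R.dh (f n) (g n)) (i : ℕ) :
    2*(i:ℝ) ≤ 2*(n:ℝ) + (R.G.dist (f i) (g i) : ℝ) + (Knat m k : ℝ) := by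
  classical
  rcases le_or_gt i n with hin | hin
  · have h1 : (i:ℝ) ≤ (n:ℝ) := by exact_mod_cast hin
    have h2 : (0:ℝ) ≤ (R.G.dist (f i) (g i) : ℝ) := by positivity
    have h3 : (0:ℝ) ≤ (Knat m k : ℝ) := by positivity
    linarith
  · obtain ⟨w, hwlen⟩ := R.conn.exists_walk_length_eq_dist (f i) (g i)
    -- minimum level along the walk
    have hne : (w.support.toFinset.image R.level).Nonempty :=
      ⟨R.level (f i), Finset.mem_image_of_mem _ (by
        rw [List.mem_toFinset]; exact SimpleGraph.Walk.start_mem_support _)⟩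
    set μ := (w.support.toFinset.image R.level).min' hne with hμdef
    have hμmem : ∃ x ∈ w.support, R.level x = μ := by
      have := Finset.min'_mem _ hne
      rw [Finset.mem_image] at this
      obtain ⟨x, hx, hlx⟩ := this
      exact ⟨x, by rwa [List.mem_toFinset] at hx, hlx⟩
    have hμle : ∀ x ∈ w.support, μ ≤ R.level x := by
      intro x hx
      exact Finset.min'_le _ _ (Finset.mem_image_of_mem _ (by rwa [List.mem_toFinset]))
    have hμi : μ ≤ i := by
      have := hμle (f i) (SimpleGraph.Walk.start_mem_support _)
      rwa [ray_lv R hf] at this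
    -- a generic splitting bound : length ≥ 2 (i - μ)
    have hsplitlen : 2*(i - μ) ≤ w.length := by
      obtain ⟨x₀, hx₀, hlx₀⟩ := hμmem
      obtain ⟨w₁, w₂, hw12⟩ := SimpleGraph.Walk.mem_support_iff_exists_append.mp hx₀
      have hl1 : R.G.dist (f i) x₀ ≤ w₁.length := SimpleGraph.dist_le _
      have hl2 : R.G.dist x₀ (g i) ≤ w₂.length := SimpleGraph.dist_le _
      have hd1 : R.level (f i) - R.level x₀ ≤ R.G.dist (f i) x₀ := by
        rw [SimpleGraph.dist_comm]; exact dist_lv_le R x₀ (f i)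
      have hd2 : R.level (g i) - R.level x₀ ≤ R.G.dist x₀ (g i) := dist_lv_le R x₀ (g i)
      have hlen12 : w.length = w₁.length + w₂.length := by
        rw [hw12, SimpleGraph.Walk.length_append]
      rw [ray_lv R hf] at hd1
      rw [ray_lv R hg] at hd2
      omega
    rcases le_or_gt μ (n + 3*m) with hcase | hcase
    · -- the walk descends low enough : direct length bound
      have h6m : 2*(i - (n + 3*m)) ≤ w.length := by omega
      have hKn : 6*m + 2 ≤ Knat m k := by rw [Knat]; omega
      have : 2*i ≤ 2*n + w.length + 6*m := by omega
      rw [hwlen] at this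
      have hr : ((2*i : ℕ):ℝ) ≤ ((2*n + R.G.dist (f i) (g i) + 6*m : ℕ):ℝ) := by exact_mod_cast this
      push_cast at hr
      have hKr : 6*(m:ℝ) ≤ (Knat m k : ℝ) := by
        exact_mod_cast (by rw [Knat]; omega : 6*m ≤ Knat m k)
      linarith
    · -- the walk stays high : use the exponential separation
      set r := (μ - n - 2*m)/m with hrdef
      set ℓ := n + r*m with hℓdef
      have hr1 : 1 ≤ r := by
        rw [hrdef, Nat.one_le_div_iff hm]; omega
      have hrm_le : r*m ≤ μ - n - 2*m := by
        rw [hrdef]; exact Nat.div_mul_le_self _ _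
      have hℓ2 : ℓ + 2*m ≤ μ := by omega
      have hmod := Nat.div_add_mod (μ - n - 2*m) m
      rw [← hrdef] at hmod
      have hmlt := Nat.mod_lt (μ - n - 2*m) hm
      have hcomm : m*r = r*m := Nat.mul_comm _ _
      have hℓ3 : μ ≤ ℓ + 3*m := by omega
      -- exponential growth of horizontal distance
      have hgrow := growth R m k hdep hk hm hf hg hsep r
      -- claimR applied to the geodesic walk
      have hℓi : ℓ ≤ i := by omega
      have hancf : Anc R ℓ (f i) (f ℓ) := by
        refine ⟨ray_lv R hf ℓ, ?_⟩
        have := ray_J R hf ℓ (i - ℓ)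
        rw [show ℓ + (i - ℓ) = i by omega] at this
        rwa [ray_lv R hf]
      have hancg : Anc R ℓ (g i) (g ℓ) := by
        refine ⟨ray_lv R hg ℓ, ?_⟩
        have := ray_J R hg ℓ (i - ℓ)
        rw [show ℓ + (i - ℓ) = i by omega] at this
        rwa [ray_lv R hg]
      obtain ⟨D, hD, hDb⟩ := claimR R m k hexp hdep hk hm w.length (R.level (f i)) ℓ w
        le_rfl (by omega) (fun x hx => by have := hμle x hx; omega) hancf hancg
      -- growth gives  2k + 2^r ≤ D
      have hgD : (2*k + 2^r : ℕ) ≤ D := by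
        have h1 : ((2*k + 2^r : ℕ) : ℕ∞) ≤ (D : ℕ∞) := le_trans (by
          rwa [← hℓdef] at hgrow) hD
        exact_mod_cast h1
      -- claimT gives a bound on the weight
      have hT := claimT R m ℓ hm w μ hℓ2 hμle hμmem
      rw [ray_lv R hf, ray_lv R hg] at hT
      have hGs := Gs_ge (m := m) (ℓ := ℓ) (μ := μ) (x := i) hm hℓ2 hμi
      have hBf := Bf_le m ℓ μ
      have hBf0 := Bf_nonneg m ℓ μ
      -- assemble
      have hWtB : Wt R m ℓ w ≤ (w.length : ℝ) - 2*((i:ℝ) - μ) + 12*m := by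
        nlinarith
      -- the (A)-lemma
      set A := 2*m*(2*k+5) with hAdef
      have hA := lin_le_two_pow A r
      have hσ : (μ:ℝ) - n ≤ (m:ℝ)*((r:ℝ)+3) := by
        have hn1 : μ ≤ n + m*(r+3) := by
          have hh : m*(r+3) = m*r + 3*m := by ring
          omega
        have h2 : (μ:ℝ) ≤ (n:ℝ) + (m:ℝ)*((r:ℝ)+3) := by exact_mod_cast hn1
        linarith
      set Mn := A*(max 4 (2*A) + 4) with hMndef
      set C := 2*(k:ℝ)+5 with hCdef
      set c0 := 2*(k:ℝ)+4 with hc0def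
      set M₀ := ((Mn:ℕ):ℝ) with hM₀def
      set T := (2:ℝ)^r with hTdef
      set dR := (R.G.dist (f i) (g i) : ℝ) with hdRdef
      have hk0 : (0:ℝ) ≤ (k:ℝ) := Nat.cast_nonneg k
      have hCpos : (0:ℝ) < C := by rw [hCdef]; positivity
      have hC1 : (1:ℝ) ≤ C := by rw [hCdef]; linarith
      have hc0pos : (0:ℝ) ≤ c0 := by rw [hc0def]; linarith
      have hM₀pos : (0:ℝ) ≤ M₀ := by rw [hM₀def]; positivity
      have hmpos : (0:ℝ) ≤ (m:ℝ) := Nat.cast_nonneg m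
      have hA0 : (0:ℝ) ≤ ((A:ℕ):ℝ) := Nat.cast_nonneg A
      -- real versions of the nat facts
      have hAR : ((A:ℕ):ℝ) = 2*(m:ℝ)*C := by rw [hAdef, hCdef]; push_cast; ring
      have hArw : ((A:ℕ):ℝ)*((r:ℝ)+4) ≤ T + M₀ := by
        rw [hTdef, hM₀def]
        exact_mod_cast hA
      have a2 : ((A:ℕ):ℝ)*((r:ℝ)+3) = 2*C*((m:ℝ)*((r:ℝ)+3)) := by rw [hAR]; ring
      have hgDr : 2*(k:ℝ) + T ≤ (D:ℝ) := by
        have h1 : ((2*k + 2^r : ℕ):ℝ) ≤ (D:ℝ) := by exact_mod_cast hgD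
        push_cast at h1
        rw [hTdef]
        linarith
      rw [hwlen] at hWtB
      have hDb' : (D:ℝ) ≤ c0 + C * Wt R m ℓ w := hDb
      -- multiply through
      have s1 : C*((μ:ℝ) - n) ≤ C*((m:ℝ)*((r:ℝ)+3)) :=
        mul_le_mul_of_nonneg_left hσ (le_of_lt hCpos)
      have s4 : C * Wt R m ℓ w ≤ C*(dR - 2*((i:ℝ) - μ) + 12*m) :=
        mul_le_mul_of_nonneg_left hWtB (le_of_lt hCpos)
      have hc0C : c0 ≤ C*c0 := le_mul_of_one_le_left hc0pos hC1
      have hM₀C : M₀ ≤ C*M₀ := le_mul_of_one_le_left hM₀pos hC1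
      have key : C*(2*((i:ℝ)-(n:ℝ))) ≤ C*(dR + c0 + M₀ + 12*(m:ℝ)) := by
        linarith [s1, s4, hArw, a2, hgDr, hDb', hc0C, hM₀C, hA0, hk0]
      have key2 : 2*((i:ℝ)-(n:ℝ)) ≤ dR + c0 + M₀ + 12*(m:ℝ) :=
        le_of_mul_le_mul_left key hCpos
      have hKnat : c0 + M₀ + 12*(m:ℝ) ≤ (Knat m k : ℝ) := by
        have h1 : ((2*k+4) + Mn + 12*m : ℕ) ≤ Knat m k := by
          rw [Knat, hMndef, hAdef]; omega
        have h2 : (((2*k+4) + Mn + 12*m : ℕ):ℝ) ≤ (Knat m k : ℝ) := by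
          exact_mod_cast h1
        push_cast at h2
        rw [hc0def, hM₀def]
        linarith
      linarith

end SBIAux
namespace SBIAux

open SimpleGraph

variable {X : Type*} (R : RootedGraph X) (m k : ℕ)

lemma two_k_succ_le {a : ℕ∞} (h : ¬ a ≤ ((2*k:ℕ):ℕ∞)) : ((2*k+1:ℕ):ℕ∞) ≤ a := by
  rcases eq_or_ne a ⊤ with rfl | hne
  · exact le_top
  · lift a to ℕ using hne with d hd
    have : (2*k:ℕ) < d := by exact_mod_cast lt_of_not_ge h
    exact_mod_cast this

lemma MCT (hexp : R.Expansive) (hdep : R.Departing m k) (hk : 0 < k) (hm : 0 < m)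
    {f g : ℕ → X} (hf : R.IsRay f) (hg : R.IsRay g) {n i : ℕ}
    (hgp : (n:ℝ) + (Knat m k : ℝ)/2 < R.gp (f i) (g i)) :
    R.dh (f n) (g n) ≤ ((2*k:ℕ):ℕ∞) := by
  by_contra hcon
  have hsep := two_k_succ_le k hcon
  have hmain := main_dist R m k hexp hdep hk hm hf hg hsep i
  rw [RootedGraph.gp, ray_lv R hf, ray_lv R hg] at hgp
  linarith

lemma gpRay_exists {f g : ℕ → X} {v : ℝ}
    (h : ENNReal.ofReal v < R.gpRay f g) : ∃ i, v < R.gp (f i) (g i) := by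
  rw [RootedGraph.gpRay, lt_iSup_iff] at h
  obtain ⟨i, hi⟩ := h
  refine ⟨i, ?_⟩
  by_contra hcon
  exact absurd (ENNReal.ofReal_le_ofReal (le_of_not_gt hcon)) (not_le_of_gt hi)

/-- both levels n and n + 2m are 2k-close for a pair of rays with large Gromov product. -/
lemma pair_close (hexp : R.Expansive) (hdep : R.Departing m k) (hk : 0 < k) (hm : 0 < m)
    {f g : ℕ → X} (hf : R.IsRay f) (hg : R.IsRay g) {n : ℕ}
    (h : ENNReal.ofReal (((n + 2*m:ℕ):ℝ) + (Knat m k : ℝ)/2) < R.gpRay f g) :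
    R.dh (f n) (g n) ≤ ((2*k:ℕ):ℕ∞) ∧
      R.dh (f (n + 2*m)) (g (n + 2*m)) ≤ ((2*k:ℕ):ℕ∞) := by
  obtain ⟨i, hi⟩ := gpRay_exists R h
  have h1 : ((n:ℕ):ℝ) + (Knat m k : ℝ)/2 < R.gp (f i) (g i) := by
    push_cast at hi ⊢
    linarith
  have h2 : ((n + 2*m:ℕ):ℝ) + (Knat m k : ℝ)/2 < R.gp (f i) (g i) := hi
  exact ⟨MCT R m k hexp hdep hk hm hf hg h1, MCT R m k hexp hdep hk hm hf hg h2⟩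

lemma lemW4k (hdep : R.Departing m k) (hk : 0 < k) (hm : 0 < m)
    {u v z z' : X} (hl : R.level u = R.level v) (hd : R.dh u v ≤ ((4*k:ℕ):ℕ∞))
    (hu : u ∈ R.J m z) (hv : v ∈ R.J m z') : R.dh z z' ≤ ((2*k:ℕ):ℕ∞) := by
  have h := lemW R m k hdep hk hm (4*k) hl hd hu hv
  have hq : (4*k + (2*k-1))/(2*k) = 2 := by
    have h1 : 4*k + (2*k-1) = (2*k)*2 + (2*k - 1) := by omega
    rw [h1, Nat.mul_add_div (by omega : 0 < 2*k), Nat.div_eq_of_lt (by omega : 2*k-1 < 2*k)]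
  rw [hq] at h
  refine h.trans ?_
  have hmx : k * max 1 2 ≤ 2*k := by
    rw [show max 1 2 = 2 by norm_num]
    omega
  exact_mod_cast hmx

/-- the key combination : if f and f₀ converge to the same point and f, g have large
Gromov product beyond level n + 2m, then f₀ and g are k-close at level n. -/
lemma combine (hexp : R.Expansive) (hdep : R.Departing m k) (hk : 0 < k) (hm : 0 < m)
    {f f₀ g : ℕ → X} (hf : R.IsRay f) (hf₀ : R.IsRay f₀) (hg : R.IsRay g) {n : ℕ}
    (hff₀ : R.gpRay f f₀ = ⊤)
    (hfg : ENNReal.ofReal (((n + 2*m:ℕ):ℝ) + (Knat m k : ℝ)/2) < R.gpRay f g) :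
    R.dh (f₀ n) (g n) ≤ (k:ℕ∞) := by
  have hpair1 := pair_close R m k hexp hdep hk hm hf hf₀ (n := n)
    (by rw [hff₀]; exact ENNReal.ofReal_lt_top)
  have hpair2 := pair_close R m k hexp hdep hk hm hf hg hfg
  have htri : R.dh (f₀ (n + 2*m)) (g (n + 2*m)) ≤ ((4*k:ℕ):ℕ∞) := by
    calc R.dh (f₀ (n + 2*m)) (g (n + 2*m))
        ≤ R.dh (f₀ (n + 2*m)) (f (n + 2*m)) + R.dh (f (n + 2*m)) (g (n + 2*m)) :=
          dh_triangle R _ _ _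
    _ ≤ ((2*k:ℕ):ℕ∞) + ((2*k:ℕ):ℕ∞) := by
        refine add_le_add ?_ hpair2.2
        rw [dh_comm]
        exact hpair1.2
    _ = ((4*k:ℕ):ℕ∞) := by
        rw [← Nat.cast_add]
        congr 1
        omega
  have hmem₀ : f₀ (n + 2*m) ∈ R.J m (f₀ (n + m)) := by
    have := ray_J R hf₀ (n + m) m
    rwa [show n + m + m = n + 2*m by ring] at this
  have hmemg : g (n + 2*m) ∈ R.J m (g (n + m)) := by
    have := ray_J R hg (n + m) m
    rwa [show n + m + m = n + 2*m by ring] at this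
  have hlv : R.level (f₀ (n + 2*m)) = R.level (g (n + 2*m)) := by
    rw [ray_lv R hf₀, ray_lv R hg]
  have h2k := lemW4k R m k hdep hk hm hlv htri hmem₀ hmemg
  have hmem₀' : f₀ (n + m) ∈ R.J m (f₀ n) := ray_J R hf₀ n m
  have hmemg' : g (n + m) ∈ R.J m (g n) := ray_J R hg n m
  have hlv' : R.level (f₀ (n + m)) = R.level (g (n + m)) := by
    rw [ray_lv R hf₀, ray_lv R hg]
  exact dep_desc R m k hdep hlv' h2k hmem₀' hmemg'

/-- extraction from the boundary Gromov product. -/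
lemma gpB_extract {B : Type*} (lim : (ℕ → X) → B) {ξ η : B} {v : ℝ}
    (h : ENNReal.ofReal v < R.gpB lim ξ η) :
    ∃ f g, R.IsRay f ∧ R.IsRay g ∧ lim f = ξ ∧ lim g = η ∧
      ENNReal.ofReal v < R.gpRay f g := by
  rw [RootedGraph.gpB, lt_iSup_iff] at h
  obtain ⟨f, hf⟩ := h
  rw [lt_iSup_iff] at hf
  obtain ⟨g, hg⟩ := hf
  rw [lt_iSup_iff] at hg
  obtain ⟨⟨h1, h2, h3, h4⟩, h5⟩ := hg
  exact ⟨f, g, h1, h2, h3, h4, h5⟩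

/-- if two rays stay at bounded distance, their Gromov product is infinite. -/
lemma gpRay_top_of_bdd {f g : ℕ → X} (hf : R.IsRay f) (hg : R.IsRay g) {c : ℕ}
    (h : ∀ j : ℕ, R.G.dist (f j) (g j) ≤ c) : R.gpRay f g = ⊤ := by
  rw [RootedGraph.gpRay, iSup_eq_top]
  intro b hb
  set j := ⌈b.toReal⌉₊ + c + 1 with hjdef
  refine ⟨j, ?_⟩
  have hgp : (j:ℝ) - c ≤ R.gp (f j) (g j) := by
    rw [RootedGraph.gp, ray_lv R hf, ray_lv R hg]
    have h1 : (R.G.dist (f j) (g j) : ℝ) ≤ (c:ℝ) := by exact_mod_cast h j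
    linarith
  have hbj : b < ENNReal.ofReal ((j:ℝ) - c) := by
    have h1 : b.toReal < (j:ℝ) - c := by
      have h2 : b.toReal ≤ ⌈b.toReal⌉₊ := Nat.le_ceil _
      have h3 : ((⌈b.toReal⌉₊ + c + 1 : ℕ):ℝ) = (⌈b.toReal⌉₊:ℝ) + c + 1 := by push_cast; ring
      rw [hjdef, h3]
      linarith
    calc b = ENNReal.ofReal b.toReal := (ENNReal.ofReal_toReal (ne_top_of_lt hb)).symm
    _ < ENNReal.ofReal ((j:ℝ) - c) := by
        rw [ENNReal.ofReal_lt_ofReal_iff (by linarith [ENNReal.toReal_nonneg (a := b)])]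
        exact h1
  exact lt_of_lt_of_le hbj (ENNReal.ofReal_le_ofReal hgp)

end SBIAux


open SBIAux in
/-- Proposition 3.3: for an expansive `(m,k)`-departing rooted graph there
is `C ≥ 1` such that for all `x` and `ξ ∈ J_∂(x)`,
`B(ξ, C⁻¹e^{-a|x|}) ⊆ J^k_∂(x) ⊆ B(ξ, Ce^{-a|x|})`. -/
theorem shadow_ball_inclusions {X B : Type*} [MetricSpace B] (R : RootedGraph X) (m k : ℕ)
    (hm : 0 < m) (hk : 0 < k) (hexp : R.Expansive) (hdep : R.Departing m k)
    (hne : ∀ x : X, (R.J 1 x).Nonempty)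
    (lim : (ℕ → X) → B) (hB : R.BoundaryOf lim)
    (a c₁ c₂ : ℝ) (ha : 0 < a) (hc₁ : 0 < c₁) (hc₂ : 0 < c₂)
    (hθ : R.GromovLike lim a c₁ c₂) :
    ∃ C : ℝ, 1 ≤ C ∧ ∀ x : X, ∀ ξ ∈ R.cell lim x,
      Metric.ball ξ (C⁻¹ * Real.exp (-a * R.level x)) ⊆ R.shadow lim k x ∧
        R.shadow lim k x ⊆ Metric.ball ξ (C * Real.exp (-a * R.level x)) := by
  classical
  have hK₀0 : (0:ℝ) ≤ (Knat m k : ℝ)/2 := by positivity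
  set E : ℝ := Real.exp (a*((Knat m k : ℝ)/2 + 2*m + 1)) with hEdef
  have hEpos : 0 < E := Real.exp_pos _
  set C : ℝ := max (max 1 (c₁⁻¹ * E)) (c₂ * Real.exp (a*k/2) + 1) with hCdef
  have hC1 : (1:ℝ) ≤ C := le_trans (le_max_left _ _) (le_max_left _ _)
  have hCpos : (0:ℝ) < C := lt_of_lt_of_le one_pos hC1
  have hCE : c₁⁻¹ * E ≤ C := le_trans (le_max_right _ _) (le_max_left _ _)
  have hCc₂ : c₂ * Real.exp (a*k/2) + 1 ≤ C := le_max_right _ _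
  refine ⟨C, hC1, ?_⟩
  intro x ξ hξ
  obtain ⟨f₀, hf₀ray, hf₀x, hf₀lim⟩ := hξ
  constructor
  · -- ball ⊆ shadow
    intro η hη
    rw [Metric.mem_ball] at hη
    by_cases heq : η = ξ
    · subst heq
      refine Set.mem_iUnion₂.mpr ⟨x, ⟨rfl, ?_⟩, ⟨f₀, hf₀ray, hf₀x, hf₀lim⟩⟩
      rw [dh_self]
      exact zero_le
    · -- η ≠ ξ : large Gromov product
      have hgpB : ENNReal.ofReal (((R.level x + 2*m : ℕ):ℝ) + (Knat m k : ℝ)/2)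
          < R.gpB lim ξ η := by
        rcases eq_or_ne (R.gpB lim ξ η) ⊤ with htop | hnetop
        · rw [htop]; exact ENNReal.ofReal_lt_top
        · have hθ1 := (hθ ξ η (Ne.symm heq)).1
          have hd : dist ξ η < C⁻¹ * Real.exp (-a * R.level x) := by
            rw [_root_.dist_comm]; exact hη
          have hCinv : C⁻¹ ≤ c₁ * E⁻¹ := by
            have h1 : 0 < c₁⁻¹ * E := by positivity
            have h2 := inv_anti₀ h1 hCE
            rwa [mul_inv, inv_inv] at h2
          have hprod : C⁻¹ * Real.exp (-a * R.level x) ≤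
              c₁ * Real.exp (-a * (((R.level x : ℝ)) + (Knat m k : ℝ)/2 + 2*m + 1)) := by
            have hexp0 : (0:ℝ) < Real.exp (-a * R.level x) := Real.exp_pos _
            have h3 : C⁻¹ * Real.exp (-a * R.level x) ≤
                (c₁ * E⁻¹) * Real.exp (-a * R.level x) := by
              exact mul_le_mul_of_nonneg_right hCinv (le_of_lt hexp0)
            refine h3.trans (le_of_eq ?_)
            rw [hEdef, ← Real.exp_neg, mul_assoc, ← Real.exp_add]
            congr 1
            rw [Real.exp_eq_exp]
            ring
          set T := (R.gpB lim ξ η).toReal with hT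
          have hTbig : (R.level x : ℝ) + (Knat m k : ℝ)/2 + 2*m + 1 < T := by
            have h4 : c₁ * Real.exp (-a * T) <
                c₁ * Real.exp (-a * (((R.level x : ℝ)) + (Knat m k : ℝ)/2 + 2*m + 1)) :=
              lt_of_le_of_lt hθ1 (lt_of_lt_of_le hd hprod)
            have h5 : Real.exp (-a * T) <
                Real.exp (-a * (((R.level x : ℝ)) + (Knat m k : ℝ)/2 + 2*m + 1)) :=
              lt_of_mul_lt_mul_left h4 (le_of_lt hc₁)
            have h6 := Real.exp_lt_exp.mp h5
            nlinarith
          have hT0 : 0 < T := by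
            have : (0:ℝ) ≤ (R.level x : ℝ) := by positivity
            have : (0:ℝ) ≤ (m : ℝ) := by positivity
            linarith
          calc ENNReal.ofReal (((R.level x + 2*m : ℕ):ℝ) + (Knat m k : ℝ)/2)
              < ENNReal.ofReal T := by
                rw [ENNReal.ofReal_lt_ofReal_iff hT0]
                push_cast
                linarith
          _ = R.gpB lim ξ η := ENNReal.ofReal_toReal hnetop
      obtain ⟨f, g, hfray, hgray, hflim, hglim, hfg⟩ := gpB_extract R lim hgpB
      have hff₀ : R.gpRay f f₀ = ⊤ :=
        (hB.2 f f₀ hfray hf₀ray).mp (by rw [hflim, hf₀lim])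
      have hclose := combine R m k hexp hdep hk hm hfray hf₀ray hgray hff₀ hfg
      rw [hf₀x] at hclose
      refine Set.mem_iUnion₂.mpr ⟨g (R.level x), ⟨?_, ?_⟩, ⟨g, hgray, ?_, hglim⟩⟩
      · rw [ray_lv R hgray]
      · exact hclose
      · rw [ray_lv R hgray]
  · -- shadow ⊆ ball
    intro η hη
    obtain ⟨y, hy, hcell⟩ := Set.mem_iUnion₂.mp hη
    obtain ⟨hylv, hydh⟩ := hy
    obtain ⟨g, hgray, hgy, hglim⟩ := hcell
    rw [Metric.mem_ball]
    by_cases heq : η = ξ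
    · subst heq
      rw [_root_.dist_self]
      positivity
    · have hnetop : R.gpB lim ξ η ≠ ⊤ := by
        intro htop
        have hbdd : ∀ j : ℕ, R.G.dist (f₀ j) (g j) ≤ 6*k := by
          intro j
          have hVlt : ENNReal.ofReal (((j + 2*m : ℕ):ℝ) + (Knat m k : ℝ)/2)
              < R.gpB lim ξ η := by
            rw [htop]; exact ENNReal.ofReal_lt_top
          obtain ⟨f', g', hf'ray, hg'ray, hf'lim, hg'lim, hf'g'⟩ := gpB_extract R lim hVlt
          have h1 := (pair_close R m k hexp hdep hk hm hf'ray hg'ray hf'g').1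
          have hf'f₀ : R.gpRay f' f₀ = ⊤ :=
            (hB.2 f' f₀ hf'ray hf₀ray).mp (by rw [hf'lim, hf₀lim])
          have h2 := (pair_close R m k hexp hdep hk hm hf'ray hf₀ray (n := j)
            (by rw [hf'f₀]; exact ENNReal.ofReal_lt_top)).1
          have hg'g : R.gpRay g' g = ⊤ :=
            (hB.2 g' g hg'ray hgray).mp (by rw [hg'lim, hglim])
          have h3 := (pair_close R m k hexp hdep hk hm hg'ray hgray (n := j)
            (by rw [hg'g]; exact ENNReal.ofReal_lt_top)).1
          have htri : R.dh (f₀ j) (g j) ≤ ((6*k:ℕ):ℕ∞) := by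
            calc R.dh (f₀ j) (g j) ≤ R.dh (f₀ j) (f' j) + R.dh (f' j) (g j) :=
                dh_triangle R _ _ _
            _ ≤ R.dh (f₀ j) (f' j) + (R.dh (f' j) (g' j) + R.dh (g' j) (g j)) :=
                add_le_add le_rfl (dh_triangle R _ _ _)
            _ ≤ ((2*k:ℕ):ℕ∞) + (((2*k:ℕ):ℕ∞) + ((2*k:ℕ):ℕ∞)) := by
                refine add_le_add ?_ (add_le_add h1 h3)
                rw [dh_comm]; exact h2
            _ = ((6*k:ℕ):ℕ∞) := by
                rw [← Nat.cast_add, ← Nat.cast_add]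
                congr 1; omega
          exact dist_le_dh R htri
        have htopray := gpRay_top_of_bdd R hf₀ray hgray hbdd
        have hlimeq : lim f₀ = lim g := (hB.2 f₀ g hf₀ray hgray).mpr htopray
        exact heq (by rw [← hglim, ← hlimeq, hf₀lim])
      -- lower bound for the Gromov product
      have hgn : g (R.level x) = y := by
        rw [← hylv]; exact hgy
      have hdxy : R.G.dist x y ≤ k := dist_le_dh R hydh
      have hgp_n : (R.level x : ℝ) - k/2 ≤ R.gp (f₀ (R.level x)) (g (R.level x)) := by
        rw [RootedGraph.gp, ray_lv R hf₀ray, ray_lv R hgray, hf₀x, hgn]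
        have h1 : (R.G.dist x y : ℝ) ≤ (k:ℝ) := by exact_mod_cast hdxy
        linarith
      have hge : ENNReal.ofReal ((R.level x : ℝ) - k/2) ≤ R.gpB lim ξ η := by
        calc ENNReal.ofReal ((R.level x : ℝ) - k/2)
            ≤ ENNReal.ofReal (R.gp (f₀ (R.level x)) (g (R.level x))) :=
              ENNReal.ofReal_le_ofReal hgp_n
        _ ≤ R.gpRay f₀ g := le_iSup (fun i => ENNReal.ofReal (R.gp (f₀ i) (g i))) (R.level x)
        _ ≤ R.gpB lim ξ η := by
            rw [RootedGraph.gpB]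
            exact le_iSup₂_of_le f₀ g (le_iSup_of_le ⟨hf₀ray, hgray, hf₀lim, hglim⟩ le_rfl)
      have hTge : (R.level x : ℝ) - k/2 ≤ (R.gpB lim ξ η).toReal := by
        rcases le_or_gt ((R.level x : ℝ) - k/2) 0 with h0 | h0
        · exact le_trans h0 ENNReal.toReal_nonneg
        · have h1 := ENNReal.toReal_mono hnetop hge
          rwa [ENNReal.toReal_ofReal (le_of_lt h0)] at h1
      have hup := (hθ ξ η (Ne.symm heq)).2
      have hbound : dist ξ η < C * Real.exp (-a * R.level x) := by
        have h1 : Real.exp (-a * (R.gpB lim ξ η).toReal) ≤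
            Real.exp (-a * ((R.level x : ℝ) - k/2)) := by
          rw [Real.exp_le_exp]
          nlinarith
        have h2 : Real.exp (-a * ((R.level x : ℝ) - k/2)) =
            Real.exp (a*k/2) * Real.exp (-a * R.level x) := by
          rw [← Real.exp_add]
          ring_nf
        have hexppos : (0:ℝ) < Real.exp (-a * R.level x) := Real.exp_pos _
        calc dist ξ η ≤ c₂ * Real.exp (-a * (R.gpB lim ξ η).toReal) := hup
        _ ≤ c₂ * (Real.exp (a*k/2) * Real.exp (-a * R.level x)) := by
            rw [← h2]
            exact mul_le_mul_of_nonneg_left h1 (le_of_lt hc₂)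
        _ = (c₂ * Real.exp (a*k/2)) * Real.exp (-a * R.level x) := by ring
        _ < C * Real.exp (-a * R.level x) := by
            refine mul_lt_mul_of_pos_right ?_ hexppos
            linarith
      rw [_root_.dist_comm] at hbound
      exact hbound
end

section
/- Let Φ be an index map on a vertical rooted graph (X,E_v) over a complete metric space (M,ρ), of exponential type-(b) (i.e., there is δ_0 with diam(Φ(x)) ≤ δ_0 e^{−b|x|} for all x). Then the associated AI_b-graph (X, E^{(b)}) with horizontal edges E^{(b)}_h = {(x,y) : |x|=|y|, x≠y, dist_ρ(Φ(x),Φ(y)) ≤ γ e^{−b|x|}} is (m,1)-departing for any integer m with (2γ+δ_0)e^{−bm} ≤ γ, and hence Gromov hyperbolic. -/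
open SimpleGraph Metric
open scoped ENNReal ENat

/-! ### Auxiliary lemmas for the proof -/

namespace AIbProof

open RootedGraph Finset

section SetDist

variable {M : Type*} [MetricSpace M]

lemma setDist_bddBelow (A B : Set M) :
    BddBelow ((fun p : M × M => dist p.1 p.2) '' A ×ˢ B) :=
  ⟨0, by rintro r ⟨⟨a, c⟩, -, rfl⟩; exact dist_nonneg⟩

lemma setDist_nonneg (A B : Set M) : 0 ≤ setDist A B :=
  Real.sInf_nonneg (by rintro r ⟨⟨p, q⟩, -, rfl⟩; exact dist_nonneg)

lemma setDist_le {A B : Set M} {p q : M} (hp : p ∈ A) (hq : q ∈ B) :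
    setDist A B ≤ dist p q :=
  csInf_le (setDist_bddBelow A B) ⟨(p, q), ⟨hp, hq⟩, rfl⟩

lemma dist_le_setDist_add {A B : Set M} {p q : M} (hp : p ∈ A) (hq : q ∈ B)
    {dA dB : ℝ} (hdA : ∀ a ∈ A, dist p a ≤ dA) (hdB : ∀ c ∈ B, dist q c ≤ dB) :
    dist p q ≤ setDist A B + dA + dB := by
  have h : dist p q - dA - dB ≤ setDist A B := by
    rw [setDist]
    apply le_csInf ((Set.Nonempty.prod ⟨p, hp⟩ ⟨q, hq⟩).image _)
    rintro r ⟨⟨a, c⟩, ⟨ha, hc⟩, rfl⟩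
    have h4 := dist_triangle4 p a c q
    have h1 := hdA a ha
    have h2 := hdB c hc
    have h3 : dist c q = dist q c := dist_comm c q
    simp only at h4 ⊢
    linarith
  linarith

lemma setDist_le_of_subset {A B A' B' : Set M} (hA : A.Nonempty) (hB : B.Nonempty)
    (hAA : A ⊆ A') (hBB : B ⊆ B') : setDist A' B' ≤ setDist A B :=
  csInf_le_csInf (setDist_bddBelow A' B') ((hA.prod hB).image _)
    (Set.image_mono (Set.prod_mono hAA hBB))

lemma exists_close_pair {A B : Set M} (hA : A.Nonempty) (hB : B.Nonempty) {ε : ℝ}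
    (hε : 0 < ε) : ∃ p ∈ A, ∃ q ∈ B, dist p q < setDist A B + ε := by
  have h : setDist A B < setDist A B + ε := lt_add_of_pos_right _ hε
  rw [setDist] at h
  obtain ⟨r, hr, hlt⟩ := (csInf_lt_iff (setDist_bddBelow A B) ((hA.prod hB).image _)).mp h
  obtain ⟨⟨p, q⟩, ⟨hp, hq⟩, rfl⟩ := hr
  exact ⟨p, hp, q, hq, hlt⟩

lemma setDist_triangle' {A B C : Set M} (hA : A.Nonempty) (hB : B.Nonempty)
    (hC : C.Nonempty) {dB : ℝ} (hdB : ∀ p ∈ B, ∀ q ∈ B, dist p q ≤ dB) :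
    setDist A C ≤ setDist A B + setDist B C + dB := by
  by_contra hcon
  push_neg at hcon
  set ε := (setDist A C - (setDist A B + setDist B C + dB)) / 3 with hε
  have hε0 : 0 < ε := by rw [hε]; linarith
  obtain ⟨p, hp, q, hq, h1⟩ := exists_close_pair hA hB hε0
  obtain ⟨q', hq', r, hr, h2⟩ := exists_close_pair hB hC hε0
  have h3 : setDist A C ≤ dist p r := setDist_le hp hr
  have h4 := dist_triangle4 p q q' r
  have h5 := hdB q hq q' hq'
  rw [hε] at hε0 h1 h2
  linarith

end SetDist

section WalkLemmas

variable {V : Type*} {G : SimpleGraph V} {u v : V}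

lemma walk_edist_getVert_le (w : G.Walk u v) : ∀ i : ℕ, G.edist u (w.getVert i) ≤ i := by
  induction w with
  | nil => intro i; simp [SimpleGraph.Walk.getVert]
  | cons h q ih =>
    intro i
    cases i with
    | zero => simp [SimpleGraph.Walk.getVert_zero]
    | succ n =>
      rw [SimpleGraph.Walk.getVert_cons_succ]
      calc G.edist _ _ ≤ G.edist _ _ + G.edist _ _ := SimpleGraph.edist_triangle
        _ ≤ 1 + (n : ℕ∞) :=
          add_le_add (le_of_eq (SimpleGraph.edist_eq_one_iff_adj.mpr h)) (ih n)
        _ = ((n + 1 : ℕ) : ℕ∞) := by norm_cast; omega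

lemma walk_dist_getVert_le (w : G.Walk u v) (i : ℕ) : G.dist u (w.getVert i) ≤ i := by
  have h := walk_edist_getVert_le w i
  have h2 := ENat.toNat_le_toNat h (by simp)
  simpa [SimpleGraph.dist] using h2

lemma walk_dist_getVert_le' (w : G.Walk u v) (i : ℕ) (hi : i ≤ w.length) :
    G.dist (w.getVert i) v ≤ w.length - i := by
  have h := walk_dist_getVert_le w.reverse (w.length - i)
  rw [SimpleGraph.Walk.getVert_reverse] at h
  rw [show w.length - (w.length - i) = i by omega] at h
  rw [SimpleGraph.dist_comm]
  exact h

end WalkLemmas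

section Levels

variable {X M : Type*} [MetricSpace M] {R R' : RootedGraph X} {Φ : X → Set M} {b γ δ₀ : ℝ}

lemma le_G (hA : R.IsAIb R' Φ b γ) : R.G ≤ R'.G := by
  intro x y h
  exact (hA.2 x y).mpr (Or.inl h)

lemma dist_mono (hA : R.IsAIb R' Φ b γ) (x y : X) : R'.G.dist x y ≤ R.G.dist x y := by
  obtain ⟨w, hw⟩ := (R.conn x y).exists_walk_length_eq_dist
  calc R'.G.dist x y ≤ (w.mapLe (le_G hA)).length := SimpleGraph.dist_le _
    _ = w.length := by simp [SimpleGraph.Walk.mapLe]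
    _ = R.G.dist x y := hw

lemma level_root : R.level R.root = 0 := by
  rw [RootedGraph.level, SimpleGraph.dist_self]

lemma level_adj_le (hA : R.IsAIb R' Φ b γ) (hvert : R.Vertical) {x y : X}
    (h : R'.G.Adj x y) : R.level y ≤ R.level x + 1 := by
  rcases (hA.2 x y).mp h with h' | ⟨hl, -, -⟩
  · rcases hvert x y h' with h1 | h1 <;> omega
  · omega

lemma level_le_walk (hA : R.IsAIb R' Φ b γ) (hvert : R.Vertical) {a c : X}
    (w : R'.G.Walk a c) : R.level c ≤ R.level a + w.length := by
  induction w with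
  | nil => simp
  | cons h q ih =>
    have h2 := level_adj_le hA hvert h
    rw [SimpleGraph.Walk.length_cons]
    omega

lemma level_eq (hA : R.IsAIb R' Φ b γ) (hvert : R.Vertical) (x : X) :
    R'.level x = R.level x := by
  apply le_antisymm
  · rw [RootedGraph.level, RootedGraph.level, hA.1]
    exact dist_mono hA _ _
  · obtain ⟨w, hw⟩ := (R'.conn R'.root x).exists_walk_length_eq_dist
    have h1 := level_le_walk hA hvert w
    rw [hw] at h1
    have h0 : R.level R'.root = 0 := by rw [hA.1]; exact level_root
    have h2 : R'.level x = R'.G.dist R'.root x := rfl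
    omega

lemma exists_parent (hvert : R.Vertical) (hΦ : R.IsIndexMap Φ) {x : X}
    (hx : R.level x ≠ 0) :
    ∃ z, R.level z + 1 = R.level x ∧ R.G.Adj z x ∧ Φ x ⊆ Φ z := by
  obtain ⟨w, hw⟩ := (R.conn R.root x).exists_walk_length_eq_dist
  have hwl : w.length = R.level x := hw
  have hL0 : 0 < R.level x := Nat.pos_of_ne_zero hx
  set z := w.getVert (R.level x - 1) with hz
  have hadj : R.G.Adj z x := by
    have h1 := w.adj_getVert_succ (i := R.level x - 1) (by omega)
    rw [show R.level x - 1 + 1 = R.level x by omega] at h1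
    rw [show w.getVert (R.level x) = x by rw [← hwl]; exact w.getVert_length] at h1
    exact h1
  have hdz : R.G.dist R.root z ≤ R.level x - 1 := walk_dist_getVert_le w _
  have hdz2 : R.level x ≤ R.G.dist R.root z + 1 := by
    have h2 := R.conn.dist_triangle (u := R.root) (v := z) (w := x)
    rw [SimpleGraph.dist_eq_one_iff_adj.mpr hadj] at h2
    exact h2
  have hlz : R.level z + 1 = R.level x := by
    rw [RootedGraph.level]
    omega
  have hJ : x ∈ R.J 1 z :=
    ⟨by omega, SimpleGraph.dist_eq_one_iff_adj.mpr hadj⟩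
  exact ⟨z, hlz, hadj, hΦ.2.2.1 z x hJ⟩

lemma exists_ancestor (hvert : R.Vertical) (hΦ : R.IsIndexMap Φ) :
    ∀ (k : ℕ) (x : X), k ≤ R.level x →
      ∃ z, R.level z + k = R.level x ∧ R.G.dist z x ≤ k ∧ Φ x ⊆ Φ z := by
  intro k
  induction k with
  | zero =>
    intro x _
    exact ⟨x, by omega, by rw [SimpleGraph.dist_self], subset_rfl⟩
  | succ n ih =>
    intro x hk
    obtain ⟨p, hp1, hp2, hp3⟩ := exists_parent hvert hΦ (x := x) (by omega)
    obtain ⟨z, hz1, hz2, hz3⟩ := ih p (by omega)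
    refine ⟨z, by omega, ?_, hp3.trans hz3⟩
    have h2 := R.conn.dist_triangle (u := z) (v := p) (w := x)
    rw [SimpleGraph.dist_eq_one_iff_adj.mpr hp2] at h2
    omega

lemma phi_subset_of_walk (hA : R.IsAIb R' Φ b γ) (hvert : R.Vertical)
    (hΦ : R.IsIndexMap Φ) {a c : X} (w : R'.G.Walk a c)
    (hlev : R.level c = R.level a + w.length) : Φ c ⊆ Φ a := by
  induction w with
  | nil => exact subset_rfl
  | @cons a z c h q ih =>
    rw [SimpleGraph.Walk.length_cons] at hlev
    have h1 : R.level c ≤ R.level z + q.length := level_le_walk hA hvert q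
    have h2 : R.level z ≤ R.level a + 1 := level_adj_le hA hvert h
    have h3 : R.level z = R.level a + 1 := by omega
    have hR : R.G.Adj a z := by
      rcases (hA.2 _ _).mp h with h' | ⟨hl, -, -⟩
      · exact h'
      · omega
    have hzJ : z ∈ R.J 1 a := ⟨h3, SimpleGraph.dist_eq_one_iff_adj.mpr hR⟩
    exact (ih (by omega)).trans (hΦ.2.2.1 a z hzJ)

lemma J_phi (hA : R.IsAIb R' Φ b γ) (hvert : R.Vertical) (hΦ : R.IsIndexMap Φ)
    {x u : X} {m : ℕ} (hu : u ∈ R'.J m x) :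
    Φ u ⊆ Φ x ∧ R.level u = R.level x + m := by
  obtain ⟨hl, hd⟩ := hu
  have hl' : R.level u = R.level x + m := by
    rw [← level_eq hA hvert, ← level_eq hA hvert]; exact hl
  obtain ⟨w, hw⟩ := (R'.conn x u).exists_walk_length_eq_dist
  rw [hd] at hw
  exact ⟨phi_subset_of_walk hA hvert hΦ w (by omega), hl'⟩

lemma gh_adj_iff (hA : R.IsAIb R' Φ b γ) (hvert : R.Vertical) {x y : X} :
    R'.Gh.Adj x y ↔ (R.level x = R.level y ∧ x ≠ y ∧
      setDist (Φ x) (Φ y) ≤ γ * Real.exp (-b * R.level x)) := by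
  constructor
  · intro h
    obtain ⟨hadj, hl⟩ := (h : R'.G.Adj x y ∧ R'.level x = R'.level y)
    have hl' : R.level x = R.level y := by
      rw [← level_eq hA hvert, ← level_eq hA hvert]; exact hl
    rcases (hA.2 _ _).mp hadj with h' | h'
    · rcases hvert _ _ h' with h1 | h1 <;> omega
    · exact ⟨hl', h'.2.1, h'.2.2⟩
  · rintro ⟨h1, h2, h3⟩
    exact ⟨(hA.2 _ _).mpr (Or.inr ⟨h1, h2, h3⟩),
      by rw [level_eq hA hvert, level_eq hA hvert]; exact h1⟩

lemma dist_le_of_expType (hexp : R.ExpType Φ b δ₀) (hδ₀ : 0 ≤ δ₀) {x : X} {p q : M}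
    (hp : p ∈ Φ x) (hq : q ∈ Φ x) : dist p q ≤ δ₀ * Real.exp (-b * R.level x) := by
  have h1 : edist p q ≤ ENNReal.ofReal (δ₀ * Real.exp (-b * R.level x)) :=
    le_trans (EMetric.edist_le_diam_of_mem hp hq) (hexp x)
  rw [edist_dist] at h1
  have h2 : (0:ℝ) ≤ δ₀ * Real.exp (-b * R.level x) := by positivity
  exact (ENNReal.ofReal_le_ofReal_iff h2).mp h1

end Levels

section Departing

variable {X M : Type*} [MetricSpace M] {R R' : RootedGraph X} {Φ : X → Set M} {b γ δ₀ : ℝ}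

lemma departing_main (hvert : R.Vertical) (hΦ : R.IsIndexMap Φ)
    (hb : 0 < b) (hγ : 0 < γ) (hδ₀ : 0 ≤ δ₀) (hexp : R.ExpType Φ b δ₀)
    (hA : R.IsAIb R' Φ b γ) (m : ℕ)
    (hmb : (2 * γ + δ₀) * Real.exp (-b * m) ≤ γ) : R'.Departing m 1 := by
  intro x y hlev hlt u hu v hv
  by_contra hcon
  push_neg at hcon
  have hcon2 : R'.Gh.edist u v ≤ 2 := by
    have : ((2 * 1 : ℕ) : ℕ∞) = 2 := by norm_cast
    rw [this] at hcon
    exact hcon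
  have hxy_lev : R.level x = R.level y := by
    rw [← level_eq hA hvert, ← level_eq hA hvert]; exact hlev
  have hne : x ≠ y := by
    rintro rfl
    rw [RootedGraph.dh, SimpleGraph.edist_self] at hlt
    exact absurd hlt (by norm_num)
  have hnadj : ¬ R'.Gh.Adj x y := by
    intro h
    rw [RootedGraph.dh, SimpleGraph.edist_eq_one_iff_adj.mpr h] at hlt
    exact absurd hlt (by norm_num)
  have hfar : γ * Real.exp (-b * R.level x) < setDist (Φ x) (Φ y) := by
    by_contra hle
    push_neg at hle
    exact hnadj ((gh_adj_iff hA hvert).mpr ⟨hxy_lev, hne, hle⟩)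
  obtain ⟨hΦu, hlu⟩ := J_phi hA hvert hΦ hu
  obtain ⟨hΦv, hlv⟩ := J_phi hA hvert hΦ hv
  have hreach : R'.Gh.Reachable u v := by
    apply SimpleGraph.reachable_of_edist_ne_top
    intro h
    rw [h] at hcon2
    exact absurd hcon2 (by norm_num)
  obtain ⟨w, hw⟩ := hreach.exists_walk_length_eq_edist
  have hwlen : w.length ≤ 2 := by
    have : (w.length : ℕ∞) ≤ 2 := by rw [hw]; exact hcon2
    exact_mod_cast this
  have hRHS0 : (0:ℝ) ≤ (2 * γ + δ₀) * Real.exp (-b * R.level u) := by positivity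
  have key : setDist (Φ u) (Φ v) ≤ (2 * γ + δ₀) * Real.exp (-b * R.level u) := by
    cases w with
    | nil =>
      obtain ⟨p, hp⟩ := hΦ.2.1 u
      calc setDist (Φ u) (Φ u) ≤ dist p p := setDist_le hp hp
        _ = 0 := dist_self p
        _ ≤ _ := hRHS0
    | @cons _ z _ h q =>
      cases q with
      | nil =>
        obtain ⟨-, -, hsd⟩ := (gh_adj_iff hA hvert).mp h
        have := Real.exp_pos (-b * R.level u)
        calc setDist (Φ u) (Φ v) ≤ γ * Real.exp (-b * R.level u) := hsd
          _ ≤ _ := by nlinarith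
      | @cons _ c _ h2 q2 =>
        have hq2 : q2.length = 0 := by
          rw [SimpleGraph.Walk.length_cons, SimpleGraph.Walk.length_cons] at hwlen
          omega
        have hcv : c = v := q2.eq_of_length_eq_zero hq2
        subst hcv
        obtain ⟨hl1, -, hsd1⟩ := (gh_adj_iff hA hvert).mp h
        obtain ⟨hl2, -, hsd2⟩ := (gh_adj_iff hA hvert).mp h2
        have htri := setDist_triangle' (hΦ.2.1 u) (hΦ.2.1 z) (hΦ.2.1 c)
          (dB := δ₀ * Real.exp (-b * R.level z))
          (fun p hp q hq => dist_le_of_expType hexp hδ₀ hp hq)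
        rw [← hl1] at hsd2 htri
        linarith
  have h1 : setDist (Φ x) (Φ y) ≤ setDist (Φ u) (Φ v) :=
    setDist_le_of_subset (hΦ.2.1 u) (hΦ.2.1 v) hΦu hΦv
  have h2 : (2 * γ + δ₀) * Real.exp (-b * R.level u) ≤ γ * Real.exp (-b * R.level x) := by
    have he : Real.exp (-b * (R.level u : ℝ))
        = Real.exp (-b * R.level x) * Real.exp (-b * m) := by
      rw [← Real.exp_add, hlu]
      push_cast
      ring_nf
    rw [he]
    have h3 := Real.exp_pos (-b * (R.level x : ℝ))
    nlinarith [Real.exp_pos (-b * (m : ℝ))]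
  linarith

end Departing

section SumBound

lemma geo_bound {r : ℝ} (hr0 : 0 < r) (hr1 : r < 1) (k : ℕ) :
    ∑ t ∈ Finset.range k, r ^ t ≤ 1 / (1 - r) := by
  rw [geom_sum_eq (ne_of_lt hr1)]
  have h1 : (0:ℝ) < 1 - r := by linarith
  have h2 : (r ^ k - 1) / (r - 1) = (1 - r ^ k) / (1 - r) := by
    rw [← neg_div_neg_eq]
    ring_nf
  rw [h2]
  have h3 : (0:ℝ) ≤ r ^ k := pow_nonneg hr0.le k
  gcongr <;> linarith

lemma sum_exp_abs_le {b s : ℝ} (hb : 0 < b) (hs : 0 ≤ s) (n : ℕ) :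
    ∑ j ∈ Finset.range n, Real.exp (-b * |s - j|) ≤ 2 / (1 - Real.exp (-b)) := by
  set r := Real.exp (-b) with hrdef
  have hr0 : 0 < r := Real.exp_pos _
  have hr1 : r < 1 := by
    rw [hrdef, ← Real.exp_zero]
    exact Real.exp_lt_exp.mpr (by linarith)
  set N := ⌊s⌋₊ with hN
  have hNs : (N : ℝ) ≤ s := Nat.floor_le hs
  have hsN : s < N + 1 := Nat.lt_floor_add_one s
  have hrpow : ∀ k : ℕ, r ^ k = Real.exp (-b * k) := by
    intro k
    rw [hrdef, ← Real.exp_nat_mul]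
    congr 1
    ring
  rw [← Finset.sum_filter_add_sum_filter_not (Finset.range n) (fun j => j ≤ N)]
  have hle1 : ∑ j ∈ Finset.filter (fun j => j ≤ N) (Finset.range n),
      Real.exp (-b * |s - j|) ≤ 1 / (1 - r) := by
    calc ∑ j ∈ Finset.filter (fun j => j ≤ N) (Finset.range n), Real.exp (-b * |s - j|)
        ≤ ∑ j ∈ Finset.filter (fun j => j ≤ N) (Finset.range n), r ^ (N - j) := by
          apply Finset.sum_le_sum
          intro j hj
          have hjN : j ≤ N := (Finset.mem_filter.mp hj).2
          have hjs : (j : ℝ) ≤ s := le_trans (by exact_mod_cast Nat.cast_le.mpr hjN) hNs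
          rw [abs_of_nonneg (by linarith), hrpow]
          apply Real.exp_le_exp.mpr
          have hcast : ((N - j : ℕ) : ℝ) = (N : ℝ) - j := by
            push_cast [Nat.cast_sub hjN]; ring
          rw [hcast]
          nlinarith
      _ ≤ ∑ j ∈ Finset.range (N + 1), r ^ (N - j) := by
          apply Finset.sum_le_sum_of_subset_of_nonneg
          · intro j hj
            have := (Finset.mem_filter.mp hj).2
            exact Finset.mem_range.mpr (by omega)
          · intro i _ _
            positivity
      _ = ∑ t ∈ Finset.range (N + 1), r ^ t := by
          have h := Finset.sum_range_reflect (fun t => r ^ t) (N + 1)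
          rw [← h]
          apply Finset.sum_congr rfl
          intro j hj
          norm_num
      _ ≤ 1 / (1 - r) := geo_bound hr0 hr1 _
  have hle2 : ∑ j ∈ Finset.filter (fun j => ¬ j ≤ N) (Finset.range n),
      Real.exp (-b * |s - j|) ≤ 1 / (1 - r) := by
    calc ∑ j ∈ Finset.filter (fun j => ¬ j ≤ N) (Finset.range n), Real.exp (-b * |s - j|)
        ≤ ∑ j ∈ Finset.filter (fun j => ¬ j ≤ N) (Finset.range n), r ^ (j - (N + 1)) := by
          apply Finset.sum_le_sum
          intro j hj
          have hjN : N < j := by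
            have := (Finset.mem_filter.mp hj).2
            omega
          have hjs : s < j := by
            have : ((N : ℝ) + 1) ≤ j := by exact_mod_cast Nat.succ_le_of_lt hjN
            linarith
          rw [abs_of_nonpos (by linarith), hrpow]
          apply Real.exp_le_exp.mpr
          have hcast : ((j - (N + 1) : ℕ) : ℝ) = (j : ℝ) - (N + 1) := by
            push_cast [Nat.cast_sub (by omega : N + 1 ≤ j)]; ring
          rw [hcast]
          nlinarith
      _ ≤ ∑ j ∈ Finset.Ico (N + 1) n, r ^ (j - (N + 1)) := by
          apply Finset.sum_le_sum_of_subset_of_nonneg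
          · intro j hj
            have h1 := Finset.mem_range.mp (Finset.mem_filter.mp hj).1
            have h2 := (Finset.mem_filter.mp hj).2
            exact Finset.mem_Ico.mpr ⟨by omega, h1⟩
          · intro i _ _
            positivity
      _ = ∑ t ∈ Finset.range (n - (N + 1)), r ^ t := by
          rw [Finset.sum_Ico_eq_sum_range]
          apply Finset.sum_congr rfl
          intro j _
          congr 1
          omega
      _ ≤ 1 / (1 - r) := geo_bound hr0 hr1 _
  have : 2 / (1 - r) = 1 / (1 - r) + 1 / (1 - r) := by ring
  rw [this]
  exact add_le_add hle1 hle2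

end SumBound

section GP

variable {X M : Type*} [MetricSpace M] {R R' : RootedGraph X} {Φ : X → Set M} {b γ δ₀ : ℝ}

lemma level_def (S : RootedGraph X) (x : X) : S.level x = S.G.dist S.root x := rfl

lemma level_le' (S : RootedGraph X) (x y : X) :
    S.level y ≤ S.level x + S.G.dist x y := by
  rw [level_def, level_def]
  exact S.conn.dist_triangle

lemma dist_le_add_level (S : RootedGraph X) (x y : X) :
    S.G.dist x y ≤ S.level x + S.level y := by
  calc S.G.dist x y ≤ S.G.dist x S.root + S.G.dist S.root y := S.conn.dist_triangle
    _ = S.level x + S.level y := by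
        rw [level_def, level_def, SimpleGraph.dist_comm (u := x)]

lemma gp_le_left (S : RootedGraph X) (x y : X) : S.gp x y ≤ S.level x := by
  have h := level_le' S x y
  have h' : (S.level y : ℝ) ≤ S.level x + S.G.dist x y := by exact_mod_cast h
  rw [RootedGraph.gp]
  linarith

lemma gp_le_right (S : RootedGraph X) (x y : X) : S.gp x y ≤ S.level y := by
  have h := level_le' S y x
  have h2 : S.G.dist y x = S.G.dist x y := SimpleGraph.dist_comm
  rw [h2] at h
  have h' : (S.level x : ℝ) ≤ S.level y + S.G.dist x y := by exact_mod_cast h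
  rw [RootedGraph.gp]
  linarith

lemma gp_nonneg (S : RootedGraph X) (x y : X) : 0 ≤ S.gp x y := by
  have h := dist_le_add_level S x y
  have h' : (S.G.dist x y : ℝ) ≤ S.level x + S.level y := by exact_mod_cast h
  rw [RootedGraph.gp]
  linarith

lemma edge_bound (hvert : R.Vertical) (hΦ : R.IsIndexMap Φ)
    (hγ : 0 < γ) (hδ₀ : 0 ≤ δ₀) (hexp : R.ExpType Φ b δ₀)
    (hA : R.IsAIb R' Φ b γ) {a c : X} {p q : M} (h : R'.G.Adj a c)
    (hp : p ∈ Φ a) (hq : q ∈ Φ c) :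
    dist p q ≤ (γ + 2 * δ₀) * (1 + Real.exp b) * Real.exp (-b * R.level a) := by
  have hE : (0:ℝ) < Real.exp (-b * R.level a) := Real.exp_pos _
  have hEb : (0:ℝ) < Real.exp b := Real.exp_pos _
  rcases (hA.2 _ _).mp h with h' | ⟨hl, hne, hsd⟩
  · rcases hvert _ _ h' with h1 | h1
    · have hJ : a ∈ R.J 1 c := ⟨h1, SimpleGraph.dist_eq_one_iff_adj.mpr h'.symm⟩
      have hsub := hΦ.2.2.1 c a hJ
      have hd := dist_le_of_expType hexp hδ₀ (hsub hp) hq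
      have hEc : Real.exp (-b * (R.level c : ℝ))
          = Real.exp b * Real.exp (-b * R.level a) := by
        rw [← Real.exp_add]
        congr 1
        rw [h1]
        push_cast
        ring
      rw [hEc] at hd
      nlinarith [mul_pos hEb hE, mul_nonneg (mul_nonneg hδ₀ hEb.le) hE.le, mul_nonneg hδ₀ hE.le, mul_nonneg hγ.le hE.le, mul_nonneg (mul_nonneg hγ.le hEb.le) hE.le]
    · have hJ : c ∈ R.J 1 a := ⟨h1, SimpleGraph.dist_eq_one_iff_adj.mpr h'⟩
      have hsub := hΦ.2.2.1 a c hJ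
      have hd := dist_le_of_expType hexp hδ₀ hp (hsub hq)
      nlinarith [mul_pos hEb hE, mul_nonneg (mul_nonneg hδ₀ hEb.le) hE.le, mul_nonneg hδ₀ hE.le, mul_nonneg hγ.le hE.le, mul_nonneg (mul_nonneg hγ.le hEb.le) hE.le]
  · have hd := dist_le_setDist_add hp hq
      (hdA := fun r hr => dist_le_of_expType hexp hδ₀ hp hr)
      (hdB := fun r hr => dist_le_of_expType hexp hδ₀ hq hr)
    rw [← hl] at hd
    nlinarith [mul_pos hEb hE, mul_nonneg (mul_nonneg hδ₀ hEb.le) hE.le, mul_nonneg hδ₀ hE.le, mul_nonneg hγ.le hE.le, mul_nonneg (mul_nonneg hγ.le hEb.le) hE.le]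

lemma walk_sum_bound (hvert : R.Vertical) (hΦ : R.IsIndexMap Φ)
    (hγ : 0 < γ) (hδ₀ : 0 ≤ δ₀) (hexp : R.ExpType Φ b δ₀)
    (hA : R.IsAIb R' Φ b γ) (pt : X → M) (hpt : ∀ z, pt z ∈ Φ z)
    {a c : X} (w : R'.G.Walk a c) :
    dist (pt a) (pt c) ≤ ∑ j ∈ Finset.range (w.length + 1),
      (γ + 2 * δ₀) * (1 + Real.exp b) * Real.exp (-b * R.level (w.getVert j)) := by
  induction w with
  | nil =>
    simp only [SimpleGraph.Walk.length_nil, zero_add, Finset.sum_range_one,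
      SimpleGraph.Walk.getVert_zero, _root_.dist_self]
    exact mul_nonneg (mul_nonneg (by linarith) (by positivity)) (Real.exp_pos _).le
  | @cons a z c h q ih =>
    rw [SimpleGraph.Walk.length_cons, Finset.sum_range_succ']
    have hstep := dist_triangle (pt a) (pt z) (pt c)
    have h1 := edge_bound hvert hΦ hγ hδ₀ hexp hA h (hpt a) (hpt z)
    simp only [SimpleGraph.Walk.getVert_cons_succ, SimpleGraph.Walk.getVert_zero]
    linarith

lemma getVert_level_bounds (hA : R.IsAIb R' Φ b γ) (hvert : R.Vertical)
    {x y : X} (w : R'.G.Walk x y) (j : ℕ) (hj : j ≤ w.length) :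
    R.level x ≤ R.level (w.getVert j) + j ∧
      R.level y + j ≤ R.level (w.getVert j) + w.length := by
  have h1 : R'.G.dist x (w.getVert j) ≤ j := walk_dist_getVert_le w j
  have h2 : R'.G.dist (w.getVert j) y ≤ w.length - j := walk_dist_getVert_le' w j hj
  have h3 := level_le' R' (w.getVert j) x
  have h4 := level_le' R' (w.getVert j) y
  have h5 : R'.G.dist (w.getVert j) x = R'.G.dist x (w.getVert j) :=
    SimpleGraph.dist_comm
  have e1 := level_eq hA hvert x
  have e2 := level_eq hA hvert y
  have e3 := level_eq hA hvert (w.getVert j)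
  omega

lemma lemB (hvert : R.Vertical) (hΦ : R.IsIndexMap Φ) (hb : 0 < b)
    (hγ : 0 < γ) (hδ₀ : 0 ≤ δ₀) (hexp : R.ExpType Φ b δ₀)
    (hA : R.IsAIb R' Φ b γ) (x y : X) :
    setDist (Φ x) (Φ y) ≤ (γ + 2 * δ₀) * (1 + Real.exp b) *
      (2 / (1 - Real.exp (-b))) * Real.exp (-b * R'.gp x y) := by
  obtain ⟨pt, hpt⟩ : ∃ pt : X → M, ∀ z, pt z ∈ Φ z :=
    ⟨fun z => (hΦ.2.1 z).choose, fun z => (hΦ.2.1 z).choose_spec⟩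
  obtain ⟨w, hw⟩ := (R'.conn x y).exists_walk_length_eq_dist
  set K := (γ + 2 * δ₀) * (1 + Real.exp b) with hK
  have hK0 : 0 < K := mul_pos (by linarith) (by positivity)
  set L := w.length with hL
  set g := ((R.level x : ℝ) + (R.level y : ℝ) - (L : ℝ)) / 2 with hg
  set s := ((R.level x : ℝ) - (R.level y : ℝ) + (L : ℝ)) / 2 with hs
  have hgp : R'.gp x y = g := by
    rw [RootedGraph.gp, level_eq hA hvert, level_eq hA hvert, ← hw]
  have hr1 : Real.exp (-b) < 1 := by
    rw [← Real.exp_zero]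
    exact Real.exp_lt_exp.mpr (by linarith)
  have hden : (0:ℝ) < 1 - Real.exp (-b) := by linarith
  have hs0 : 0 ≤ s := by
    have h := level_le' R' x y
    rw [level_eq hA hvert, level_eq hA hvert, ← hw] at h
    have h' : (R.level y : ℝ) ≤ (R.level x : ℝ) + L := by exact_mod_cast h
    rw [hs]
    linarith
  have hterm : ∀ j ∈ Finset.range (L + 1),
      K * Real.exp (-b * R.level (w.getVert j))
        ≤ K * Real.exp (-b * g) * Real.exp (-b * |s - (j : ℝ)|) := by
    intro j hj
    have hjL : j ≤ L := by
      have := Finset.mem_range.mp hj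
      omega
    obtain ⟨hb1, hb2⟩ := getVert_level_bounds hA hvert w j hjL
    have hb1' : (R.level x : ℝ) ≤ (R.level (w.getVert j) : ℝ) + j := by exact_mod_cast hb1
    have hb2' : (R.level y : ℝ) + j ≤ (R.level (w.getVert j) : ℝ) + L := by exact_mod_cast hb2
    have hkey : g + |s - (j : ℝ)| ≤ (R.level (w.getVert j) : ℝ) := by
      rcases le_total ((j : ℝ)) s with hc | hc
      · rw [abs_of_nonneg (by linarith)]
        rw [hg, hs]
        linarith
      · rw [abs_of_nonpos (by linarith)]
        rw [hg, hs]
        linarith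
    calc K * Real.exp (-b * R.level (w.getVert j))
        ≤ K * Real.exp (-b * g + -b * |s - (j : ℝ)|) := by
          apply mul_le_mul_of_nonneg_left _ hK0.le
          apply Real.exp_le_exp.mpr
          nlinarith
      _ = K * Real.exp (-b * g) * Real.exp (-b * |s - (j : ℝ)|) := by
          rw [Real.exp_add]
          ring
  have hsum := walk_sum_bound hvert hΦ hγ hδ₀ hexp hA pt hpt w
  rw [← hK, ← hL] at hsum
  have hsum2 : ∑ j ∈ Finset.range (L + 1),
      K * Real.exp (-b * (R.level (w.getVert j) : ℝ))
        ≤ K * Real.exp (-b * g) * (2 / (1 - Real.exp (-b))) := by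
    calc ∑ j ∈ Finset.range (L + 1), K * Real.exp (-b * (R.level (w.getVert j) : ℝ))
        ≤ ∑ j ∈ Finset.range (L + 1),
            K * Real.exp (-b * g) * Real.exp (-b * |s - (j : ℝ)|) :=
          Finset.sum_le_sum hterm
      _ = K * Real.exp (-b * g) *
            ∑ j ∈ Finset.range (L + 1), Real.exp (-b * |s - (j : ℝ)|) := by
          rw [← Finset.mul_sum]
      _ ≤ K * Real.exp (-b * g) * (2 / (1 - Real.exp (-b))) := by
          apply mul_le_mul_of_nonneg_left (sum_exp_abs_le hb hs0 (L + 1)) (by positivity)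
  have hfin : K * Real.exp (-b * g) * (2 / (1 - Real.exp (-b)))
      = K * (2 / (1 - Real.exp (-b))) * Real.exp (-b * g) := by ring
  calc setDist (Φ x) (Φ y) ≤ dist (pt x) (pt y) := setDist_le (hpt x) (hpt y)
    _ ≤ _ := hsum
    _ ≤ K * Real.exp (-b * g) * (2 / (1 - Real.exp (-b))) := hsum2
    _ = K * (2 / (1 - Real.exp (-b))) * Real.exp (-b * R'.gp x y) := by
        rw [hfin, hgp]

end GP

section LemA

variable {X M : Type*} [MetricSpace M] {R R' : RootedGraph X} {Φ : X → Set M} {b γ δ₀ : ℝ}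

lemma ancestor_gp (hvert : R.Vertical) (hΦ : R.IsIndexMap Φ) (hγ : 0 < γ)
    (hA : R.IsAIb R' Φ b γ) {x y : X} {n : ℕ} (hnx : n ≤ R.level x) (hny : n ≤ R.level y)
    (hsd : setDist (Φ x) (Φ y) ≤ γ * Real.exp (-b * (n : ℝ))) :
    R'.G.dist x y + 2 * n ≤ R.level x + R.level y + 1 := by
  obtain ⟨zx, hzx1, hzx2, hzx3⟩ := exists_ancestor hvert hΦ (R.level x - n) x (Nat.sub_le _ _)
  obtain ⟨zy, hzy1, hzy2, hzy3⟩ := exists_ancestor hvert hΦ (R.level y - n) y (Nat.sub_le _ _)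
  have hlx : R.level zx = n := by omega
  have hly : R.level zy = n := by omega
  have hd1 : R'.G.dist x zx ≤ R.level x - n := by
    have h1 := dist_mono hA x zx
    have h2 : R.G.dist x zx = R.G.dist zx x := SimpleGraph.dist_comm
    omega
  have hd2 : R'.G.dist zy y ≤ R.level y - n := by
    have h1 := dist_mono hA zy y
    omega
  have hmid : R'.G.dist zx zy ≤ 1 := by
    by_cases hzz : zx = zy
    · subst hzz
      rw [SimpleGraph.dist_self]
      omega
    · have hsd' : setDist (Φ zx) (Φ zy) ≤ γ * Real.exp (-b * R.level zx) := by
        calc setDist (Φ zx) (Φ zy) ≤ setDist (Φ x) (Φ y) :=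
              setDist_le_of_subset (hΦ.2.1 x) (hΦ.2.1 y) hzx3 hzy3
          _ ≤ γ * Real.exp (-b * (n : ℝ)) := hsd
          _ = γ * Real.exp (-b * R.level zx) := by rw [hlx]
      have hadj : R'.G.Adj zx zy := (hA.2 _ _).mpr (Or.inr ⟨by omega, hzz, hsd'⟩)
      exact le_of_eq (SimpleGraph.dist_eq_one_iff_adj.mpr hadj)
  have t1 := R'.conn.dist_triangle (u := x) (v := zx) (w := y)
  have t2 := R'.conn.dist_triangle (u := zx) (v := zy) (w := y)
  omega

lemma lemA (hvert : R.Vertical) (hΦ : R.IsIndexMap Φ) (hb : 0 < b) (hγ : 0 < γ)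
    (hA : R.IsAIb R' Φ b γ) (x y : X) :
    Real.exp (-b * R'.gp x y) ≤ Real.exp (2 * b) * (1 + γ⁻¹) *
      (setDist (Φ x) (Φ y) + Real.exp (-b * R.level x) + Real.exp (-b * R.level y)) := by
  have hγ' : (0:ℝ) < γ⁻¹ := inv_pos.mpr hγ
  set sd := setDist (Φ x) (Φ y) with hsddef
  have hsd0 : 0 ≤ sd := setDist_nonneg _ _
  have hEx : (0:ℝ) < Real.exp (-b * R.level x) := Real.exp_pos _
  have hEy : (0:ℝ) < Real.exp (-b * R.level y) := Real.exp_pos _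
  have hC : (0:ℝ) < Real.exp (2 * b) := Real.exp_pos _
  have main : ∀ n : ℕ, n ≤ R.level x → n ≤ R.level y →
      sd ≤ γ * Real.exp (-b * (n : ℝ)) →
      Real.exp (-b * R'.gp x y) ≤ Real.exp (b / 2) * Real.exp (-b * (n : ℝ)) := by
    intro n h1 h2 h3
    have hg := ancestor_gp hvert hΦ hγ hA h1 h2 h3
    have hgp : (n : ℝ) - 1 / 2 ≤ R'.gp x y := by
      rw [RootedGraph.gp, level_eq hA hvert, level_eq hA hvert]
      have hcast : (R'.G.dist x y : ℝ) + 2 * n ≤ (R.level x : ℝ) + R.level y + 1 := by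
        exact_mod_cast hg
      linarith
    rw [← Real.exp_add]
    apply Real.exp_le_exp.mpr
    nlinarith [mul_nonneg hb.le (by linarith : (0:ℝ) ≤ R'.gp x y - ((n : ℝ) - 1 / 2))]
  by_cases hcase : sd ≤ γ * Real.exp (-b * ((min (R.level x) (R.level y) : ℕ) : ℝ))
  · have h := main (min (R.level x) (R.level y)) (min_le_left _ _) (min_le_right _ _) hcase
    have hμ : Real.exp (-b * ((min (R.level x) (R.level y) : ℕ) : ℝ))
        ≤ Real.exp (-b * R.level x) + Real.exp (-b * R.level y) := by
      rcases le_total (R.level x) (R.level y) with h' | h'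
      · rw [min_eq_left h']
        linarith
      · rw [min_eq_right h']
        linarith
    have e1 : Real.exp (b / 2) ≤ Real.exp (2 * b) := Real.exp_le_exp.mpr (by linarith)
    calc Real.exp (-b * R'.gp x y)
        ≤ Real.exp (b / 2) * Real.exp (-b * ((min (R.level x) (R.level y) : ℕ) : ℝ)) := h
      _ ≤ Real.exp (2 * b) * (Real.exp (-b * R.level x) + Real.exp (-b * R.level y)) :=
          mul_le_mul e1 hμ (Real.exp_pos _).le hC.le
      _ ≤ Real.exp (2 * b) * (1 + γ⁻¹) *
            (sd + Real.exp (-b * R.level x) + Real.exp (-b * R.level y)) := by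
          nlinarith [mul_nonneg hγ'.le hsd0, mul_nonneg hγ'.le hEx.le,
            mul_nonneg hγ'.le hEy.le, mul_nonneg hC.le hsd0,
            mul_nonneg hC.le (mul_nonneg hγ'.le hsd0),
            mul_nonneg hC.le (mul_nonneg hγ'.le hEx.le),
            mul_nonneg hC.le (mul_nonneg hγ'.le hEy.le)]
  · push_neg at hcase
    have hS : ∃ n : ℕ, γ * Real.exp (-b * (n : ℝ)) < sd := ⟨_, hcase⟩
    have hn₀ : γ * Real.exp (-b * ((Nat.find hS : ℕ) : ℝ)) < sd := Nat.find_spec hS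
    have hn₀μ : Nat.find hS ≤ min (R.level x) (R.level y) := Nat.find_min' hS hcase
    rcases Nat.eq_zero_or_pos (Nat.find hS) with h0 | hpos
    · rw [h0] at hn₀
      simp only [Nat.cast_zero, mul_zero, Real.exp_zero, mul_one] at hn₀
      have hgp0 : 0 ≤ R'.gp x y := gp_nonneg R' x y
      have h1 : Real.exp (-b * R'.gp x y) ≤ 1 := by
        rw [← Real.exp_zero]
        apply Real.exp_le_exp.mpr
        nlinarith [mul_nonneg hb.le hgp0]
      have h2 : 1 ≤ γ⁻¹ * sd := by
        rw [← inv_mul_cancel₀ (ne_of_gt hγ)]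
        exact mul_le_mul_of_nonneg_left hn₀.le hγ'.le
      have h3 : 1 ≤ (1 + γ⁻¹) * (sd + Real.exp (-b * R.level x) + Real.exp (-b * R.level y)) := by
        nlinarith [mul_nonneg hγ'.le hEx.le, mul_nonneg hγ'.le hEy.le]
      have h4 := mul_le_mul (Real.one_le_exp (by linarith : (0:ℝ) ≤ 2 * b)) h3
        (by norm_num) hC.le
      calc Real.exp (-b * R'.gp x y) ≤ 1 := h1
        _ ≤ _ := by linarith [h4]
    · obtain ⟨k, hk⟩ := Nat.exists_eq_succ_of_ne_zero (by omega : Nat.find hS ≠ 0)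
      have hknot : ¬ γ * Real.exp (-b * (k : ℝ)) < sd := Nat.find_min hS (by omega)
      push_neg at hknot
      have hkx : k ≤ R.level x := by
        have := min_le_left (R.level x) (R.level y)
        omega
      have hky : k ≤ R.level y := by
        have := min_le_right (R.level x) (R.level y)
        omega
      have h := main k hkx hky hknot
      have hsplit : Real.exp (-b * (k : ℝ)) = Real.exp b * Real.exp (-b * ((k : ℝ) + 1)) := by
        rw [← Real.exp_add]
        ring_nf
      have hlt : Real.exp (-b * ((k : ℝ) + 1)) < γ⁻¹ * sd := by
        rw [hk] at hn₀
        push_cast at hn₀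
        rw [lt_inv_mul_iff₀ hγ]
        linarith
      have hEk : Real.exp (-b * (k : ℝ)) ≤ Real.exp b * (γ⁻¹ * sd) := by
        rw [hsplit]
        exact mul_le_mul_of_nonneg_left hlt.le (Real.exp_pos b).le
      have hlast : Real.exp (b / 2) * Real.exp (-b * (k : ℝ))
          ≤ Real.exp (2 * b) * (γ⁻¹ * sd) := by
        have h5 : Real.exp (b / 2) * Real.exp (-b * (k : ℝ))
            ≤ Real.exp (b / 2) * (Real.exp b * (γ⁻¹ * sd)) :=
          mul_le_mul_of_nonneg_left hEk (Real.exp_pos _).le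
        have h6 : Real.exp (b / 2) * Real.exp b = Real.exp (3 * b / 2) := by
          rw [← Real.exp_add]
          ring_nf
        have h7 : Real.exp (3 * b / 2) ≤ Real.exp (2 * b) := Real.exp_le_exp.mpr (by linarith)
        calc Real.exp (b / 2) * Real.exp (-b * (k : ℝ))
            ≤ Real.exp (b / 2) * Real.exp b * (γ⁻¹ * sd) := by linarith [h5, mul_assoc (Real.exp (b/2)) (Real.exp b) (γ⁻¹ * sd)]
          _ = Real.exp (3 * b / 2) * (γ⁻¹ * sd) := by rw [h6]
          _ ≤ Real.exp (2 * b) * (γ⁻¹ * sd) :=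
              mul_le_mul_of_nonneg_right h7 (by positivity)
      calc Real.exp (-b * R'.gp x y) ≤ Real.exp (b / 2) * Real.exp (-b * (k : ℝ)) := h
        _ ≤ Real.exp (2 * b) * (γ⁻¹ * sd) := hlast
        _ ≤ Real.exp (2 * b) * (1 + γ⁻¹) *
            (sd + Real.exp (-b * R.level x) + Real.exp (-b * R.level y)) := by
            nlinarith [mul_nonneg hC.le hsd0, mul_nonneg hC.le hEx.le, mul_nonneg hC.le hEy.le,
              mul_nonneg (mul_nonneg hC.le hγ'.le) hEx.le,
              mul_nonneg (mul_nonneg hC.le hγ'.le) hEy.le]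
end LemA

section Hyper

variable {X M : Type*} [MetricSpace M] {R R' : RootedGraph X} {Φ : X → Set M} {b γ δ₀ : ℝ}

set_option maxHeartbeats 2000000 in
lemma hyper_main (hvert : R.Vertical) (hΦ : R.IsIndexMap Φ) (hb : 0 < b)
    (hγ : 0 < γ) (hδ₀ : 0 ≤ δ₀) (hexp : R.ExpType Φ b δ₀)
    (hA : R.IsAIb R' Φ b γ) : R'.Hyperbolic := by
  have hγ' : (0:ℝ) < γ⁻¹ := inv_pos.mpr hγ
  have hr1 : Real.exp (-b) < 1 := by
    rw [← Real.exp_zero]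
    exact Real.exp_lt_exp.mpr (by linarith)
  have hden : (0:ℝ) < 1 - Real.exp (-b) := by linarith
  set CB := (γ + 2 * δ₀) * (1 + Real.exp b) * (2 / (1 - Real.exp (-b))) with hCB
  set CA := Real.exp (2 * b) * (1 + γ⁻¹) with hCA
  have hCB0 : 0 < CB := by
    apply mul_pos (mul_pos (by linarith) (by positivity))
    positivity
  have hCA0 : 0 < CA := mul_pos (Real.exp_pos _) (by linarith)
  set Kt := 2 * (CA * (1 + δ₀) * (CB + 2)) with hKt
  have hKt0 : 0 < Kt := by
    apply mul_pos (by norm_num)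
    exact mul_pos (mul_pos hCA0 (by linarith)) (by linarith)
  refine ⟨max 0 (Real.log Kt / b), le_max_left _ _, ?_⟩
  intro x y z
  set mn := min (R'.gp x z) (R'.gp z y) with hmn
  have key : Real.exp (-b * R'.gp x y) ≤ Kt * Real.exp (-b * mn) := by
    have hxz := lemB hvert hΦ hb hγ hδ₀ hexp hA x z
    have hzy := lemB hvert hΦ hb hγ hδ₀ hexp hA z y
    have hxy := lemA hvert hΦ hb hγ hA x y
    rw [← hCB] at hxz hzy
    rw [← hCA] at hxy
    have tri : setDist (Φ x) (Φ y) ≤ setDist (Φ x) (Φ z) + setDist (Φ z) (Φ y) +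
        δ₀ * Real.exp (-b * R.level z) :=
      setDist_triangle' (hΦ.2.1 x) (hΦ.2.1 z) (hΦ.2.1 y)
        (fun p hp q hq => dist_le_of_expType hexp hδ₀ hp hq)
    have glx : R'.gp x z ≤ R.level x := by
      have h := gp_le_left R' x z
      rwa [level_eq hA hvert] at h
    have glz1 : R'.gp x z ≤ R.level z := by
      have h := gp_le_right R' x z
      rwa [level_eq hA hvert] at h
    have glz2 : R'.gp z y ≤ R.level z := by
      have h := gp_le_left R' z y
      rwa [level_eq hA hvert] at h
    have gly : R'.gp z y ≤ R.level y := by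
      have h := gp_le_right R' z y
      rwa [level_eq hA hvert] at h
    have eEx : Real.exp (-b * (R.level x : ℝ)) ≤ Real.exp (-b * R'.gp x z) :=
      Real.exp_le_exp.mpr (by nlinarith [mul_nonneg hb.le (sub_nonneg.mpr glx)])
    have eEz1 : Real.exp (-b * (R.level z : ℝ)) ≤ Real.exp (-b * R'.gp x z) :=
      Real.exp_le_exp.mpr (by nlinarith [mul_nonneg hb.le (sub_nonneg.mpr glz1)])
    have eEz2 : Real.exp (-b * (R.level z : ℝ)) ≤ Real.exp (-b * R'.gp z y) :=
      Real.exp_le_exp.mpr (by nlinarith [mul_nonneg hb.le (sub_nonneg.mpr glz2)])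
    have eEy : Real.exp (-b * (R.level y : ℝ)) ≤ Real.exp (-b * R'.gp z y) :=
      Real.exp_le_exp.mpr (by nlinarith [mul_nonneg hb.le (sub_nonneg.mpr gly)])
    have hρxz : setDist (Φ x) (Φ z) + Real.exp (-b * R.level x) + Real.exp (-b * R.level z)
        ≤ (CB + 2) * Real.exp (-b * R'.gp x z) := by
      nlinarith [hxz, eEx, eEz1]
    have hρzy : setDist (Φ z) (Φ y) + Real.exp (-b * R.level z) + Real.exp (-b * R.level y)
        ≤ (CB + 2) * Real.exp (-b * R'.gp z y) := by
      nlinarith [hzy, eEz2, eEy]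
    have hquasi : setDist (Φ x) (Φ y) + Real.exp (-b * R.level x) + Real.exp (-b * R.level y)
        ≤ (1 + δ₀) *
          ((setDist (Φ x) (Φ z) + Real.exp (-b * R.level x) + Real.exp (-b * R.level z)) +
           (setDist (Φ z) (Φ y) + Real.exp (-b * R.level z) + Real.exp (-b * R.level y))) := by
      nlinarith [tri, setDist_nonneg (Φ x) (Φ z), setDist_nonneg (Φ z) (Φ y),
        Real.exp_pos (-b * (R.level x : ℝ)), Real.exp_pos (-b * (R.level y : ℝ)),
        Real.exp_pos (-b * (R.level z : ℝ)),
        mul_nonneg hδ₀ (setDist_nonneg (Φ x) (Φ z)),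
        mul_nonneg hδ₀ (setDist_nonneg (Φ z) (Φ y)),
        mul_nonneg hδ₀ (Real.exp_pos (-b * (R.level x : ℝ))).le,
        mul_nonneg hδ₀ (Real.exp_pos (-b * (R.level y : ℝ))).le,
        mul_nonneg hδ₀ (Real.exp_pos (-b * (R.level z : ℝ))).le]
    have hm1 : Real.exp (-b * R'.gp x z) ≤ Real.exp (-b * mn) :=
      Real.exp_le_exp.mpr (by
        nlinarith [mul_nonneg hb.le (sub_nonneg.mpr (min_le_left (R'.gp x z) (R'.gp z y)))])
    have hm2 : Real.exp (-b * R'.gp z y) ≤ Real.exp (-b * mn) :=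
      Real.exp_le_exp.mpr (by
        nlinarith [mul_nonneg hb.le (sub_nonneg.mpr (min_le_right (R'.gp x z) (R'.gp z y)))])
    calc Real.exp (-b * R'.gp x y)
        ≤ CA * (setDist (Φ x) (Φ y) + Real.exp (-b * R.level x) + Real.exp (-b * R.level y)) :=
          hxy
      _ ≤ CA * ((1 + δ₀) *
          ((setDist (Φ x) (Φ z) + Real.exp (-b * R.level x) + Real.exp (-b * R.level z)) +
           (setDist (Φ z) (Φ y) + Real.exp (-b * R.level z) + Real.exp (-b * R.level y)))) :=
          mul_le_mul_of_nonneg_left hquasi hCA0.le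
      _ ≤ CA * ((1 + δ₀) *
          ((CB + 2) * Real.exp (-b * R'.gp x z) + (CB + 2) * Real.exp (-b * R'.gp z y))) := by
          apply mul_le_mul_of_nonneg_left _ hCA0.le
          apply mul_le_mul_of_nonneg_left _ (by linarith : (0:ℝ) ≤ 1 + δ₀)
          exact add_le_add hρxz hρzy
      _ ≤ CA * ((1 + δ₀) *
          ((CB + 2) * Real.exp (-b * mn) + (CB + 2) * Real.exp (-b * mn))) := by
          apply mul_le_mul_of_nonneg_left _ hCA0.le
          apply mul_le_mul_of_nonneg_left _ (by linarith : (0:ℝ) ≤ 1 + δ₀)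
          exact add_le_add (mul_le_mul_of_nonneg_left hm1 (by linarith))
            (mul_le_mul_of_nonneg_left hm2 (by linarith))
      _ = Kt * Real.exp (-b * mn) := by
          rw [hKt]
          ring
  have hlog := Real.log_le_log (Real.exp_pos _) key
  rw [Real.log_exp, Real.log_mul (ne_of_gt hKt0) (Real.exp_ne_zero _), Real.log_exp] at hlog
  have hdiv : mn - R'.gp x y ≤ Real.log Kt / b := by
    rw [le_div_iff₀ hb]
    nlinarith
  have hmax := le_max_right 0 (Real.log Kt / b)
  linarith

end Hyper

end AIbProof

/-- part of Theorem 4.5: the AI_b-graph of an index map of exponential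
type-(b) is `(m,1)`-departing for any `m` with `(2γ+δ₀)e^{-bm} ≤ γ`, hence hyperbolic. -/
theorem AIb_departing_hyperbolic {X M : Type*} [MetricSpace M] [CompleteSpace M]
    (R R' : RootedGraph X) (Φ : X → Set M)
    (hvert : R.Vertical) (hΦ : R.IsIndexMap Φ)
    (b γ δ₀ : ℝ) (hb : 0 < b) (hγ : 0 < γ) (hδ₀ : 0 ≤ δ₀)
    (hexp : R.ExpType Φ b δ₀)
    (hA : R.IsAIb R' Φ b γ)
    (m : ℕ) (hm : 1 ≤ m) (hmb : (2 * γ + δ₀) * Real.exp (-b * m) ≤ γ) :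
    R'.Departing m 1 ∧ R'.Hyperbolic :=
  ⟨AIbProof.departing_main hvert hΦ hb hγ hδ₀ hexp hA m hmb,
   AIbProof.hyper_main hvert hΦ hb hγ hδ₀ hexp hA⟩
end
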